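/- arXiv:2202.08829 — 7 statements merged into one kernel-verified Lean document; each statement's English description precedes it below -/
import Mathlib

section
/- For every n ≥ 1, if π is chosen uniformly at random from PF_n, then the expected number of fixed points of π equals 1; equivalently, Σ_{π ∈ PF_n} #{i ∈ [n] : π_i = i} = (n+1)^(n-1). -/
open Finset

/-- The set of parking functions of size `n`, encoded 0-indexed: `π : Fin n → Fin n`
(coordinate value `i` representing preference `i+1`). -/
def PF (n : ℕ) : Finset (Fin n → Fin n) :=
  Finset.univ.filter (fun π => ∀ i : Fin n,
    (i : ℕ) + 1 ≤ (Finset.univ.filter (fun k => π k ≤ i)).card)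

namespace PFaux

variable {n : ℕ}

/-- `d a t` = (number of cars preferring spot `t mod (n+1)`) minus 1. -/
def d (a : Fin n → ZMod (n+1)) (t : ℤ) : ℤ :=
  ((univ.filter (fun k => a k = (t : ZMod (n+1)))).card : ℤ) - 1

/-- Signed prefix sum of `d`. -/
noncomputable def P (a : Fin n → ZMod (n+1)) (x : ℤ) : ℤ :=
  (∑ t ∈ Finset.Ico (0:ℤ) x, d a t) - ∑ t ∈ Finset.Ico x (0:ℤ), d a t

lemma sum_Ico_split (f : ℤ → ℤ) {x y z : ℤ} (h1 : x ≤ y) (h2 : y ≤ z) :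
    ∑ t ∈ Finset.Ico x y, f t + ∑ t ∈ Finset.Ico y z, f t = ∑ t ∈ Finset.Ico x z, f t := by
  rw [← Finset.sum_union (Finset.Ico_disjoint_Ico_consecutive x y z),
    Finset.Ico_union_Ico_eq_Ico h1 h2]

lemma P_sub (a : Fin n → ZMod (n+1)) {x y : ℤ} (h : x ≤ y) :
    P a y - P a x = ∑ t ∈ Finset.Ico x y, d a t := by
  unfold P
  rcases le_or_gt 0 x with hx | hx
  · rw [Finset.Ico_eq_empty (by simp [hx.trans h] : ¬ y < 0),
      Finset.Ico_eq_empty (by simp [hx] : ¬ x < 0), ← sum_Ico_split (d a) hx h]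
    ring
  · rcases le_or_gt y 0 with hy | hy
    · rw [Finset.Ico_eq_empty (by simpa using hx.le : ¬ (0:ℤ) < x),
        Finset.Ico_eq_empty (by simpa using hy : ¬ (0:ℤ) < y),
        ← sum_Ico_split (d a) h hy]
      ring
    · rw [Finset.Ico_eq_empty (by simpa using hx.le : ¬ (0:ℤ) < x),
        Finset.Ico_eq_empty (by simpa using hy.le : ¬ y < 0),
        ← sum_Ico_split (d a) hx.le hy.le]
      ring

/-- The sum of `d` over any window of length `n+1` is `-1`. -/
lemma sum_d_period (a : Fin n → ZMod (n+1)) (x : ℤ) :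
    ∑ t ∈ Finset.Ico x (x + (n+1 : ℤ)), d a t = -1 := by
  have hcard : (Finset.Ico x (x + (n+1:ℤ))).card = n + 1 := by
    rw [Int.card_Ico]; simp
  have hcnt : ∑ t ∈ Finset.Ico x (x + (n+1:ℤ)),
      ((univ.filter (fun k => a k = (t : ZMod (n+1)))).card : ℤ) = n := by
    have : ∀ t, ((univ.filter (fun k => a k = (t : ZMod (n+1)))).card : ℤ)
        = ∑ k : Fin n, if a k = (t : ZMod (n+1)) then (1:ℤ) else 0 := by
      intro t; rw [Finset.card_filter]; push_cast; rfl
    simp_rw [this]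
    rw [Finset.sum_comm]
    have inner : ∀ k : Fin n,
        (∑ t ∈ Finset.Ico x (x + (n+1:ℤ)), if a k = (t : ZMod (n+1)) then (1:ℤ) else 0) = 1 := by
      intro k
      rw [← Finset.sum_filter]
      have hfilt : (Finset.Ico x (x + (n+1:ℤ))).filter (fun t : ℤ => a k = (t : ZMod (n+1)))
          = {x + ((a k - (x : ZMod (n+1))).val : ℤ)} := by
        ext t
        simp only [Finset.mem_filter, Finset.mem_Ico, Finset.mem_singleton]
        constructor
        · rintro ⟨⟨h1, h2⟩, h3⟩
          have hdvd : ((n+1 : ℕ) : ℤ) ∣ (t - (x + ((a k - (x : ZMod (n+1))).val : ℤ))) := by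
            rw [← ZMod.intCast_zmod_eq_zero_iff_dvd]
            push_cast
            rw [ZMod.natCast_val, ZMod.cast_id]
            rw [← h3]; ring
          have hb : |t - (x + ((a k - (x : ZMod (n+1))).val : ℤ))| < ((n+1:ℕ) : ℤ) := by
            have hv := ZMod.val_lt (a k - (x : ZMod (n+1)))
            rw [abs_lt]
            constructor <;> push_cast <;> omega
          have := Int.eq_zero_of_abs_lt_dvd hdvd hb
          omega
        · rintro rfl
          have hv := ZMod.val_lt (a k - (x : ZMod (n+1)))
          refine ⟨⟨by omega, by push_cast; omega⟩, ?_⟩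
          push_cast
          rw [ZMod.natCast_val, ZMod.cast_id]
          ring
      rw [hfilt, Finset.sum_singleton]
    simp_rw [inner]
    simp
  unfold d
  rw [Finset.sum_sub_distrib, hcnt, Finset.sum_const, hcard]
  push_cast
  ring

lemma P_period (a : Fin n → ZMod (n+1)) (x : ℤ) : P a (x + (n+1:ℤ)) = P a x - 1 := by
  have := P_sub a (by omega : x ≤ x + (n+1:ℤ))
  rw [sum_d_period] at this
  omega

/-- `u` is a "good" cut point: every arc ending just before `u`, of length at most `n+1`,
contains fewer cars than spots. -/
def Good (a : Fin n → ZMod (n+1)) (u : ℤ) : Prop :=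
  ∀ v ∈ Finset.Ico (u - (n+1:ℤ)) u, ∑ t ∈ Finset.Ico v u, d a t < 0

lemma good_iff_P (a : Fin n → ZMod (n+1)) (u : ℤ) :
    Good a u ↔ ∀ v ∈ Finset.Ico (u - (n+1:ℤ)) u, P a u < P a v := by
  unfold Good
  refine forall₂_congr (fun v hv => ?_)
  rw [Finset.mem_Ico] at hv
  rw [← P_sub a hv.2.le]
  omega


lemma good_add (a : Fin n → ZMod (n+1)) {u : ℤ} (h : Good a u) : Good a (u + (n+1:ℤ)) := by
  rw [good_iff_P] at h ⊢
  intro v hv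
  rw [Finset.mem_Ico] at hv
  rw [P_period]
  rcases eq_or_lt_of_le (by omega : u ≤ v) with rfl | hlt
  · omega
  · have hv' := h (v - (n+1:ℤ)) (by rw [Finset.mem_Ico]; omega)
    have : P a (v - (n+1:ℤ) + (n+1:ℤ)) = P a (v - (n+1:ℤ)) - 1 := P_period a _
    simp only [sub_add_cancel] at this
    omega

lemma good_sub (a : Fin n → ZMod (n+1)) {u : ℤ} (h : Good a u) : Good a (u - (n+1:ℤ)) := by
  rw [good_iff_P] at h ⊢
  intro v hv
  rw [Finset.mem_Ico] at hv
  have h1 : P a (v + (n+1:ℤ)) = P a v - 1 := P_period a v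
  have h2 : P a (u - (n+1:ℤ) + (n+1:ℤ)) = P a (u - (n+1:ℤ)) - 1 := P_period a _
  simp only [sub_add_cancel] at h2
  have hv' := h (v + (n+1:ℤ)) (by rw [Finset.mem_Ico]; omega)
  omega

lemma good_add_mul (a : Fin n → ZMod (n+1)) {u : ℤ} (h : Good a u) (k : ℤ) :
    Good a (u + k * (n+1:ℤ)) := by
  induction k using Int.induction_on with
  | zero => simpa using h
  | succ i ih =>
      have h2 := good_add a ih
      have heq : u + ((i:ℤ) + 1) * ((n:ℤ)+1) = u + (i:ℤ) * ((n:ℤ)+1) + ((n:ℤ)+1) := by ring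
      rw [heq]; exact h2
  | pred i ih =>
      have h2 := good_sub a ih
      have heq : u + (-(i:ℤ) - 1) * ((n:ℤ)+1) = u + (-(i:ℤ)) * ((n:ℤ)+1) - ((n:ℤ)+1) := by ring
      rw [heq]; exact h2

/-- Existence of a good cut point. -/
lemma good_exists (a : Fin n → ZMod (n+1)) : ∃ u, Good a u := by
  set W : Finset ℤ := Finset.Ico (1:ℤ) ((n:ℤ)+2) with hW
  have hWne : W.Nonempty := by
    rw [hW, Finset.nonempty_Ico]; omega
  set μ : ℤ := (W.image (P a)).min' (hWne.image _) with hμ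
  have hμmem : μ ∈ W.image (P a) := (W.image (P a)).min'_mem _
  have hμle : ∀ v ∈ W, μ ≤ P a v := fun v hv =>
    (W.image (P a)).min'_le _ (Finset.mem_image_of_mem _ hv)
  set T : Finset ℤ := W.filter (fun v => P a v = μ) with hT
  have hTne : T.Nonempty := by
    obtain ⟨v, hv, hPv⟩ := Finset.mem_image.mp hμmem
    exact ⟨v, Finset.mem_filter.mpr ⟨hv, hPv⟩⟩
  set u : ℤ := T.min' hTne with hu
  have huT : u ∈ T := T.min'_mem hTne
  have huW : u ∈ W := (Finset.mem_filter.mp huT).1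
  have huP : P a u = μ := (Finset.mem_filter.mp huT).2
  have hstrict : ∀ v ∈ W, v < u → μ < P a v := by
    intro v hv hlt
    rcases lt_or_eq_of_le (hμle v hv) with h | h
    · exact h
    · exact absurd (T.min'_le v (Finset.mem_filter.mpr ⟨hv, h.symm⟩)) (by omega)
  refine ⟨u, ?_⟩
  rw [good_iff_P]
  intro v hv
  rw [Finset.mem_Ico] at hv
  rw [hW, Finset.mem_Ico] at huW
  rcases le_or_gt 1 v with h1 | h1
  · have hvW : v ∈ W := by rw [hW, Finset.mem_Ico]; omega
    rw [huP]; exact hstrict v hvW hv.2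
  · have hvW : v + (n+1:ℤ) ∈ W := by rw [hW, Finset.mem_Ico]; omega
    have := hμle _ hvW
    have hper : P a (v + (n+1:ℤ)) = P a v - 1 := P_period a v
    omega

/-- Uniqueness of good cut point (mod `n+1`). -/
lemma good_unique (a : Fin n → ZMod (n+1)) {u u' : ℤ} (h : Good a u) (h' : Good a u') :
    ((n:ℤ)+1) ∣ (u - u') := by
  by_contra hnd
  set r : ℤ := (u - u') % ((n:ℤ)+1) with hr
  have hr0 : 0 ≤ r := Int.emod_nonneg _ (by omega)
  have hrlt : r < (n:ℤ)+1 := Int.emod_lt_of_pos _ (by omega)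
  have hrne : r ≠ 0 := by
    intro h0
    exact hnd (Int.dvd_of_emod_eq_zero (by omega))
  have hkey : u' + r = u + (-((u - u') / ((n:ℤ)+1))) * ((n:ℤ)+1) := by
    have := Int.emod_add_mul_ediv (u - u') ((n:ℤ)+1)
    linarith [this]
  have hg : Good a (u' + r) := by
    rw [hkey]; exact good_add_mul a h _
  have hg' : Good a (u' + ((n:ℤ)+1)) := good_add a h'
  rw [good_iff_P] at hg hg'
  have h1 : P a (u' + r) < P a u' :=
    hg u' (by rw [Finset.mem_Ico]; omega)
  have h2 : P a (u' + ((n:ℤ)+1)) < P a (u' + r) :=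
    hg' (u' + r) (by rw [Finset.mem_Ico]; omega)
  have h3 : P a (u' + ((n:ℤ)+1)) = P a u' - 1 := P_period a u'
  omega

lemma d_shift (a : Fin n → ZMod (n+1)) (c t : ℤ) :
    d (fun k => a k + (c : ZMod (n+1))) t = d a (t - c) := by
  unfold d
  have hfe : (univ.filter (fun k => (fun k => a k + (c : ZMod (n+1))) k = (t : ZMod (n+1))))
      = (univ.filter (fun k => a k = ((t - c : ℤ) : ZMod (n+1)))) := by
    apply Finset.filter_congr
    intro k _
    simp only []
    push_cast
    constructor
    · intro h; rw [eq_sub_iff_add_eq]; exact h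
    · intro h; rw [h]; ring
  rw [hfe]

lemma good_shift_mp (a : Fin n → ZMod (n+1)) (c : ℤ) {u : ℤ} (h : Good a u) :
    Good (fun k => a k + (c : ZMod (n+1))) (u + c) := by
  intro v hv
  rw [Finset.mem_Ico] at hv
  have hsum : ∑ t ∈ Finset.Ico v (u + c), d (fun k => a k + (c : ZMod (n+1))) t
      = ∑ t ∈ Finset.Ico (v - c) u, d a t := by
    have hv2 : Finset.Ico v (u + c) = Finset.map (addRightEmbedding c) (Finset.Ico (v - c) u) := by
      rw [Finset.map_add_right_Ico]
      congr 1
      ring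
    rw [hv2, Finset.sum_map]
    apply Finset.sum_congr rfl
    intro t _
    simp only [addRightEmbedding_apply]
    rw [d_shift]
    congr 1
    ring
  rw [hsum]
  exact h (v - c) (by rw [Finset.mem_Ico]; omega)

lemma good_shift (a : Fin n → ZMod (n+1)) (c : ℤ) (u : ℤ) :
    Good a u ↔ Good (fun k => a k + (c : ZMod (n+1))) (u + c) := by
  constructor
  · exact good_shift_mp a c
  · intro h
    have := good_shift_mp (fun k => a k + (c : ZMod (n+1))) (-c) h
    simp only [Int.cast_neg] at this
    have he : (fun k => a k + (c : ZMod (n+1)) + -(c : ZMod (n+1))) = a := by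
      funext k; ring
    rw [he] at this
    simpa using this


lemma card_filter_mem (f : Fin n → ℤ) (s : Finset ℤ) :
    (univ.filter (fun k => f k ∈ s)).card = ∑ t ∈ s, (univ.filter (fun k => f k = t)).card := by
  rw [Finset.card_eq_sum_card_fiberwise (f := f) (s := univ.filter (fun k => f k ∈ s)) (t := s)
    (fun x hx => (Finset.mem_filter.mp hx).2)]
  apply Finset.sum_congr rfl
  intro b hb
  congr 1
  rw [Finset.filter_filter]
  apply Finset.filter_congr
  intro k _
  constructor
  · exact fun h => h.2
  · exact fun h => ⟨by rw [h]; exact hb, h⟩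

lemma cnt_eq_fiber (a : Fin n → ZMod (n+1)) {t : ℤ} (h0 : 0 ≤ t) (h1 : t < (n:ℤ)+1) :
    (univ.filter (fun k => a k = (t : ZMod (n+1)))) =
      univ.filter (fun k => ((a k).val : ℤ) = t) := by
  apply Finset.filter_congr
  intro k _
  have htn : (t.toNat : ℤ) = t := Int.toNat_of_nonneg h0
  have hcast : (t : ZMod (n+1)) = ((t.toNat : ℕ) : ZMod (n+1)) := by
    conv_lhs => rw [← htn]
    push_cast; ring
  have hval : ((t.toNat : ℕ) : ZMod (n+1)).val = t.toNat :=
    ZMod.val_cast_of_lt (by omega)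
  constructor
  · intro h; rw [h, hcast, hval]; omega
  · intro h
    rw [hcast]
    apply ZMod.val_injective
    rw [hval]
    omega

lemma good_top_iff (a : Fin n → ZMod (n+1)) :
    Good a ((n:ℤ)+1) ↔ ∀ v ∈ Finset.Ico (0:ℤ) ((n:ℤ)+1),
      ((univ.filter (fun k => v ≤ ((a k).val : ℤ))).card : ℤ) < (n:ℤ)+1 - v := by
  unfold Good
  have hwin : (((n:ℤ)+1) - ((n:ℤ)+1) : ℤ) = 0 := by ring
  rw [hwin]
  refine forall₂_congr (fun v hv => ?_)
  rw [Finset.mem_Ico] at hv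
  have hsum : ∑ t ∈ Finset.Ico v ((n:ℤ)+1), d a t
      = ((univ.filter (fun k => v ≤ ((a k).val : ℤ))).card : ℤ) - ((n:ℤ)+1 - v) := by
    unfold d
    rw [Finset.sum_sub_distrib, Finset.sum_const, Int.card_Ico]
    have h1 : ∑ t ∈ Finset.Ico v ((n:ℤ)+1),
        ((univ.filter (fun k => a k = (t : ZMod (n+1)))).card : ℤ)
        = ∑ t ∈ Finset.Ico v ((n:ℤ)+1),
        ((univ.filter (fun k => ((a k).val : ℤ) = t)).card : ℤ) := by
      apply Finset.sum_congr rfl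
      intro t ht
      rw [Finset.mem_Ico] at ht
      rw [cnt_eq_fiber a (by omega) (by omega)]
    rw [h1]
    have h2 : (univ.filter (fun k => v ≤ ((a k).val : ℤ))) =
        univ.filter (fun k => ((a k).val : ℤ) ∈ Finset.Ico v ((n:ℤ)+1)) := by
      apply Finset.filter_congr
      intro k _
      have := ZMod.val_lt (a k)
      rw [Finset.mem_Ico]
      constructor
      · intro h; exact ⟨h, by omega⟩
      · exact fun h => h.1
    rw [h2, card_filter_mem]
    push_cast
    congr 1
    simp [Int.toNat_of_nonneg (by omega : (0:ℤ) ≤ (n:ℤ)+1-v)]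
  rw [hsum]
  omega

lemma val_pi_cast (i : Fin n) : (((i : ℕ) : ZMod (n+1))).val = (i : ℕ) :=
  ZMod.val_cast_of_lt (by omega)

lemma filter_flip (π : Fin n → Fin n) (i : Fin n) :
    univ.filter (fun k => ((i:ℕ):ℤ)+1 ≤ ((π k : ℕ) : ℤ)) =
      univ.filter (fun k => ¬ π k ≤ i) := by
  apply Finset.filter_congr
  intro k _
  rw [Fin.le_def, not_le]
  omega

lemma mem_PF_iff_good (π : Fin n → Fin n) :
    π ∈ PF n ↔ Good (fun k => ((π k : ℕ) : ZMod (n+1))) ((n:ℤ)+1) := by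
  rw [good_top_iff]
  have hval : ∀ k, ((((π k : ℕ) : ZMod (n+1))).val : ℤ) = ((π k : ℕ) : ℤ) := by
    intro k; rw [val_pi_cast]
  simp_rw [hval]
  rw [PF, Finset.mem_filter]
  simp only [Finset.mem_univ, true_and]
  constructor
  · intro h v hv
    rw [Finset.mem_Ico] at hv
    rcases eq_or_lt_of_le hv.1 with h0 | h0
    · have : (univ.filter (fun k => v ≤ ((π k : ℕ) : ℤ))).card ≤ n := by
        have := Finset.card_filter_le (univ : Finset (Fin n))
          (fun k => v ≤ ((π k : ℕ) : ℤ))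
        simpa using this
      omega
    · -- 1 ≤ v
      set i : Fin n := ⟨(v-1).toNat, by omega⟩ with hi
      have hvi : v = ((i:ℕ):ℤ)+1 := by simp [hi]; omega
      rw [hvi, filter_flip]
      have hpart := Finset.card_filter_add_card_filter_not
        (s := (univ : Finset (Fin n))) (p := fun k => π k ≤ i)
      have hcard : (univ : Finset (Fin n)).card = n := by simp
      have hle := h i
      omega
  · intro h i
    have hv : ((i:ℕ):ℤ)+1 ∈ Finset.Ico (0:ℤ) ((n:ℤ)+1) := by
      rw [Finset.mem_Ico]
      have := i.isLt
      omega
    have := h _ hv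
    rw [filter_flip] at this
    have hpart := Finset.card_filter_add_card_filter_not
      (s := (univ : Finset (Fin n))) (p := fun k => π k ≤ i)
    have hcard : (univ : Finset (Fin n)).card = n := by simp
    have := i.isLt
    omega

lemma good_top_val_lt (a : Fin n → ZMod (n+1)) (h : Good a ((n:ℤ)+1)) (k : Fin n) :
    (a k).val < n := by
  rw [good_top_iff] at h
  have hv : (n:ℤ) ∈ Finset.Ico (0:ℤ) ((n:ℤ)+1) := by
    rw [Finset.mem_Ico]; omega
  have hc := h _ hv
  by_contra hge
  have hk : k ∈ univ.filter (fun k => (n:ℤ) ≤ ((a k).val : ℤ)) := by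
    rw [Finset.mem_filter]
    exact ⟨Finset.mem_univ _, by omega⟩
  have : 0 < (univ.filter (fun k => (n:ℤ) ≤ ((a k).val : ℤ))).card :=
    Finset.card_pos.mpr ⟨k, hk⟩
  omega

lemma card_PF_mul : (PF n).card * (n+1) = (n+1)^n := by
  classical
  have hbij : ((PF n) ×ˢ (univ : Finset (ZMod (n+1)))).card
      = (univ : Finset (Fin n → ZMod (n+1))).card := by
    apply Finset.card_bij
      (i := fun p _ => fun k => ((p.1 k : ℕ) : ZMod (n+1)) + p.2)
      (fun p hp => Finset.mem_univ _)
    · -- injectivity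
      rintro ⟨π, c⟩ hp ⟨π', c'⟩ hq heq
      rw [Finset.mem_product] at hp hq
      have hgp : Good (fun k => ((π k : ℕ) : ZMod (n+1))) ((n:ℤ)+1) :=
        (mem_PF_iff_good π).mp hp.1
      have hgq : Good (fun k => ((π' k : ℕ) : ZMod (n+1))) ((n:ℤ)+1) :=
        (mem_PF_iff_good π').mp hq.1
      have hcastc : (((c.val : ℤ)) : ZMod (n+1)) = c := by
        push_cast
        rw [ZMod.natCast_val, ZMod.cast_id]
      have hcastc' : (((c'.val : ℤ)) : ZMod (n+1)) = c' := by
        push_cast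
        rw [ZMod.natCast_val, ZMod.cast_id]
      have hb1 : Good (fun k => ((π k : ℕ) : ZMod (n+1)) + c) ((n:ℤ)+1 + (c.val : ℤ)) := by
        have := good_shift_mp (fun k => ((π k : ℕ) : ZMod (n+1))) (c.val : ℤ) hgp
        rw [hcastc] at this
        exact this
      have hb2 : Good (fun k => ((π' k : ℕ) : ZMod (n+1)) + c') ((n:ℤ)+1 + (c'.val : ℤ)) := by
        have := good_shift_mp (fun k => ((π' k : ℕ) : ZMod (n+1))) (c'.val : ℤ) hgq
        rw [hcastc'] at this
        exact this
      rw [heq] at hb1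
      have hdvd := good_unique _ hb1 hb2
      have habs : ((n:ℤ)+1 + (c.val : ℤ)) - ((n:ℤ)+1 + (c'.val : ℤ)) = (c.val : ℤ) - (c'.val : ℤ) := by ring
      rw [habs] at hdvd
      have hlt1 := ZMod.val_lt c
      have hlt2 := ZMod.val_lt c'
      have hzero : (c.val : ℤ) - (c'.val : ℤ) = 0 := by
        apply Int.eq_zero_of_abs_lt_dvd hdvd
        rw [abs_lt]
        constructor <;> push_cast <;> omega
      have hcc : c = c' := by
        apply ZMod.val_injective
        omega
      have hpp : π = π' := by
        funext k
        have := congrFun heq k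
        rw [hcc] at this
        have h2 : ((π k : ℕ) : ZMod (n+1)) = ((π' k : ℕ) : ZMod (n+1)) := by
          exact add_right_cancel this
        have h3 : ((π k : ℕ) : ZMod (n+1)).val = ((π' k : ℕ) : ZMod (n+1)).val := by rw [h2]
        rw [ZMod.val_cast_of_lt (by omega), ZMod.val_cast_of_lt (by omega)] at h3
        exact Fin.ext h3
      rw [hpp, hcc]
    · -- surjectivity
      intro b _
      obtain ⟨u, hu⟩ := good_exists b
      set c : ZMod (n+1) := ((u - ((n:ℤ)+1) : ℤ) : ZMod (n+1)) with hc
      set a : Fin n → ZMod (n+1) := fun k => b k - c with ha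
      have hgooda : Good a ((n:ℤ)+1) := by
        rw [good_shift a (u - ((n:ℤ)+1)) ((n:ℤ)+1)]
        have he1 : (fun k => a k + ((u - ((n:ℤ)+1) : ℤ) : ZMod (n+1))) = b := by
          funext k; rw [ha]; simp [hc]
        have he2 : ((n:ℤ)+1) + (u - ((n:ℤ)+1)) = u := by ring
        rw [he1, he2]
        exact hu
      have hvlt : ∀ k, (a k).val < n := good_top_val_lt a hgooda
      set π : Fin n → Fin n := fun k => ⟨(a k).val, hvlt k⟩ with hπ
      have hιπ : (fun k => ((π k : ℕ) : ZMod (n+1))) = a := by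
        funext k
        rw [hπ]
        simp only []
        rw [ZMod.natCast_val, ZMod.cast_id]
      have hπPF : π ∈ PF n := by
        rw [mem_PF_iff_good, hιπ]
        exact hgooda
      refine ⟨⟨π, c⟩, Finset.mem_product.mpr ⟨hπPF, Finset.mem_univ _⟩, ?_⟩
      funext k
      simp only []
      rw [congrFun hιπ k, ha]
      simp
  rw [Finset.card_product] at hbij
  have h1 : (univ : Finset (ZMod (n+1))).card = n+1 := by
    rw [Finset.card_univ, ZMod.card]
  have h2 : (univ : Finset (Fin n → ZMod (n+1))).card = (n+1)^n := by
    rw [Finset.card_univ, Fintype.card_fun]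
    simp [ZMod.card]
  rw [h1, h2] at hbij
  exact hbij


lemma PF_comp_perm (π : Fin n → Fin n) (σ : Equiv.Perm (Fin n)) (h : π ∈ PF n) :
    π ∘ σ ∈ PF n := by
  rw [PF, Finset.mem_filter] at h ⊢
  refine ⟨Finset.mem_univ _, fun i => ?_⟩
  have hcard : (univ.filter (fun k => (π ∘ σ) k ≤ i)).card
      = (univ.filter (fun k => π k ≤ i)).card := by
    apply Finset.card_bij' (fun k _ => σ k) (fun k _ => σ.symm k)
    · intro k hk
      rw [Finset.mem_filter] at hk ⊢
      exact ⟨Finset.mem_univ _, hk.2⟩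
    · intro k hk
      rw [Finset.mem_filter] at hk ⊢
      refine ⟨Finset.mem_univ _, ?_⟩
      simpa [Function.comp] using hk.2
    · intro k _; simp
    · intro k _; simp
  rw [hcard]
  exact h.2 i

lemma fiber_eq (z i : Fin n) :
    ((PF n).filter (fun π => π i = i)).card = ((PF n).filter (fun π => π z = i)).card := by
  apply Finset.card_bij' (fun π _ => π ∘ (Equiv.swap z i)) (fun π _ => π ∘ (Equiv.swap z i))
  · intro π hπ
    rw [Finset.mem_filter] at hπ ⊢
    refine ⟨PF_comp_perm π _ hπ.1, ?_⟩
    simp only [Function.comp_apply, Equiv.swap_apply_left]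
    exact hπ.2
  · intro π hπ
    rw [Finset.mem_filter] at hπ ⊢
    refine ⟨PF_comp_perm π _ hπ.1, ?_⟩
    simp only [Function.comp_apply, Equiv.swap_apply_right]
    exact hπ.2
  · intro π _
    funext k
    simp [Function.comp, Equiv.swap_apply_self]
  · intro π _
    funext k
    simp [Function.comp, Equiv.swap_apply_self]

lemma sum_fp_eq_card (hn : 1 ≤ n) :
    ∑ π ∈ PF n, (univ.filter (fun i : Fin n => π i = i)).card = (PF n).card := by
  have h1 : ∀ π : Fin n → Fin n, (univ.filter (fun i : Fin n => π i = i)).card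
      = ∑ i : Fin n, if π i = i then 1 else 0 := fun π => by rw [Finset.card_filter]
  simp_rw [h1]
  rw [Finset.sum_comm]
  have h2 : ∀ i : Fin n, (∑ π ∈ PF n, if π i = i then 1 else 0)
      = ((PF n).filter (fun π => π i = i)).card := fun i => (Finset.card_filter _ _).symm
  simp_rw [h2]
  have h3 : ∀ i : Fin n, ((PF n).filter (fun π => π i = i)).card
      = ((PF n).filter (fun π => π (⟨0, hn⟩ : Fin n) = i)).card := fun i => fiber_eq _ i
  simp_rw [h3]
  rw [← Finset.card_eq_sum_card_fiberwise
    (f := fun π : Fin n → Fin n => π (⟨0, hn⟩ : Fin n)) (t := univ)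
    (fun _ _ => Finset.mem_univ _)]

end PFaux

/-- The total number of fixed points over all parking functions of size `n ≥ 1` equals
`(n+1)^(n-1) = |PF_n|`; equivalently, the expected number of fixed points of a uniformly
random parking function is `1`. -/
theorem sum_fixedPoints_parkingFunctions (n : ℕ) (hn : 1 ≤ n) :
    ∑ π ∈ PF n, (Finset.univ.filter (fun i : Fin n => π i = i)).card
      = (n + 1) ^ (n - 1) := by
  rw [PFaux.sum_fp_eq_card hn]
  have hmul := PFaux.card_PF_mul (n := n)
  have hpow : (n+1)^n = (n+1)^(n-1) * (n+1) := by
    obtain ⟨m, rfl⟩ : ∃ m, n = m + 1 := ⟨n-1, by omega⟩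
    simp [pow_succ]
  rw [hpow] at hmul
  exact Nat.eq_of_mul_eq_mul_right (by omega) hmul
end

section
/- For all ℓ, n ≥ 1 and all 1 ≤ i ≤ n − ℓ, the number of parking completions of the contiguous block (i+1, i+2, …, i+ℓ) in [n] is |PC_n((i+1,…,i+ℓ))| = Σ_{k=i}^{n−ℓ} ( (n−ℓ) choose k ) · (k+1)^(k−1) · ℓ · (n−k)^(n−k−ℓ−1). -/
open Finset

/-- One-way-street parking process on spots `{1,…,n}`: given already occupied spots `occ` and a
list of preferences, each car parks in the first unoccupied spot `≥` its preference; returns the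
final occupied set if all cars park, `none` otherwise. -/
def park (n : ℕ) (occ : Finset ℕ) : List ℕ → Option (Finset ℕ)
  | [] => some occ
  | p :: rest =>
    let avail := (Finset.Icc p n) \ occ
    if h : avail.Nonempty then park n (insert (avail.min' h) occ) rest
    else none

/-- The set of parking completions of the occupied spots `v = (v 0, …, v (ℓ-1)) ∈ [n]^ℓ`:
preference sequences of length `n - ℓ` (encoded 0-indexed, coordinate value `i` meaning
preference `i+1`) for which all remaining cars park. -/
def PC (n : ℕ) {ℓ : ℕ} (v : Fin ℓ → ℕ) : Finset (Fin (n - ℓ) → Fin n) :=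
  Finset.univ.filter
    (fun π => (park n (Finset.univ.image v) (List.ofFn (fun i => (π i : ℕ) + 1))).isSome)

namespace PCaux

lemma park_isSome_iff (n : ℕ) : ∀ (L : List ℕ) (occ : Finset ℕ), (∀ p ∈ L, 1 ≤ p) →
    ((park n occ L).isSome ↔
      ∀ s, L.countP (fun p => decide (s < p)) ≤
        ((Finset.Icc 1 n \ occ).filter (fun x => s < x)).card)
  | [], occ, _ => by simp [park]
  | p :: L, occ, hL => by
    have hp : 1 ≤ p := hL p (by simp)
    have hLtail : ∀ q ∈ L, 1 ≤ q := fun q hq => hL q (by simp [hq])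
    rw [park]
    set avail := (Finset.Icc p n) \ occ with havail
    have havail' : avail = (Finset.Icc 1 n \ occ).filter (fun x => p - 1 < x) := by
      ext x
      simp only [havail, mem_sdiff, mem_Icc, mem_filter]
      constructor
      · rintro ⟨⟨h1, h2⟩, h3⟩; exact ⟨⟨⟨by omega, h2⟩, h3⟩, by omega⟩
      · rintro ⟨⟨⟨h1, h2⟩, h3⟩, h4⟩; exact ⟨⟨by omega, h2⟩, h3⟩
    by_cases h : avail.Nonempty
    · rw [dif_pos h]
      set f := avail.min' h with hf
      have hfa : f ∈ avail := Finset.min'_mem _ _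
      have hfp : p ≤ f ∧ f ≤ n ∧ f ∉ occ := by
        have := hfa
        rw [havail] at this
        simp only [mem_sdiff, mem_Icc] at this
        tauto
      have hfree : f ∈ Finset.Icc 1 n \ occ :=
        mem_sdiff.mpr ⟨mem_Icc.mpr ⟨by omega, hfp.2.1⟩, hfp.2.2⟩
      have hfreeE : Finset.Icc 1 n \ insert f occ = (Finset.Icc 1 n \ occ).erase f := by
        ext x; simp only [mem_sdiff, mem_insert, mem_erase, mem_Icc]; tauto
      have hcard : ∀ s, ((Finset.Icc 1 n \ occ).filter (fun x => s < x)).card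
          = ((Finset.Icc 1 n \ insert f occ).filter (fun x => s < x)).card
            + (if s < f then 1 else 0) := by
        intro s
        rw [hfreeE, Finset.filter_erase]
        by_cases hs : s < f
        · rw [if_pos hs, Finset.card_erase_of_mem (by simp [hfree, hs])]
          have : ((Finset.Icc 1 n \ occ).filter (fun x => s < x)).card ≠ 0 := by
            simp only [ne_eq, Finset.card_eq_zero, ← Finset.not_nonempty_iff_eq_empty,
              not_not]
            exact ⟨f, by simp [hfree, hs]⟩
          omega
        · rw [if_neg hs, Finset.erase_eq_of_notMem (by simp [hs])]
          omega
      rw [park_isSome_iff n L _ hLtail]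
      constructor
      · intro hcond s
        rw [List.countP_cons, hcard s]
        have hcs := hcond s
        by_cases hsp : s < p
        · have hsf : s < f := by omega
          simp only [hsp, hsf, decide_eq_true_eq, if_pos]
          omega
        · simp only [hsp, decide_eq_true_eq, if_neg, not_false_iff]
          by_cases hsf : s < f <;> simp only [hsf, if_pos, if_neg, not_false_iff] <;> omega
      · intro hcond s
        have hc := hcond s
        rw [List.countP_cons, hcard s] at hc
        by_cases hsf : s < f
        · rw [if_pos hsf] at hc
          by_cases hsp : s < p
          · simp only [hsp, decide_eq_true_eq, if_pos] at hc; omega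
          · -- p ≤ s < f : filter (s<·) free = avail
            have hset : (Finset.Icc 1 n \ occ).filter (fun x => s < x) = avail := by
              rw [havail']
              ext x
              simp only [mem_filter, and_congr_right_iff]
              intro hx
              constructor
              · intro h'; omega
              · intro h'
                by_contra hxs
                have hxav : x ∈ avail := by rw [havail']; simp only [mem_filter]; exact ⟨hx, h'⟩
                have := Finset.min'_le avail x hxav
                omega
            have hmono : L.countP (fun q => decide (s < q)) ≤
                L.countP (fun q => decide (p - 1 < q)) := by
              apply List.countP_mono_left
              intro a _ ha
              simp only [decide_eq_true_eq] at ha ⊢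
              omega
            have hc2 := hcond (p - 1)
            have hpp : p - 1 < p := by omega
            rw [List.countP_cons, hcard (p-1)] at hc2
            simp only [hpp, decide_eq_true_eq, if_pos] at hc2
            have hpf : p - 1 < f := by omega
            rw [if_pos hpf] at hc2
            have hset2 : ((Finset.Icc 1 n \ insert f occ).filter (fun x => p - 1 < x)).card
                = ((Finset.Icc 1 n \ insert f occ).filter (fun x => s < x)).card := by
              congr 1
              ext x
              rw [hfreeE]
              simp only [mem_filter, mem_erase, and_congr_right_iff, and_imp]
              intro hxf hx
              constructor
              · intro h'
                by_contra hxs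
                have hxav : x ∈ avail := by
                  rw [havail']; simp only [mem_filter]; exact ⟨hx, h'⟩
                have := Finset.min'_le avail x hxav
                omega
              · intro h'; omega
            omega
        · rw [if_neg hsf] at hc
          by_cases hsp : s < p <;>
            simp only [hsp, decide_eq_true_eq, if_pos, if_neg, not_false_iff] at hc <;> omega
    · rw [dif_neg h]
      simp only [Option.isSome_none, Bool.false_eq_true, false_iff, not_forall]
      refine ⟨p - 1, ?_⟩
      rw [havail'] at h
      simp only [not_nonempty_iff_eq_empty] at h
      rw [h]
      have hpp : p - 1 < p := by omega
      simp only [Finset.card_empty, not_le, List.countP_cons, hpp, decide_eq_true_eq, if_pos]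
      omega


/-- number of coordinates with value (0-indexed) `< s` -/
def cnt {M N : ℕ} (w : Fin M → Fin N) (s : ℕ) : ℕ :=
  (Finset.univ.filter (fun j => (w j : ℕ) < s)).card

open Classical in
/-- sequences satisfying the staircase condition `t ≤ cnt w (f t)` for `t ∈ [1, M]` -/
noncomputable def Cset (M N : ℕ) (f : ℕ → ℕ) : Finset (Fin M → Fin N) :=
  Finset.univ.filter (fun w => ∀ t ∈ Finset.Icc 1 M, t ≤ cnt w (f t))

lemma mem_Cset {M N : ℕ} {f : ℕ → ℕ} {w : Fin M → Fin N} :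
    w ∈ Cset M N f ↔ ∀ t ∈ Finset.Icc 1 M, t ≤ cnt w (f t) := by
  simp [Cset]

lemma cnt_mono {M N : ℕ} (w : Fin M → Fin N) {s s' : ℕ} (h : s ≤ s') :
    cnt w s ≤ cnt w s' := by
  apply Finset.card_le_card
  intro j hj
  simp only [Finset.mem_filter] at hj ⊢
  exact ⟨hj.1, by omega⟩

lemma cnt_le {M N : ℕ} (w : Fin M → Fin N) (s : ℕ) : cnt w s ≤ M := by
  have := Finset.card_le_card (Finset.filter_subset (fun j => (w j : ℕ) < s) Finset.univ)
  simpa [cnt] using this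

lemma cnt_eq_iff {M N : ℕ} (w : Fin M → Fin N) (s : ℕ) :
    cnt w s = M ↔ ∀ j, (w j : ℕ) < s := by
  constructor
  · intro h j
    have h2 : (Finset.univ.filter (fun j => (w j : ℕ) < s)) = Finset.univ := by
      apply Finset.eq_univ_of_card
      simp only [Fintype.card_fin]
      exact h
    have hj : j ∈ Finset.univ.filter (fun j => (w j : ℕ) < s) := by
      rw [h2]; exact Finset.mem_univ j
    simpa using hj
  · intro h
    rw [cnt, Finset.filter_true_of_mem (fun j _ => h j)]
    simp

lemma cnt_of_lt {M N : ℕ} (w : Fin M → Fin N) {s : ℕ} (h : ∀ j, (w j : ℕ) < s) :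
    cnt w s = M := (cnt_eq_iff w s).mpr h

lemma countP_ofFn {M : ℕ} (v : Fin M → ℕ) (q : ℕ → Bool) :
    (List.ofFn v).countP q = (Finset.univ.filter (fun j => q (v j) = true)).card := by
  induction M with
  | zero => simp
  | succ M ih =>
    rw [List.ofFn_succ, List.countP_cons, ih (fun j => v j.succ)]
    rw [Finset.card_filter, Finset.card_filter, Fin.sum_univ_succ]
    by_cases h : q (v 0) = true
    · simp [h]
      omega
    · simp [h]

/-- bridge: the parking process succeeds iff the staircase bound holds -/
lemma park_ofFn_iff (n : ℕ) (occ : Finset ℕ) {M N : ℕ} (w : Fin M → Fin N) :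
    (park n occ (List.ofFn (fun j => (w j : ℕ) + 1))).isSome ↔
      ∀ s, M - cnt w s ≤ ((Finset.Icc 1 n \ occ).filter (fun x => s < x)).card := by
  rw [park_isSome_iff n _ occ (by
    intro p hp
    rw [List.mem_ofFn] at hp
    obtain ⟨j, rfl⟩ := hp
    simp)]
  have hcount : ∀ s, (List.ofFn (fun j => (w j : ℕ) + 1)).countP (fun p => decide (s < p))
      = M - cnt w s := by
    intro s
    rw [countP_ofFn]
    have hsplit := Finset.card_filter_add_card_filter_not
      (s := (Finset.univ : Finset (Fin M))) (p := fun j => (w j : ℕ) < s)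
    simp only [Finset.card_univ, Fintype.card_fin] at hsplit
    have : (Finset.univ.filter (fun j => (decide (s < (w j : ℕ) + 1)) = true))
        = Finset.univ.filter (fun j => ¬ ((w j : ℕ) < s)) := by
      apply Finset.filter_congr
      intro j _
      simp only [decide_eq_true_eq, eq_iff_iff]
      omega
    rw [this]
    have h2 : (Finset.univ.filter (fun j => ¬ ((w j : ℕ) < s))).card
        = (Finset.univ.filter (fun j => (w j : ℕ) < s)).card
          + (Finset.univ.filter (fun j => ¬ ((w j : ℕ) < s))).card - cnt w s := by
      unfold cnt; omega
    rw [h2, hsplit]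
  constructor
  · intro h s; rw [← hcount s]; exact h s
  · intro h s; rw [hcount s]; exact h s


/-! ### Circular parking and the Pollak-style count -/

/-- circular parking: first free spot weakly clockwise from `p` -/
noncomputable def spot {N : ℕ} (p : ZMod N) (occ : Finset (ZMod N)) : ZMod N := by
  classical
  exact if h : ((Finset.range N).filter (fun k : ℕ => p + (k : ZMod N) ∉ occ)).Nonempty
  then p + ((((Finset.range N).filter (fun k : ℕ => p + (k : ZMod N) ∉ occ)).min' h : ℕ) : ZMod N)
  else p

noncomputable def cpk {N : ℕ} : List (ZMod N) → Finset (ZMod N) → Finset (ZMod N)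
  | [], occ => occ
  | p :: L, occ => cpk L (insert (spot p occ) occ)

lemma subset_cpk {N : ℕ} : ∀ (L : List (ZMod N)) (occ : Finset (ZMod N)), occ ⊆ cpk L occ
  | [], occ => by rw [cpk]
  | p :: L, occ => by
    rw [cpk]
    exact (Finset.subset_insert _ _).trans (subset_cpk L _)

lemma spot_eq {N : ℕ} [NeZero N] (p : ZMod N) (occ : Finset (ZMod N)) (k : ℕ) (hk : k < N)
    (hfree : p + (k : ZMod N) ∉ occ) (hmin : ∀ j : ℕ, j < k → p + (j : ZMod N) ∈ occ) :
    spot p occ = p + (k : ZMod N) := by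
  classical
  have hkK : k ∈ (Finset.range N).filter (fun k : ℕ => p + (k : ZMod N) ∉ occ) := by
    simp only [Finset.mem_filter, Finset.mem_range]
    exact ⟨hk, hfree⟩
  have hne : ((Finset.range N).filter (fun k : ℕ => p + (k : ZMod N) ∉ occ)).Nonempty := ⟨k, hkK⟩
  have hminEq : (((Finset.range N).filter (fun k : ℕ => p + (k : ZMod N) ∉ occ)).min' hne) = k := by
    apply le_antisymm
    · exact Finset.min'_le _ _ hkK
    · apply Finset.le_min'
      intro y hy
      simp only [Finset.mem_filter, Finset.mem_range] at hy
      by_contra hlt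
      exact hy.2 (hmin y (by omega))
  rw [spot]
  simp only [hne, dif_pos, hminEq]

lemma spot_not_mem {N : ℕ} [NeZero N] (p : ZMod N) (occ : Finset (ZMod N))
    (hocc : occ ≠ Finset.univ) : spot p occ ∉ occ := by
  classical
  obtain ⟨x, hx⟩ : ∃ x, x ∉ occ := by
    by_contra h
    push_neg at h
    exact hocc (Finset.eq_univ_of_forall h)
  have hxk : p + (((x - p).val : ℕ) : ZMod N) = x := by
    rw [ZMod.natCast_val, ZMod.cast_id]
    ring
  have hk : p + (((x - p).val : ℕ) : ZMod N) ∉ occ := by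
    rw [hxk]; exact hx
  have hne : ((Finset.range N).filter (fun k : ℕ => p + (k : ZMod N) ∉ occ)).Nonempty := by
    refine ⟨(x - p).val, ?_⟩
    simp only [Finset.mem_filter, Finset.mem_range]
    exact ⟨ZMod.val_lt _, hk⟩
  rw [spot]
  simp only [hne, dif_pos]
  have := Finset.min'_mem _ hne
  simp only [Finset.mem_filter] at this
  exact this.2

lemma card_cpk {N : ℕ} [NeZero N] :
    ∀ (L : List (ZMod N)) (occ : Finset (ZMod N)), occ.card + L.length ≤ N →
      (cpk L occ).card = occ.card + L.length
  | [], occ, _ => by rw [cpk]; rfl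
  | p :: L, occ, h => by
    rw [cpk]
    have hocc : occ ≠ Finset.univ := by
      intro he
      have : occ.card = N := by rw [he, Finset.card_univ, ZMod.card]
      simp only [List.length_cons] at h
      omega
    have hs := spot_not_mem p occ hocc
    rw [card_cpk L _ (by
      rw [Finset.card_insert_of_notMem hs]
      simp only [List.length_cons] at h
      omega)]
    rw [Finset.card_insert_of_notMem hs]
    simp only [List.length_cons]
    omega

lemma spot_shift {N : ℕ} (p c : ZMod N) (occ : Finset (ZMod N)) :
    spot (p + c) (occ.image (· + c)) = spot p occ + c := by
  classical
  have hset : ∀ k : ℕ, (p + c + (k : ZMod N) ∉ occ.image (· + c)) ↔ (p + (k : ZMod N) ∉ occ) := by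
    intro k
    rw [not_iff_not]
    constructor
    · intro h
      obtain ⟨b, hb, hbe⟩ := Finset.mem_image.mp h
      have : b = p + (k : ZMod N) := by
        have : b + c = p + (k : ZMod N) + c := by rw [hbe]; ring
        exact add_right_cancel this
      rwa [← this]
    · intro h
      exact Finset.mem_image.mpr ⟨p + (k : ZMod N), h, by ring⟩
  have hKeq : ((Finset.range N).filter (fun k : ℕ => p + c + (k : ZMod N) ∉ occ.image (· + c)))
      = ((Finset.range N).filter (fun k : ℕ => p + (k : ZMod N) ∉ occ)) := by
    apply Finset.filter_congr
    intro k _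
    exact hset k
  rw [spot, spot, hKeq]
  by_cases h : ((Finset.range N).filter (fun k : ℕ => p + (k : ZMod N) ∉ occ)).Nonempty
  · simp only [h, dif_pos]
    ring
  · rw [dif_neg h, dif_neg h]

lemma cpk_shift {N : ℕ} :
    ∀ (L : List (ZMod N)) (occ : Finset (ZMod N)) (c : ZMod N),
      cpk (L.map (· + c)) (occ.image (· + c)) = (cpk L occ).image (· + c)
  | [], occ, c => by rw [List.map_nil, cpk, cpk]
  | p :: L, occ, c => by
    rw [List.map_cons, cpk, cpk, spot_shift]
    have him : (insert (spot p occ) occ).image (· + c)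
        = insert (spot p occ + c) (occ.image (· + c)) := by simp
    rw [← him]
    exact cpk_shift L _ c

/-- linear parking on `[1, N-1]` succeeds iff circular parking never uses spot `0 = N`. -/
lemma park_vs_cpk (N : ℕ) [NeZero N] :
    ∀ (L : List ℕ) (occ : Finset ℕ), (∀ p ∈ L, 1 ≤ p ∧ p ≤ N) →
      (occ ⊆ Finset.Icc 1 (N - 1)) →
      ((park (N - 1) occ L).isSome ↔
        (0 : ZMod N) ∉ cpk (L.map (Nat.cast : ℕ → ZMod N)) (occ.image (Nat.cast : ℕ → ZMod N)))
  | [], occ, _, hocc => by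
    rw [List.map_nil, cpk]
    simp only [park, Option.isSome_some, true_iff]
    intro h0
    obtain ⟨x, hx, hxe⟩ := Finset.mem_image.mp h0
    have hxI := hocc hx
    simp only [Finset.mem_Icc] at hxI
    have hdvd := (ZMod.natCast_eq_zero_iff x N).mp hxe
    have := Nat.le_of_dvd (by omega) hdvd
    omega
  | p :: L, occ, hL, hocc => by
    have hp1 : 1 ≤ p := (hL p (by simp)).1
    have hpN : p ≤ N := (hL p (by simp)).2
    have hN : 1 ≤ N := Nat.one_le_iff_ne_zero.mpr (NeZero.ne N)
    have hcastinj : ∀ x y : ℕ, x ≤ N → y ≤ N → 1 ≤ x → 1 ≤ y →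
        (x : ZMod N) = (y : ZMod N) → x = y := by
      intro x y hx hy hx1 hy1 hxy
      have hv : x % N = y % N := by
        have := congrArg ZMod.val hxy
        rwa [ZMod.val_natCast, ZMod.val_natCast] at this
      rcases Nat.lt_or_ge x N with h | h
      · rcases Nat.lt_or_ge y N with h' | h'
        · rwa [Nat.mod_eq_of_lt h, Nat.mod_eq_of_lt h'] at hv
        · have hyN : y = N := by omega
          rw [Nat.mod_eq_of_lt h, hyN, Nat.mod_self] at hv
          omega
      · have hxN : x = N := by omega
        rcases Nat.lt_or_ge y N with h' | h'
        · rw [hxN, Nat.mod_self, Nat.mod_eq_of_lt h'] at hv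
          omega
        · omega
    have hmemim : ∀ x : ℕ, 1 ≤ x → x ≤ N →
        ((x : ZMod N) ∈ occ.image (Nat.cast : ℕ → ZMod N) ↔ x ∈ occ) := by
      intro x hx1 hxN
      constructor
      · intro h
        obtain ⟨b, hb, hbe⟩ := Finset.mem_image.mp h
        have hbI := hocc hb
        simp only [Finset.mem_Icc] at hbI
        have : b = x := hcastinj b x (by omega) hxN hbI.1 hx1 hbe
        rwa [← this]
      · intro h
        exact Finset.mem_image.mpr ⟨x, h, rfl⟩
    rw [List.map_cons, park, cpk]
    set avail := (Finset.Icc p (N - 1)) \ occ with havail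
    by_cases h : avail.Nonempty
    · rw [dif_pos h]
      set f := avail.min' h with hf
      have hfa : f ∈ avail := Finset.min'_mem _ _
      have hfprop : p ≤ f ∧ f ≤ N - 1 ∧ f ∉ occ := by
        have := hfa
        rw [havail] at this
        simp only [Finset.mem_sdiff, Finset.mem_Icc] at this
        tauto
      have hfN : f ≤ N := by omega
      have hspot : spot (p : ZMod N) (occ.image Nat.cast) = ((f : ℕ) : ZMod N) := by
        have heq : ((p : ZMod N) + ((f - p : ℕ) : ZMod N)) = ((f : ℕ) : ZMod N) := by
          rw [← Nat.cast_add]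
          congr 1
          omega
        have := spot_eq (p : ZMod N) (occ.image Nat.cast) (f - p) (by omega)
          (by
            rw [heq]
            rw [hmemim f (by omega) (by omega)]
            exact hfprop.2.2)
          (by
            intro j hj
            have hpj : ((p : ZMod N) + (j : ZMod N)) = ((p + j : ℕ) : ZMod N) := by
              rw [Nat.cast_add]
            rw [hpj, hmemim (p + j) (by omega) (by omega)]
            by_contra hnot
            have : p + j ∈ avail := by
              rw [havail]
              simp only [Finset.mem_sdiff, Finset.mem_Icc]
              exact ⟨⟨by omega, by omega⟩, hnot⟩
            have := Finset.min'_le avail _ this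
            omega)
        rw [this, heq]
      rw [hspot]
      have himins : (insert f occ).image (Nat.cast : ℕ → ZMod N)
          = insert ((f : ℕ) : ZMod N) (occ.image Nat.cast) := by simp
      rw [← himins]
      exact park_vs_cpk N L (insert f occ) (fun q hq => hL q (by simp [hq]))
        (by
          intro x hx
          rcases Finset.mem_insert.mp hx with rfl | hx
          · simp only [Finset.mem_Icc]; omega
          · exact hocc hx)
    · rw [dif_neg h]
      simp only [Option.isSome_none, Bool.false_eq_true, false_iff, not_not]
      have hspot : spot (p : ZMod N) (occ.image Nat.cast) = 0 := by
        have heq : ((p : ZMod N) + ((N - p : ℕ) : ZMod N)) = 0 := by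
          rw [← Nat.cast_add]
          have : p + (N - p) = N := by omega
          rw [this, ZMod.natCast_self]
        have := spot_eq (p : ZMod N) (occ.image Nat.cast) (N - p) (by omega)
          (by
            rw [heq]
            intro h0
            obtain ⟨x, hx, hxe⟩ := Finset.mem_image.mp h0
            have hxI := hocc hx
            simp only [Finset.mem_Icc] at hxI
            have hdvd := (ZMod.natCast_eq_zero_iff x N).mp hxe
            have := Nat.le_of_dvd (by omega) hdvd
            omega)
          (by
            intro j hj
            have hpj : ((p : ZMod N) + (j : ZMod N)) = ((p + j : ℕ) : ZMod N) := by
              rw [Nat.cast_add]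
            rw [hpj, hmemim (p + j) (by omega) (by omega)]
            by_contra hnot
            have : p + j ∈ avail := by
              rw [havail]
              simp only [Finset.mem_sdiff, Finset.mem_Icc]
              exact ⟨⟨by omega, by omega⟩, hnot⟩
            exact h ⟨p + j, this⟩)
        rw [this, heq]
      rw [hspot]
      exact subset_cpk _ _ (Finset.mem_insert_self _ _)


lemma icc_filter_card (A s : ℕ) :
    ((Finset.Icc 1 A).filter (fun x => s < x)).card = A - s := by
  have h : (Finset.Icc 1 A).filter (fun x => s < x) = Finset.Icc (s + 1) A := by
    ext x
    simp only [Finset.mem_filter, Finset.mem_Icc]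
    omega
  rw [h, Nat.card_Icc]
  omega

/-- the staircase condition, in "free spots bound" form, for an interval `[1, N-1]` -/
lemma cset_iff_bound {M N a : ℕ} (ha : 1 ≤ a) (hN : N = M + a) (w : Fin M → Fin N) :
    (∀ t ∈ Finset.Icc 1 M, t ≤ cnt w (t + a - 1)) ↔
      ∀ s, M - cnt w s ≤
        ((Finset.Icc 1 (N - 1) \ (∅ : Finset ℕ)).filter (fun x => s < x)).card := by
  have hcard : ∀ s, ((Finset.Icc 1 (N - 1) \ (∅ : Finset ℕ)).filter (fun x => s < x)).card
      = N - 1 - s := by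
    intro s
    rw [Finset.sdiff_empty, icc_filter_card]
  constructor
  · intro h s
    rw [hcard]
    rcases Nat.lt_or_ge s a with hs | hs
    · have := cnt_le w s
      omega
    · rcases Nat.lt_or_ge s N with hsN | hsN
      · have ht := h (s + 1 - a) (by simp only [Finset.mem_Icc]; omega)
        have : s + 1 - a + a - 1 = s := by omega
        rw [this] at ht
        have := cnt_le w s
        omega
      · have : cnt w s = M := cnt_of_lt w (fun j => by have := (w j).isLt; omega)
        omega
  · intro h t ht
    simp only [Finset.mem_Icc] at ht
    have hs := h (t + a - 1)
    rw [hcard] at hs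
    have := cnt_le w (t + a - 1)
    omega

/-- Pollak's circular counting argument: the master count. -/
lemma pollak (M a : ℕ) (ha : 1 ≤ a) (hM : 1 ≤ M) :
    (Cset M (M + a) (fun t => t + a - 1)).card = a * (M + a) ^ (M - 1) := by
  classical
  set N := M + a with hNdef
  haveI : NeZero N := ⟨by omega⟩
  have hcastN : ∀ x y : ℕ, 1 ≤ x → x ≤ N → 1 ≤ y → y ≤ N →
      (x : ZMod N) = (y : ZMod N) → x = y := by
    intro x y hx1 hxN hy1 hyN hxy
    have hv : x % N = y % N := by
      have := congrArg ZMod.val hxy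
      rwa [ZMod.val_natCast, ZMod.val_natCast] at this
    rcases Nat.lt_or_ge x N with h | h
    · rcases Nat.lt_or_ge y N with h' | h'
      · rwa [Nat.mod_eq_of_lt h, Nat.mod_eq_of_lt h'] at hv
      · have : y = N := by omega
        rw [Nat.mod_eq_of_lt h, this, Nat.mod_self] at hv
        omega
    · have hx : x = N := by omega
      rcases Nat.lt_or_ge y N with h' | h'
      · rw [hx, Nat.mod_self, Nat.mod_eq_of_lt h'] at hv
        omega
      · omega
  have key : ∀ w : Fin M → Fin N, (w ∈ Cset M N (fun t => t + a - 1)) ↔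
      (0 : ZMod N) ∉ cpk (List.ofFn (fun j => (((w j : ℕ) + 1 : ℕ) : ZMod N))) ∅ := by
    intro w
    rw [mem_Cset, cset_iff_bound ha hNdef w, ← park_ofFn_iff (N - 1) ∅ w]
    have hcorr := park_vs_cpk N (List.ofFn (fun j => (w j : ℕ) + 1)) ∅
      (by
        intro p hp
        rw [List.mem_ofFn] at hp
        obtain ⟨j, rfl⟩ := hp
        have := (w j).isLt
        show 1 ≤ (w j : ℕ) + 1 ∧ (w j : ℕ) + 1 ≤ N
        omega)
      (by simp)
    rw [hcorr, List.map_ofFn, Finset.image_empty]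
    rfl
  have h1 : (Cset M N (fun t => t + a - 1)).card
      = (Finset.univ.filter
          (fun v : Fin M → ZMod N => (0 : ZMod N) ∉ cpk (List.ofFn v) ∅)).card := by
    apply Finset.card_bij (fun w _ => fun j => (((w j : ℕ) + 1 : ℕ) : ZMod N))
    · intro w hw
      simp only [Finset.mem_filter, Finset.mem_univ, true_and]
      exact (key w).mp hw
    · intro w hw w' hw' he
      funext j
      have hj := congrFun he j
      have h1 := (w j).isLt
      have h2 := (w' j).isLt
      have := hcastN ((w j : ℕ) + 1) ((w' j : ℕ) + 1) (by omega) (by omega) (by omega)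
        (by omega) hj
      exact Fin.ext (by omega)
    · intro v hv
      simp only [Finset.mem_filter, Finset.mem_univ, true_and] at hv
      refine ⟨fun j => ⟨(v j - 1).val, ZMod.val_lt _⟩, ?_, ?_⟩
      · have heq : (fun j => ((((v j - 1).val : ℕ) + 1 : ℕ) : ZMod N)) = v := by
          funext j
          push_cast
          rw [ZMod.natCast_val, ZMod.cast_id]
          ring
        rw [key]
        simpa only [heq] using hv
      · funext j
        push_cast
        rw [ZMod.natCast_val, ZMod.cast_id]
        ring
  rw [h1]
  -- double counting
  have hGoodCount : ∀ v : Fin M → ZMod N,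
      (Finset.univ.filter
        (fun c : ZMod N => (0 : ZMod N) ∉ cpk (List.ofFn (fun j => v j + c)) ∅)).card = a := by
    intro v
    have hcardS : (cpk (List.ofFn v) ∅).card = M := by
      have := card_cpk (List.ofFn v) ∅ (by
        simp only [Finset.card_empty, List.length_ofFn]
        omega)
      simpa using this
    have hshift : ∀ c : ZMod N,
        cpk (List.ofFn (fun j => v j + c)) ∅ = (cpk (List.ofFn v) ∅).image (· + c) := by
      intro c
      have h3 : List.ofFn (fun j => v j + c) = (List.ofFn v).map (· + c) := by
        rw [List.map_ofFn]
        rfl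
      rw [h3]
      have h5 := cpk_shift (List.ofFn v) ∅ c
      rwa [Finset.image_empty] at h5
    have hmem : ∀ c : ZMod N,
        ((0 : ZMod N) ∉ cpk (List.ofFn (fun j => v j + c)) ∅) ↔ (-c ∉ cpk (List.ofFn v) ∅) := by
      intro c
      rw [hshift c, not_iff_not]
      constructor
      · intro h
        obtain ⟨b, hb, hbe⟩ := Finset.mem_image.mp h
        have : b = -c := by
          have := hbe
          linear_combination this  -- b + c = 0 → b = -c
        rwa [← this]
      · intro h
        exact Finset.mem_image.mpr ⟨-c, h, by ring⟩
    have hfilter : (Finset.univ.filter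
        (fun c : ZMod N => (0 : ZMod N) ∉ cpk (List.ofFn (fun j => v j + c)) ∅))
        = (Finset.univ.filter (fun c : ZMod N => -c ∉ cpk (List.ofFn v) ∅)) := by
      apply Finset.filter_congr
      intro c _
      exact hmem c
    rw [hfilter]
    have hneg : (Finset.univ.filter (fun c : ZMod N => -c ∉ cpk (List.ofFn v) ∅)).card
        = (Finset.univ.filter (fun d : ZMod N => d ∉ cpk (List.ofFn v) ∅)).card := by
      apply Finset.card_bij (fun c _ => -c)
      · intro c hc
        simp only [Finset.mem_filter, Finset.mem_univ, true_and] at hc ⊢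
        exact hc
      · intro c _ c' _ h
        exact neg_injective h
      · intro d hd
        simp only [Finset.mem_filter, Finset.mem_univ, true_and] at hd
        exact ⟨-d, by simp only [Finset.mem_filter, Finset.mem_univ, true_and, neg_neg]; exact hd,
          by simp⟩
    rw [hneg]
    have : (Finset.univ.filter (fun d : ZMod N => d ∉ cpk (List.ofFn v) ∅))
        = Finset.univ \ cpk (List.ofFn v) ∅ := by
      ext d
      simp
    rw [this, Finset.card_sdiff_of_subset (Finset.subset_univ _), hcardS, Finset.card_univ, ZMod.card]
    omega
  -- sum over all v and all c
  have hdouble : (Finset.univ.filter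
      (fun v : Fin M → ZMod N => (0 : ZMod N) ∉ cpk (List.ofFn v) ∅)).card * N = a * N ^ M := by
    have e1 : ∑ v : Fin M → ZMod N, (Finset.univ.filter
        (fun c : ZMod N => (0 : ZMod N) ∉ cpk (List.ofFn (fun j => v j + c)) ∅)).card
        = a * N ^ M := by
      rw [Finset.sum_congr rfl (fun v _ => hGoodCount v)]
      simp only [Finset.sum_const, Finset.card_univ, smul_eq_mul]
      rw [Fintype.card_fun]
      simp only [Fintype.card_fin, ZMod.card]
      ring
    have e2 : ∑ v : Fin M → ZMod N, (Finset.univ.filter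
        (fun c : ZMod N => (0 : ZMod N) ∉ cpk (List.ofFn (fun j => v j + c)) ∅)).card
        = (Finset.univ.filter
          (fun v : Fin M → ZMod N => (0 : ZMod N) ∉ cpk (List.ofFn v) ∅)).card * N := by
      have swap : ∑ v : Fin M → ZMod N, ∑ c : ZMod N,
          (if (0 : ZMod N) ∉ cpk (List.ofFn (fun j => v j + c)) ∅ then 1 else 0)
          = ∑ c : ZMod N, ∑ v : Fin M → ZMod N,
          (if (0 : ZMod N) ∉ cpk (List.ofFn (fun j => v j + c)) ∅ then 1 else 0) :=
        Finset.sum_comm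
      have inner : ∀ c : ZMod N, ∑ v : Fin M → ZMod N,
          (if (0 : ZMod N) ∉ cpk (List.ofFn (fun j => v j + c)) ∅ then 1 else 0)
          = (Finset.univ.filter
            (fun v : Fin M → ZMod N => (0 : ZMod N) ∉ cpk (List.ofFn v) ∅)).card := by
        intro c
        rw [Finset.card_filter]
        exact Fintype.sum_equiv (Equiv.piCongrRight (fun _ => Equiv.addRight c)) _ _
          (fun v => by rfl)
      calc ∑ v : Fin M → ZMod N, (Finset.univ.filter
            (fun c : ZMod N => (0 : ZMod N) ∉ cpk (List.ofFn (fun j => v j + c)) ∅)).card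
          = ∑ v : Fin M → ZMod N, ∑ c : ZMod N,
            (if (0 : ZMod N) ∉ cpk (List.ofFn (fun j => v j + c)) ∅ then 1 else 0) := by
            exact Finset.sum_congr rfl (fun v _ => Finset.card_filter _ _)
        _ = ∑ c : ZMod N, ∑ v : Fin M → ZMod N,
            (if (0 : ZMod N) ∉ cpk (List.ofFn (fun j => v j + c)) ∅ then 1 else 0) := swap
        _ = ∑ c : ZMod N, (Finset.univ.filter
            (fun v : Fin M → ZMod N => (0 : ZMod N) ∉ cpk (List.ofFn v) ∅)).card := by
            exact Finset.sum_congr rfl (fun c _ => inner c)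
        _ = (Finset.univ.filter
            (fun v : Fin M → ZMod N => (0 : ZMod N) ∉ cpk (List.ofFn v) ∅)).card * N := by
            simp only [Finset.sum_const, Finset.card_univ, ZMod.card, smul_eq_mul]
            ring
    rw [← e2, e1]
  have hNpos : 0 < N := by omega
  have hpow : a * N ^ M = a * N ^ (M - 1) * N := by
    have h5 : N ^ M = N ^ (M - 1) * N := by
      conv_lhs => rw [show M = (M - 1) + 1 by omega]
      rw [pow_succ]
    rw [h5]
    ring
  rw [hpow] at hdouble
  exact Nat.eq_of_mul_eq_mul_right hNpos hdouble


lemma cnt_ext {M N N' : ℕ} {w : Fin M → Fin N} {w' : Fin M → Fin N'}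
    (h : ∀ j, (w j : ℕ) = (w' j : ℕ)) (s : ℕ) : cnt w s = cnt w' s := by
  unfold cnt
  congr 1
  apply Finset.filter_congr
  intro j _
  rw [h j]

/-- the staircase count does not depend on the alphabet size, as long as it is large enough -/
lemma cset_card_resize {M N1 N2 : ℕ} (f : ℕ → ℕ) (hM : 1 ≤ M) (h1 : f M ≤ N1) (h2 : N1 ≤ N2) :
    (Cset M N1 f).card = (Cset M N2 f).card := by
  classical
  apply Finset.card_bij (fun w _ => fun j => Fin.castLE h2 (w j))
  · intro w hw
    rw [mem_Cset] at hw ⊢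
    intro t ht
    have he : cnt (fun j => Fin.castLE h2 (w j)) (f t) = cnt w (f t) :=
      cnt_ext (fun j => rfl) (f t)
    rw [he]
    exact hw t ht
  · intro w hw w' hw' he
    funext j
    have := congrFun he j
    exact Fin.ext (by simpa using congrArg Fin.val this)
  · intro w2 hw2
    rw [mem_Cset] at hw2
    have hall : ∀ j, (w2 j : ℕ) < f M := by
      have hM' : M ∈ Finset.Icc 1 M := by simp [hM]
      have := hw2 M hM'
      have hle := cnt_le w2 (f M)
      have : cnt w2 (f M) = M := by omega
      exact (cnt_eq_iff w2 (f M)).mp this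
    refine ⟨fun j => ⟨(w2 j : ℕ), by have := hall j; omega⟩, ?_, ?_⟩
    · rw [mem_Cset]
      intro t ht
      have he : cnt (fun j => (⟨(w2 j : ℕ), by have := hall j; omega⟩ : Fin N1)) (f t)
          = cnt w2 (f t) := cnt_ext (fun j => rfl) (f t)
      rw [he]
      exact hw2 t ht
    · funext j
      exact Fin.ext rfl

/-- reindexing a filter count along `orderIsoOfFin` -/
lemma card_filter_orderIso {m k : ℕ} (A : Finset (Fin m)) (hA : A.card = k)
    (P : Fin m → Prop) [DecidablePred P] :
    (Finset.univ.filter (fun x : Fin k => P ((A.orderIsoOfFin hA x) : Fin m))).card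
      = (A.filter P).card := by
  apply Finset.card_bij (fun x _ => ((A.orderIsoOfFin hA x) : Fin m))
  · intro x hx
    simp only [Finset.mem_filter, Finset.mem_univ, true_and] at hx ⊢
    exact ⟨(A.orderIsoOfFin hA x).2, hx⟩
  · intro x _ x' _ h
    exact (A.orderIsoOfFin hA).injective (Subtype.ext h)
  · intro j hj
    simp only [Finset.mem_filter] at hj
    refine ⟨(A.orderIsoOfFin hA).symm ⟨j, hj.1⟩, ?_, ?_⟩
    · simp only [Finset.mem_filter, Finset.mem_univ, true_and, OrderIso.apply_symm_apply]
      exact hj.2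
    · simp [OrderIso.apply_symm_apply]

/-- the step function for partially shifted staircase conditions -/
def sfun (ℓ k : ℕ) : ℕ → ℕ := fun t => if t ≤ k then t else t + ℓ

lemma chain_subset {m n ℓ k : ℕ} :
    Cset m n (sfun ℓ (k + 1)) ⊆ Cset m n (sfun ℓ k) := by
  intro w hw
  rw [mem_Cset] at hw ⊢
  intro t ht
  have h := hw t ht
  unfold sfun at h ⊢
  rcases Nat.lt_trichotomy t (k + 1) with h1 | h1 | h1
  · rw [if_pos (by omega)]
    rwa [if_pos (by omega)] at h
  · subst h1
    rw [if_neg (by omega)]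
    rw [if_pos (by omega)] at h
    exact le_trans h (cnt_mono w (by omega))
  · rw [if_neg (by omega)]
    rwa [if_neg (by omega)] at h


lemma orderIsoOfFin_congr {m k : ℕ} {A A' : Finset (Fin m)} (h : A = A')
    (hA : A.card = k) (hA' : A'.card = k) (x : Fin k) :
    ((A.orderIsoOfFin hA x : {y // y ∈ A}) : Fin m) = ((A'.orderIsoOfFin hA' x) : Fin m) := by
  subst h
  rfl

lemma cnt_split {m n : ℕ} (w : Fin m → Fin n) (A : Finset (Fin m)) (s : ℕ) :
    cnt w s = (A.filter (fun j => (w j : ℕ) < s)).card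
      + (Aᶜ.filter (fun j => (w j : ℕ) < s)).card := by
  classical
  unfold cnt
  rw [← Finset.card_union_of_disjoint
    (Finset.disjoint_filter_filter (disjoint_compl_right))]
  congr 1
  ext j
  simp only [Finset.mem_union, Finset.mem_filter, Finset.mem_compl, Finset.mem_univ, true_and]
  by_cases hj : j ∈ A <;> simp [hj]

/-- characterization of the difference set -/
lemma mem_diff_char {m ℓ k : ℕ} (hk1 : 1 ≤ k) (hkm : k < m) (w : Fin m → Fin (m + ℓ)) :
    (w ∈ Cset m (m + ℓ) (sfun ℓ k) \ Cset m (m + ℓ) (sfun ℓ (k + 1))) ↔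
      ((∀ t ∈ Finset.Icc 1 k, t ≤ cnt w t) ∧ cnt w k = k ∧ cnt w (k + 1) = k ∧
        (∀ t ∈ Finset.Icc (k + 1) m, t ≤ cnt w (t + ℓ))) := by
  classical
  rw [Finset.mem_sdiff, mem_Cset, mem_Cset]
  constructor
  · rintro ⟨h1, h2⟩
    push_neg at h2
    obtain ⟨t0, ht0, hlt⟩ := h2
    simp only [Finset.mem_Icc] at ht0
    have hts : t0 = k + 1 := by
      by_contra hne
      rcases Nat.lt_or_ge t0 (k + 1) with hc | hc
      · have h3 := h1 t0 (by simp only [Finset.mem_Icc]; omega)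
        unfold sfun at h3 hlt
        rw [if_pos (by omega)] at hlt
        rw [if_pos (by omega)] at h3
        omega
      · have h3 := h1 t0 (by simp only [Finset.mem_Icc]; omega)
        unfold sfun at h3 hlt
        rw [if_neg (by omega)] at hlt
        rw [if_neg (by omega)] at h3
        omega
    subst hts
    unfold sfun at hlt
    rw [if_pos (le_refl _)] at hlt
    have hck : k ≤ cnt w k := by
      have h3 := h1 k (by simp only [Finset.mem_Icc]; omega)
      unfold sfun at h3
      rwa [if_pos (le_refl _)] at h3
    have hmono := cnt_mono w (show k ≤ k + 1 by omega)
    refine ⟨?_, by omega, by omega, ?_⟩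
    · intro t ht
      simp only [Finset.mem_Icc] at ht
      have h3 := h1 t (by simp only [Finset.mem_Icc]; omega)
      unfold sfun at h3
      rwa [if_pos (by omega)] at h3
    · intro t ht
      simp only [Finset.mem_Icc] at ht
      have h3 := h1 t (by simp only [Finset.mem_Icc]; omega)
      unfold sfun at h3
      rwa [if_neg (by omega)] at h3
  · rintro ⟨h1, h2, h3, h4⟩
    constructor
    · intro t ht
      simp only [Finset.mem_Icc] at ht
      unfold sfun
      by_cases hc : t ≤ k
      · rw [if_pos hc]
        exact h1 t (by simp only [Finset.mem_Icc]; omega)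
      · rw [if_neg hc]
        exact h4 t (by simp only [Finset.mem_Icc]; omega)
    · intro hcon
      have h5 := hcon (k + 1) (by simp only [Finset.mem_Icc]; omega)
      unfold sfun at h5
      rw [if_pos (le_refl _)] at h5
      omega

/-- values of a difference-set member avoid `k` and split into `< k` and `≥ k+1` -/
lemma diff_no_k {m n k : ℕ} (w : Fin m → Fin n) (h2 : cnt w k = k) (h3 : cnt w (k + 1) = k) :
    ∀ j, ¬ ((w j : ℕ) < k) → k + 1 ≤ (w j : ℕ) := by
  classical
  have hsub : (Finset.univ.filter (fun j => (w j : ℕ) < k))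
      ⊆ (Finset.univ.filter (fun j => (w j : ℕ) < k + 1)) := by
    intro j hj
    simp only [Finset.mem_filter, Finset.mem_univ, true_and] at hj ⊢
    omega
  have hcardle : (Finset.univ.filter (fun j => (w j : ℕ) < k + 1)).card
      ≤ (Finset.univ.filter (fun j => (w j : ℕ) < k)).card := by
    unfold cnt at h2 h3
    omega
  have heq := Finset.eq_of_subset_of_card_le hsub hcardle
  intro j hj
  rcases Nat.lt_or_ge (w j : ℕ) (k + 1) with hc | hc
  · exfalso
    have : j ∈ Finset.univ.filter (fun j => (w j : ℕ) < k + 1) := by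
      simp only [Finset.mem_filter, Finset.mem_univ, true_and]
      exact hc
    rw [← heq] at this
    simp only [Finset.mem_filter, Finset.mem_univ, true_and] at this
    omega
  · exact hc


/-- extraction of the subsequence indexed by `B`, with values shifted down by `c`
(values clamped into `Fin R`; the clamp is vacuous in actual use) -/
noncomputable def part {m n M R : ℕ} (c : ℕ) (hR : 1 ≤ R) (w : Fin m → Fin n)
    (B : Finset (Fin m)) (hB : B.card = M) : Fin M → Fin R :=
  fun y => ⟨min ((w ((B.orderIsoOfFin hB y : {z // z ∈ B}) : Fin m) : ℕ) - c) (R - 1),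
    lt_of_le_of_lt (Nat.min_le_right _ _) (by omega)⟩

lemma cnt_part {m n M R : ℕ} (c : ℕ) (hR : 1 ≤ R) (w : Fin m → Fin n)
    (B : Finset (Fin m)) (hB : B.card = M) (s : ℕ)
    (hval : ∀ j ∈ B, (w j : ℕ) - c ≤ R - 1) :
    cnt (part c hR w B hB) s = (B.filter (fun j => (w j : ℕ) - c < s)).card := by
  classical
  unfold cnt part
  rw [← card_filter_orderIso B hB (fun j => (w j : ℕ) - c < s)]
  congr 1
  apply Finset.filter_congr
  intro x _
  simp only
  rw [min_eq_left (hval _ (B.orderIsoOfFin hB x).2)]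

/-- reconstruction of a sequence from the two parts -/
noncomputable def recon {m n k M : ℕ} (hkn : k < n) (A : Finset (Fin m)) (hA : A.card = k)
    (hAc : Aᶜ.card = M) (f : Fin k → Fin k) (g : Fin M → Fin (n - k - 1)) : Fin m → Fin n :=
  fun j =>
    if h : j ∈ A
    then ⟨(f ((A.orderIsoOfFin hA).symm ⟨j, h⟩) : ℕ), by
      have := (f ((A.orderIsoOfFin hA).symm ⟨j, h⟩)).isLt
      omega⟩
    else ⟨(g ((Aᶜ.orderIsoOfFin hAc).symm ⟨j, Finset.mem_compl.mpr h⟩) : ℕ) + k + 1, by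
      have := (g ((Aᶜ.orderIsoOfFin hAc).symm ⟨j, Finset.mem_compl.mpr h⟩)).isLt
      omega⟩

lemma recon_lt {m n k M : ℕ} (hkn : k < n) (A : Finset (Fin m)) (hA : A.card = k)
    (hAc : Aᶜ.card = M) (f : Fin k → Fin k) (g : Fin M → Fin (n - k - 1))
    {j : Fin m} (h : j ∈ A) : (recon hkn A hA hAc f g j : ℕ) < k := by
  unfold recon
  rw [dif_pos h]
  exact (f ((A.orderIsoOfFin hA).symm ⟨j, h⟩)).isLt

lemma recon_ge {m n k M : ℕ} (hkn : k < n) (A : Finset (Fin m)) (hA : A.card = k)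
    (hAc : Aᶜ.card = M) (f : Fin k → Fin k) (g : Fin M → Fin (n - k - 1))
    {j : Fin m} (h : j ∉ A) : k + 1 ≤ (recon hkn A hA hAc f g j : ℕ) := by
  unfold recon
  rw [dif_neg h]
  show k + 1 ≤ (g ((Aᶜ.orderIsoOfFin hAc).symm ⟨j, Finset.mem_compl.mpr h⟩) : ℕ) + k + 1
  omega

lemma recon_mem {m n k M : ℕ} (hkn : k < n) (A : Finset (Fin m)) (hA : A.card = k)
    (hAc : Aᶜ.card = M) (f : Fin k → Fin k) (g : Fin M → Fin (n - k - 1)) (x : Fin k) :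
    (recon hkn A hA hAc f g ((A.orderIsoOfFin hA x : {y // y ∈ A}) : Fin m) : ℕ) = f x := by
  unfold recon
  rw [dif_pos (A.orderIsoOfFin hA x).2]
  show (f ((A.orderIsoOfFin hA).symm ⟨_, _⟩) : ℕ) = f x
  rw [Subtype.coe_eta, OrderIso.symm_apply_apply]

lemma recon_not_mem {m n k M : ℕ} (hkn : k < n) (A : Finset (Fin m)) (hA : A.card = k)
    (hAc : Aᶜ.card = M) (f : Fin k → Fin k) (g : Fin M → Fin (n - k - 1)) (y : Fin M) :
    (recon hkn A hA hAc f g ((Aᶜ.orderIsoOfFin hAc y : {z // z ∈ Aᶜ}) : Fin m) : ℕ)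
      = (g y : ℕ) + k + 1 := by
  unfold recon
  have hmem : ((Aᶜ.orderIsoOfFin hAc y : {z // z ∈ Aᶜ}) : Fin m) ∉ A :=
    Finset.mem_compl.mp (Aᶜ.orderIsoOfFin hAc y).2
  rw [dif_neg hmem]
  show (g ((Aᶜ.orderIsoOfFin hAc).symm ⟨_, _⟩) : ℕ) + k + 1 = (g y : ℕ) + k + 1
  rw [Subtype.coe_eta, OrderIso.symm_apply_apply]


lemma part_val {m n M R : ℕ} (c : ℕ) (hR : 1 ≤ R) (w : Fin m → Fin n)
    (B : Finset (Fin m)) (hB : B.card = M) (y : Fin M) :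
    (part c hR w B hB y : ℕ)
      = min ((w ((B.orderIsoOfFin hB y : {z // z ∈ B}) : Fin m) : ℕ) - c) (R - 1) := rfl

lemma split_card {m ℓ k : ℕ} (hk1 : 1 ≤ k) (hkm : k < m) (hl : 1 ≤ ℓ) :
    ((Cset m (m + ℓ) (sfun ℓ k)) \ (Cset m (m + ℓ) (sfun ℓ (k + 1)))).card
      = m.choose k * (Cset k k (fun t => t + 1 - 1)).card
        * (Cset (m - k) (m + ℓ - k - 1) (fun t => t + ℓ - 1)).card := by
  classical
  have hR1 : 1 ≤ m + ℓ - k - 1 := by omega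
  have hkn : k < m + ℓ := by omega
  rw [show m.choose k * (Cset k k (fun t => t + 1 - 1)).card
        * (Cset (m - k) (m + ℓ - k - 1) (fun t => t + ℓ - 1)).card
      = (((Finset.univ : Finset (Fin m)).powersetCard k)
          ×ˢ ((Cset k k (fun t => t + 1 - 1))
            ×ˢ (Cset (m - k) (m + ℓ - k - 1) (fun t => t + ℓ - 1)))).card by
    rw [Finset.card_product, Finset.card_product, Finset.card_powersetCard, Finset.card_univ]
    simp only [Fintype.card_fin]
    ring]
  have hAcard : ∀ w : Fin m → Fin (m + ℓ),
      w ∈ Cset m (m + ℓ) (sfun ℓ k) \ Cset m (m + ℓ) (sfun ℓ (k + 1)) →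
      (Finset.univ.filter (fun j => (w j : ℕ) < k)).card = k := by
    intro w hw
    exact ((mem_diff_char hk1 hkm w).mp hw).2.1
  have hAccard : ∀ w (hw : w ∈ Cset m (m + ℓ) (sfun ℓ k) \ Cset m (m + ℓ) (sfun ℓ (k + 1))),
      ((Finset.univ.filter (fun j => (w j : ℕ) < k))ᶜ).card = m - k := by
    intro w hw
    rw [Finset.card_compl, hAcard w hw, Fintype.card_fin]
  apply Finset.card_bij (fun w hw =>
    (Finset.univ.filter (fun j => (w j : ℕ) < k),
     (part 0 hk1 w _ (hAcard w hw),
      part (k + 1) hR1 w _ (hAccard w hw))))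
  · -- maps into the product
    intro w hw
    obtain ⟨h1, h2, h3, h4⟩ := (mem_diff_char hk1 hkm w).mp hw
    have hge := diff_no_k w h2 h3
    simp only [Finset.mem_product]
    refine ⟨Finset.mem_powersetCard_univ.mpr (hAcard w hw), ?_, ?_⟩
    · rw [mem_Cset]
      intro t ht
      simp only [Finset.mem_Icc] at ht
      rw [Nat.add_sub_cancel]
      rw [cnt_part 0 hk1 w _ (hAcard w hw) t (by
        intro j hj
        simp only [Finset.mem_filter, Finset.mem_univ, true_and] at hj
        omega)]
      have hfe : (Finset.univ.filter (fun j => (w j : ℕ) < k)).filter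
          (fun j => (w j : ℕ) - 0 < t) = Finset.univ.filter (fun j => (w j : ℕ) < t) := by
        ext j
        simp only [Finset.mem_filter, Finset.mem_univ, true_and]
        omega
      rw [hfe]
      exact h1 t (by simp only [Finset.mem_Icc]; omega)
    · rw [mem_Cset]
      intro t ht
      simp only [Finset.mem_Icc] at ht
      rw [cnt_part (k + 1) hR1 w _ (hAccard w hw) (t + ℓ - 1) (by
        intro j hj
        have := (w j).isLt
        omega)]
      have hfe : ((Finset.univ.filter (fun j => (w j : ℕ) < k))ᶜ).filter
          (fun j => (w j : ℕ) - (k + 1) < t + ℓ - 1)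
          = ((Finset.univ.filter (fun j => (w j : ℕ) < k))ᶜ).filter
            (fun j => (w j : ℕ) < t + k + ℓ) := by
        apply Finset.filter_congr
        intro j hj
        simp only [Finset.mem_compl, Finset.mem_filter, Finset.mem_univ, true_and] at hj
        have := hge j hj
        omega
      rw [hfe]
      have hsplit := cnt_split w (Finset.univ.filter (fun j => (w j : ℕ) < k)) (t + k + ℓ)
      have hAfull : (Finset.univ.filter (fun j => (w j : ℕ) < k)).filter
          (fun j => (w j : ℕ) < t + k + ℓ) = Finset.univ.filter (fun j => (w j : ℕ) < k) := by
        apply Finset.filter_true_of_mem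
        intro j hj
        simp only [Finset.mem_filter, Finset.mem_univ, true_and] at hj
        omega
      rw [hAfull, hAcard w hw] at hsplit
      have h5 := h4 (t + k) (by simp only [Finset.mem_Icc]; omega)
      have harith : t + k + ℓ = t + k + ℓ := rfl
      omega
  · -- injective
    intro w hw w' hw' heq
    have c1 := congrArg Prod.fst heq
    have c2 := congrArg (fun z => z.2.1) heq
    have c3 := congrArg (fun z => z.2.2) heq
    simp only at c1 c2 c3
    obtain ⟨h1, h2, h3, h4⟩ := (mem_diff_char hk1 hkm w).mp hw
    obtain ⟨h1', h2', h3', h4'⟩ := (mem_diff_char hk1 hkm w').mp hw'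
    have hge := diff_no_k w h2 h3
    have hge' := diff_no_k w' h2' h3'
    funext j
    by_cases hj : (w j : ℕ) < k
    · have hjA : j ∈ Finset.univ.filter (fun j => (w j : ℕ) < k) := by
        simp only [Finset.mem_filter, Finset.mem_univ, true_and]; exact hj
      have hjA' : j ∈ Finset.univ.filter (fun j => (w' j : ℕ) < k) := c1 ▸ hjA
      have hj' : (w' j : ℕ) < k := by
        simpa only [Finset.mem_filter, Finset.mem_univ, true_and] using hjA'
      set x := ((Finset.univ.filter (fun j => (w j : ℕ) < k)).orderIsoOfFin
        (hAcard w hw)).symm ⟨j, hjA⟩ with hx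
      have hcoe : (((Finset.univ.filter (fun j => (w j : ℕ) < k)).orderIsoOfFin
          (hAcard w hw) x : _) : Fin m) = j := by
        rw [hx, OrderIso.apply_symm_apply]
      have hcoe' : (((Finset.univ.filter (fun j => (w' j : ℕ) < k)).orderIsoOfFin
          (hAcard w' hw') x : _) : Fin m) = j := by
        rw [← orderIsoOfFin_congr c1 (hAcard w hw) (hAcard w' hw') x]
        exact hcoe
      have hv := congrArg Fin.val (congrFun c2 x)
      rw [part_val, part_val, hcoe, hcoe'] at hv
      rw [min_eq_left (by omega), min_eq_left (by omega)] at hv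
      exact Fin.ext (by omega)
    · have hjA : j ∈ (Finset.univ.filter (fun j => (w j : ℕ) < k))ᶜ := by
        simp only [Finset.mem_compl, Finset.mem_filter, Finset.mem_univ, true_and]
        exact hj
      have hjA' : j ∈ (Finset.univ.filter (fun j => (w' j : ℕ) < k))ᶜ := by
        rw [← c1]; exact hjA
      have hj' : ¬ ((w' j : ℕ) < k) := by
        simpa only [Finset.mem_compl, Finset.mem_filter, Finset.mem_univ, true_and] using hjA'
      have hgej := hge j hj
      have hgej' := hge' j hj'
      set x := (((Finset.univ.filter (fun j => (w j : ℕ) < k))ᶜ).orderIsoOfFin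
        (hAccard w hw)).symm ⟨j, hjA⟩ with hx
      have hcoe : ((((Finset.univ.filter (fun j => (w j : ℕ) < k))ᶜ).orderIsoOfFin
          (hAccard w hw) x : _) : Fin m) = j := by
        rw [hx, OrderIso.apply_symm_apply]
      have hcoe' : ((((Finset.univ.filter (fun j => (w' j : ℕ) < k))ᶜ).orderIsoOfFin
          (hAccard w' hw') x : _) : Fin m) = j := by
        rw [← orderIsoOfFin_congr (by rw [c1]) (hAccard w hw) (hAccard w' hw') x]
        exact hcoe
      have hv := congrArg Fin.val (congrFun c3 x)
      rw [part_val, part_val, hcoe, hcoe'] at hv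
      have hb1 := (w j).isLt
      have hb2 := (w' j).isLt
      rw [min_eq_left (by omega), min_eq_left (by omega)] at hv
      exact Fin.ext (by omega)
  · -- surjective
    rintro ⟨A, f, g⟩ hb
    simp only [Finset.mem_product] at hb
    obtain ⟨hbA, hbf, hbg⟩ := hb
    have hAk : A.card = k := Finset.mem_powersetCard_univ.mp hbA
    have hAck : Aᶜ.card = m - k := by
      rw [Finset.card_compl, hAk, Fintype.card_fin]
    set w0 := recon hkn A hAk hAck f g with hw0def
    have hw0A : ∀ j ∈ A, (w0 j : ℕ) < k := fun j hj => recon_lt hkn A hAk hAck f g hj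
    have hw0Ac : ∀ j, j ∉ A → k + 1 ≤ (w0 j : ℕ) := fun j hj => recon_ge hkn A hAk hAck f g hj
    have hA0 : Finset.univ.filter (fun j => (w0 j : ℕ) < k) = A := by
      ext j
      simp only [Finset.mem_filter, Finset.mem_univ, true_and]
      constructor
      · intro h
        by_contra hjn
        have := hw0Ac j hjn
        omega
      · intro h
        exact hw0A j h
    have hcnt_low : ∀ s, s ≤ k + 1 → cnt w0 s = cnt f s := by
      intro s hs
      rw [cnt_split w0 A s]
      have hc0 : Aᶜ.filter (fun j => (w0 j : ℕ) < s) = ∅ := by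
        rw [Finset.filter_eq_empty_iff]
        intro j hj
        have := hw0Ac j (Finset.mem_compl.mp hj)
        omega
      rw [hc0, Finset.card_empty]
      have hAf : (A.filter (fun j => (w0 j : ℕ) < s)).card = cnt f s := by
        rw [← card_filter_orderIso A hAk (fun j => (w0 j : ℕ) < s)]
        unfold cnt
        apply congrArg
        apply Finset.filter_congr
        intro x _
        rw [hw0def, recon_mem hkn A hAk hAck f g x]
      omega
    have hcnt_f_k : cnt f k = k := cnt_of_lt f (fun x => (f x).isLt)
    have hw0D : w0 ∈ Cset m (m + ℓ) (sfun ℓ k) \ Cset m (m + ℓ) (sfun ℓ (k + 1)) := by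
      rw [mem_diff_char hk1 hkm w0]
      refine ⟨?_, ?_, ?_, ?_⟩
      · intro t ht
        simp only [Finset.mem_Icc] at ht
        rw [hcnt_low t (by omega)]
        have h6 := (mem_Cset.mp hbf) t (by simp only [Finset.mem_Icc]; omega)
        rwa [Nat.add_sub_cancel] at h6
      · rw [hcnt_low k (by omega), hcnt_f_k]
      · rw [hcnt_low (k + 1) (by omega)]
        exact cnt_of_lt f (fun x => by have := (f x).isLt; omega)
      · intro t ht
        simp only [Finset.mem_Icc] at ht
        rw [cnt_split w0 A (t + ℓ)]
        have hAf : A.filter (fun j => (w0 j : ℕ) < t + ℓ) = A := by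
          apply Finset.filter_true_of_mem
          intro j hj
          have := hw0A j hj
          omega
        rw [hAf, hAk]
        have hcg : (Aᶜ.filter (fun j => (w0 j : ℕ) < t + ℓ)).card = cnt g (t - k + ℓ - 1) := by
          rw [← card_filter_orderIso Aᶜ hAck (fun j => (w0 j : ℕ) < t + ℓ)]
          unfold cnt
          apply congrArg
          apply Finset.filter_congr
          intro y _
          rw [hw0def, recon_not_mem hkn A hAk hAck f g y]
          omega
        rw [hcg]
        have h7 := (mem_Cset.mp hbg) (t - k) (by simp only [Finset.mem_Icc]; omega)
        have harith : t - k + ℓ - 1 = t - k + ℓ - 1 := rfl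
        omega
    refine ⟨w0, hw0D, ?_⟩
    have e2 : part 0 hk1 w0 _ (hAcard w0 hw0D) = f := by
      funext x
      apply Fin.ext
      rw [part_val]
      rw [orderIsoOfFin_congr hA0 (hAcard w0 hw0D) hAk x]
      rw [hw0def, recon_mem hkn A hAk hAck f g x]
      have := (f x).isLt
      rw [Nat.sub_zero, min_eq_left (by omega)]
    have e3 : part (k + 1) hR1 w0 _ (hAccard w0 hw0D) = g := by
      funext y
      apply Fin.ext
      rw [part_val]
      rw [orderIsoOfFin_congr (by rw [hA0]) (hAccard w0 hw0D) hAck y]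
      rw [hw0def, recon_not_mem hkn A hAk hAck f g y]
      have := (g y).isLt
      have harith : (g y : ℕ) + k + 1 - (k + 1) = (g y : ℕ) := by omega
      rw [harith, min_eq_left (by omega)]
    rw [Prod.mk.injEq, Prod.mk.injEq]
    exact ⟨hA0, e2, e3⟩


lemma cset_congr {M N : ℕ} {f f' : ℕ → ℕ} (h : ∀ t ∈ Finset.Icc 1 M, f t = f' t) :
    Cset M N f = Cset M N f' := by
  ext w
  rw [mem_Cset, mem_Cset]
  constructor
  · intro hc t ht
    rw [← h t ht]
    exact hc t ht
  · intro hc t ht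
    rw [h t ht]
    exact hc t ht

lemma telescope (ℓ : ℕ) (hl : 1 ≤ ℓ) (d : ℕ) : ∀ (m i : ℕ), 1 ≤ i → i + d = m →
    (Cset m (m + ℓ) (sfun ℓ i)).card
      = (Cset m (m + ℓ) (sfun ℓ m)).card
        + ∑ k ∈ Finset.Ico i m, m.choose k * (Cset k k (fun t => t + 1 - 1)).card
          * (Cset (m - k) (m + ℓ - k - 1) (fun t => t + ℓ - 1)).card := by
  induction d with
  | zero =>
    intro m i h1 h2
    have : i = m := by omega
    subst this
    rw [Finset.Ico_self, Finset.sum_empty]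
    omega
  | succ d ih =>
    intro m i h1 h2
    have hkm : i < m := by omega
    have hsub : Cset m (m + ℓ) (sfun ℓ (i + 1)) ⊆ Cset m (m + ℓ) (sfun ℓ i) := chain_subset
    have hcd := Finset.card_sdiff_add_card_eq_card hsub
    have hsc := split_card h1 hkm hl
    have hIH := ih m (i + 1) (by omega) (by omega)
    rw [Finset.sum_eq_sum_Ico_succ_bot hkm]
    omega

/-- the full count, in natural numbers -/
lemma count_formula (m ℓ i : ℕ) (hl : 1 ≤ ℓ) (hi : 1 ≤ i) (him : i ≤ m) :
    (Cset m (m + ℓ) (sfun ℓ i)).card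
      = (m + 1) ^ (m - 1)
        + ∑ k ∈ Finset.Ico i m,
            m.choose k * ((k + 1) ^ (k - 1) * (ℓ * (m - k + ℓ) ^ (m - k - 1))) := by
  have htel := telescope ℓ hl (m - i) m i hi (by omega)
  have hm1 : 1 ≤ m := le_trans hi him
  -- top term
  have htop : (Cset m (m + ℓ) (sfun ℓ m)).card = (m + 1) ^ (m - 1) := by
    have he : Cset m (m + ℓ) (sfun ℓ m) = Cset m (m + ℓ) (fun t => t + 1 - 1) := by
      apply cset_congr
      intro t ht
      simp only [Finset.mem_Icc] at ht
      unfold sfun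
      rw [if_pos (by omega)]
      omega
    rw [he]
    have hres := cset_card_resize (fun t => t + 1 - 1) hm1
      (show m + 1 - 1 ≤ m + 1 by omega) (show m + 1 ≤ m + ℓ by omega)
    rw [← hres, pollak m 1 (le_refl 1) hm1]
    ring
  -- summand terms
  have hterm : ∀ k ∈ Finset.Ico i m,
      m.choose k * (Cset k k (fun t => t + 1 - 1)).card
        * (Cset (m - k) (m + ℓ - k - 1) (fun t => t + ℓ - 1)).card
      = m.choose k * ((k + 1) ^ (k - 1) * (ℓ * (m - k + ℓ) ^ (m - k - 1))) := by
    intro k hk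
    simp only [Finset.mem_Ico] at hk
    have hk1 : 1 ≤ k := le_trans hi hk.1
    have hL : (Cset k k (fun t => t + 1 - 1)).card = (k + 1) ^ (k - 1) := by
      have hres := cset_card_resize (fun t => t + 1 - 1) hk1
        (show k + 1 - 1 ≤ k by omega) (show k ≤ k + 1 by omega)
      rw [hres, pollak k 1 (le_refl 1) hk1]
      ring
    have hRc : (Cset (m - k) (m + ℓ - k - 1) (fun t => t + ℓ - 1)).card
        = ℓ * (m - k + ℓ) ^ (m - k - 1) := by
      have hMk : 1 ≤ m - k := by omega
      have hres := cset_card_resize (fun t => t + ℓ - 1) hMk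
        (show m - k + ℓ - 1 ≤ m + ℓ - k - 1 by omega)
        (show m + ℓ - k - 1 ≤ m - k + ℓ by omega)
      rw [hres, pollak (m - k) ℓ hl hMk]
    rw [hL, hRc]
    ring
  rw [htel, htop, Finset.sum_congr rfl hterm]

lemma image_block (ℓ i : ℕ) :
    Finset.univ.image (fun j : Fin ℓ => i + 1 + (j : ℕ)) = Finset.Icc (i + 1) (i + ℓ) := by
  ext x
  simp only [Finset.mem_image, Finset.mem_univ, true_and, Finset.mem_Icc]
  constructor
  · rintro ⟨j, rfl⟩
    have := j.isLt
    omega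
  · intro hx
    refine ⟨⟨x - i - 1, by omega⟩, ?_⟩
    show i + 1 + (x - i - 1) = x
    omega

lemma pc_cond_iff (ℓ n i : ℕ) (hl : 1 ≤ ℓ) (hi : 1 ≤ i) (hin : i + ℓ ≤ n)
    (w : Fin (n - ℓ) → Fin n) :
    (∀ s, (n - ℓ) - cnt w s ≤
        ((Finset.Icc 1 n \ Finset.Icc (i + 1) (i + ℓ)).filter (fun x => s < x)).card)
      ↔ ∀ t ∈ Finset.Icc 1 (n - ℓ), t ≤ cnt w (sfun ℓ i t) := by
  have hfc : ∀ s, ((Finset.Icc 1 n \ Finset.Icc (i + 1) (i + ℓ)).filter (fun x => s < x)).card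
      = n + 1 - (s + 1) - (min (i + ℓ) n + 1 - max (s + 1) (i + 1)) := by
    intro s
    have hset : (Finset.Icc 1 n \ Finset.Icc (i + 1) (i + ℓ)).filter (fun x => s < x)
        = Finset.Icc (s + 1) n \ Finset.Icc (i + 1) (i + ℓ) := by
      ext x
      simp only [Finset.mem_filter, Finset.mem_sdiff, Finset.mem_Icc]
      omega
    rw [hset]
    have hinter := Finset.card_inter_add_card_sdiff (Finset.Icc (s + 1) n)
      (Finset.Icc (i + 1) (i + ℓ))
    have hii : Finset.Icc (s + 1) n ∩ Finset.Icc (i + 1) (i + ℓ)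
        = Finset.Icc (max (s + 1) (i + 1)) (min n (i + ℓ)) := by
      ext x
      simp only [Finset.mem_inter, Finset.mem_Icc]
      omega
    rw [hii, Nat.card_Icc, Nat.card_Icc] at hinter
    omega
  constructor
  · intro h t ht
    simp only [Finset.mem_Icc] at ht
    unfold sfun
    by_cases hc : t ≤ i
    · rw [if_pos hc]
      have hs := h t
      rw [hfc t] at hs
      have := cnt_le w t
      omega
    · rw [if_neg hc]
      have hs := h (t + ℓ)
      rw [hfc (t + ℓ)] at hs
      have := cnt_le w (t + ℓ)
      omega
  · intro h s
    rw [hfc s]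
    rcases Nat.lt_or_ge n s with hc | hc
    · have : cnt w s = n - ℓ := cnt_of_lt w (fun j => by have := (w j).isLt; omega)
      omega
    · rcases le_or_gt s i with hc2 | hc2
      · rcases Nat.eq_zero_or_pos s with rfl | hs1
        · omega
        · have ht := h s (by simp only [Finset.mem_Icc]; omega)
          unfold sfun at ht
          rw [if_pos hc2] at ht
          omega
      · rcases le_or_gt s (i + ℓ) with hc3 | hc3
        · have ht := h i (by simp only [Finset.mem_Icc]; omega)
          unfold sfun at ht
          rw [if_pos (le_refl i)] at ht
          have hmono := cnt_mono w (show i ≤ s by omega)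
          omega
        · have ht := h (s - ℓ) (by simp only [Finset.mem_Icc]; omega)
          unfold sfun at ht
          rw [if_neg (by omega)] at ht
          have harg : s - ℓ + ℓ = s := by omega
          rw [harg] at ht
          omega


end PCaux

lemma pc_eq_cset (ℓ n i : ℕ) (hl : 1 ≤ ℓ) (hi : 1 ≤ i) (hin : i + ℓ ≤ n) :
    PC n (fun j : Fin ℓ => i + 1 + (j : ℕ)) = PCaux.Cset (n - ℓ) n (PCaux.sfun ℓ i) := by
  classical
  ext w
  unfold PC
  rw [Finset.mem_filter, PCaux.mem_Cset]
  simp only [Finset.mem_univ, true_and]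
  rw [PCaux.image_block ℓ i, PCaux.park_ofFn_iff n (Finset.Icc (i + 1) (i + ℓ)) w]
  exact PCaux.pc_cond_iff ℓ n i hl hi hin w

/-- The number of parking completions of the contiguous block `(i+1, …, i+ℓ)` in `[n]`:
`|PC_n((i+1,…,i+ℓ))| = Σ_{k=i}^{n-ℓ} C(n-ℓ, k) (k+1)^(k-1) ℓ (n-k)^(n-k-ℓ-1)`
(the last exponent, which can equal `-1`, is interpreted as an integer power of the
positive real `n - k`). -/
theorem card_parkingCompletions_block (ℓ n i : ℕ) (hℓ : 1 ≤ ℓ) (hn : 1 ≤ n)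
    (hi : 1 ≤ i) (hin : i ≤ n - ℓ) :
    ((PC n (fun j : Fin ℓ => i + 1 + (j : ℕ))).card : ℝ) =
      ∑ k ∈ Finset.Icc i (n - ℓ),
        (Nat.choose (n - ℓ) k : ℝ) * ((k : ℝ) + 1) ^ (k - 1) * ℓ
          * ((n : ℝ) - k) ^ ((n : ℤ) - k - ℓ - 1) := by

  have hℓn : i + ℓ ≤ n := by omega
  set m := n - ℓ with hm
  have hmn : m + ℓ = n := by omega
  have hcount := PCaux.count_formula m ℓ i hℓ hi hin
  rw [hmn] at hcount
  rw [pc_eq_cset ℓ n i hℓ hi hℓn, hcount]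
  rw [show Finset.Icc i m = Finset.Ico i (m + 1) from (Finset.Ico_add_one_right_eq_Icc i m).symm]
  rw [Finset.sum_Ico_succ_top (by omega : i ≤ m)]
  have hlast : (Nat.choose m m : ℝ) * ((m : ℝ) + 1) ^ (m - 1) * (ℓ : ℝ)
      * ((n : ℝ) - (m : ℝ)) ^ ((n : ℤ) - m - ℓ - 1) = (((m + 1) ^ (m - 1) : ℕ) : ℝ) := by
    have h1 : ((n : ℝ) - m) = (ℓ : ℝ) := by
      have h3 : (m : ℝ) + ℓ = n := by exact_mod_cast congrArg (Nat.cast : ℕ → ℝ) hmn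
      linarith
    have h2 : (n : ℤ) - m - ℓ - 1 = -1 := by omega
    rw [h1, h2, Nat.choose_self, zpow_neg_one]
    have hl0 : (ℓ : ℝ) ≠ 0 := Nat.cast_ne_zero.mpr (by omega)
    push_cast
    field_simp
  have hterm : ∀ k ∈ Finset.Ico i m,
      (Nat.choose m k : ℝ) * ((k : ℝ) + 1) ^ (k - 1) * (ℓ : ℝ)
          * ((n : ℝ) - (k : ℝ)) ^ ((n : ℤ) - k - ℓ - 1)
        = ((m.choose k * ((k + 1) ^ (k - 1) * (ℓ * (m - k + ℓ) ^ (m - k - 1))) : ℕ) : ℝ) := by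
    intro k hk
    simp only [Finset.mem_Ico] at hk
    have h1 : (n : ℤ) - k - ℓ - 1 = ((m - k - 1 : ℕ) : ℤ) := by omega
    rw [h1, zpow_natCast]
    have h2 : ((n : ℝ) - k) = ((m - k + ℓ : ℕ) : ℝ) := by
      have h3 : (m - k + ℓ : ℕ) = n - k := by omega
      rw [h3, Nat.cast_sub (by omega : k ≤ n)]
    rw [h2]
    push_cast
    ring
  rw [Finset.sum_congr rfl hterm, hlast]
  push_cast
  ring
end

section
/- For all m ≥ 1, n ≥ 0, and positive reals x_1,…,x_m, Abel's multinomial sum with all parameters p_i = −1 evaluates as A_n(x_1,…,x_m; −1,…,−1) = (x_1 + … + x_m)(x_1 + … + x_m + n)^(n−1) / (x_1 x_2 ⋯ x_m). -/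
open Finset

/-- Abel's multinomial sum
`A_n(x_1,…,x_m; p_1,…,p_m) = Σ_{s_1+⋯+s_m=n} multinomial(n; s) ∏_j (s_j + x_j)^(s_j + p_j)`,
the sum running over `m`-tuples of nonnegative integers summing to `n`, with integer
exponents interpreted as integer powers of positive reals. -/
noncomputable def abelSum (m n : ℕ) (x : Fin m → ℝ) (p : Fin m → ℤ) : ℝ :=
  ∑ s ∈ Finset.Nat.antidiagonalTuple m n,
    (Nat.multinomial Finset.univ s : ℝ) * ∏ j, ((s j : ℝ) + x j) ^ ((s j : ℤ) + p j)

noncomputable def S2 (n : ℕ) (p q : ℤ) (x y : ℝ) : ℝ :=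
  ∑ k ∈ range (n+1), (n.choose k : ℝ) * (x + k) ^ ((k : ℤ) + p) * (y + (n - k : ℕ)) ^ (((n - k : ℕ) : ℤ) + q)

lemma S2_symm (n : ℕ) (p q : ℤ) (x y : ℝ) : S2 n p q x y = S2 n q p y x := by
  rw [S2, S2, ← Finset.sum_range_reflect]
  refine Finset.sum_congr rfl fun k hk => ?_
  rw [Finset.mem_range] at hk
  have hk' : k ≤ n := Nat.lt_succ_iff.mp hk
  rw [Nat.add_sub_cancel, Nat.sub_sub_self hk', Nat.choose_symm hk']
  ring

lemma S2_split (n : ℕ) (x y : ℝ) (hx : 0 < x) (hy : 0 < y) :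
    S2 n (-1) 0 x y + S2 n 0 (-1) x y = (x + y + n) * S2 n (-1) (-1) x y := by
  rw [S2, S2, S2, Finset.mul_sum, ← Finset.sum_add_distrib]
  refine Finset.sum_congr rfl fun k hk => ?_
  rw [Finset.mem_range] at hk
  have hk' : k ≤ n := Nat.lt_succ_iff.mp hk
  have hxk : (0:ℝ) < x + k := by positivity
  have hyj : (0:ℝ) < y + (n - k : ℕ) := by positivity
  have hcast : ((n - k : ℕ) : ℝ) = (n : ℝ) - k := by
    push_cast [hk']; ring
  have e1 : (x + k) ^ ((k:ℤ) + 0) = (x + k) ^ ((k:ℤ) + -1) * (x + k) := by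
    rw [← zpow_add_one₀ hxk.ne']; ring_nf
  have e2 : (y + (n - k : ℕ)) ^ (((n - k : ℕ):ℤ) + 0) =
      (y + (n - k : ℕ)) ^ (((n - k : ℕ):ℤ) + -1) * (y + (n - k : ℕ)) := by
    rw [← zpow_add_one₀ hyj.ne']; ring_nf
  rw [e1, e2]
  have : x + y + (n:ℝ) = (y + (n - k : ℕ)) + (x + k) := by rw [hcast]; ring
  rw [this]; ring

lemma S2_rec (n : ℕ) (x y : ℝ) (hx : 0 < x) (hy : 0 < y) :
    S2 (n+1) (-1) 0 x y = y * S2 (n+1) (-1) (-1) x y + (n+1) * S2 n (-1) 0 x (y+1) := by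
  have hg : S2 (n+1) (-1) 0 x y = y * S2 (n+1) (-1) (-1) x y +
      ∑ k ∈ range (n+2), ((n+1).choose k : ℝ) * (x + k) ^ ((k:ℤ) + -1) *
        (((n+1-k : ℕ):ℝ) * (y + (n+1-k : ℕ)) ^ (((n+1-k : ℕ):ℤ) + -1)) := by
    rw [S2, S2, Finset.mul_sum, ← Finset.sum_add_distrib]
    refine Finset.sum_congr rfl fun k hk => ?_
    have hyj : (0:ℝ) < y + (n+1-k : ℕ) := by positivity
    have e2 : (y + (n+1-k : ℕ)) ^ (((n+1-k : ℕ):ℤ) + 0) =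
        (y + (n+1-k : ℕ)) ^ (((n+1-k : ℕ):ℤ) + -1) * (y + (n+1-k : ℕ)) := by
      rw [← zpow_add_one₀ hyj.ne']; ring_nf
    rw [e2]; ring
  rw [hg, Finset.sum_range_succ]
  have hlast : ((n+1-(n+1) : ℕ):ℝ) = 0 := by simp
  rw [hlast]
  simp only [mul_zero, zero_mul, add_zero]
  congr 1
  rw [S2, Finset.mul_sum]
  refine Finset.sum_congr rfl fun k hk => ?_
  rw [Finset.mem_range] at hk
  have hk' : k ≤ n := Nat.lt_succ_iff.mp hk
  have h1 : n + 1 - k = (n - k) + 1 := by omega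
  have hch : ((n+1-k : ℕ):ℝ) * ((n+1).choose k : ℝ) = ((n:ℝ)+1) * (n.choose k : ℝ) := by
    have := Nat.choose_mul_succ_eq n k
    have : ((n.choose k * (n+1) : ℕ) : ℝ) = (((n+1).choose k * (n+1-k) : ℕ) : ℝ) := by
      exact_mod_cast congrArg (Nat.cast : ℕ → ℝ) this
    push_cast at this ⊢
    linarith
  have hyy : y + ((n+1-k:ℕ):ℝ) = (y + 1) + ((n-k:ℕ):ℝ) := by
    rw [h1]; push_cast; ring
  have hexp : ((n+1-k:ℕ):ℤ) + -1 = ((n-k:ℕ):ℤ) + 0 := by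
    rw [h1]; push_cast; ring
  have hrepl : ((n+1-k:ℕ):ℝ) = ((n-k:ℕ):ℝ) + 1 := by rw [h1]; push_cast; ring
  rw [h1] at hch
  push_cast at hch
  rw [hyy, hexp, hrepl]
  linear_combination ((x + (k:ℝ)) ^ ((k:ℤ) + (-1)) *
    ((y+1) + ((n-k:ℕ):ℝ)) ^ (((n-k:ℕ):ℤ) + 0)) * hch

lemma S2_D_eval (n : ℕ) : ∀ x y : ℝ, 0 < x → 0 < y →
    S2 n (-1) 0 x y = (x + y + n) ^ n / x := by
  induction n with
  | zero =>
    intro x y hx hy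
    simp only [S2, Nat.cast_zero, zero_add, Finset.sum_range_one]
    norm_num
  | succ n IH =>
    intro x y hx hy
    have hy1 : (0:ℝ) < y + 1 := by linarith
    have hx1 : (0:ℝ) < x + 1 := by linarith
    set T : ℝ := x + y + ((n:ℝ) + 1) with hTdef
    have hT : (0:ℝ) < T := by positivity
    have h1 := S2_rec n x y hx hy
    have h2 := S2_rec n y x hy hx
    have hIH1 : S2 n (-1) 0 x (y+1) = T ^ n / x := by
      rw [IH x (y+1) hx hy1]; congr 2; ring
    have hIH2 : S2 n (-1) 0 y (x+1) = T ^ n / y := by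
      rw [IH y (x+1) hy hx1]; congr 2; ring
    have h3 := S2_split (n+1) x y hx hy
    have hsy : S2 (n+1) 0 (-1) x y = S2 (n+1) (-1) 0 y x := S2_symm (n+1) 0 (-1) x y
    have hBsy : S2 (n+1) (-1) (-1) y x = S2 (n+1) (-1) (-1) x y :=
      (S2_symm (n+1) (-1) (-1) x y).symm
    set B := S2 (n+1) (-1) (-1) x y with hB
    rw [hBsy, hIH2] at h2
    rw [hIH1] at h1
    rw [hsy, h1, h2] at h3
    -- h3 : (y*B + (n+1)*(T^n/x)) + (x*B + (n+1)*(T^n/y)) = (x+y+(n+1:ℕ)) * B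
    have hcast : ((n:ℝ) + 1 + 1) = ((n+1 : ℕ) : ℝ) + 1 := by push_cast; ring
    have hT' : x + y + ((n+1:ℕ):ℝ) = T := by rw [hTdef]; push_cast; ring
    rw [hT'] at h3
    have hn1 : (0:ℝ) < (n:ℝ) + 1 := by positivity
    have hBval : B = T ^ n * (x + y) / (x * y) := by
      have h4 : ((n:ℝ)+1) * B = ((n:ℝ)+1) * (T ^ n * (x+y) / (x*y)) := by
        field_simp at h3 ⊢
        ring_nf at h3 ⊢
        apply mul_left_cancel₀ hn1.ne'
        linear_combination -h3 - (y*B*x)*hTdef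
      exact mul_left_cancel₀ hn1.ne' h4
    rw [h1, hBval, hT']
    rw [pow_succ]
    field_simp
    ring

lemma S2_B_eval (n : ℕ) (x y : ℝ) (hx : 0 < x) (hy : 0 < y) :
    S2 n (-1) (-1) x y = (x + y) * (x + y + n) ^ ((n:ℤ) - 1) / (x * y) := by
  have h3 := S2_split n x y hx hy
  rw [S2_symm n 0 (-1) x y, S2_D_eval n x y hx hy, S2_D_eval n y x hy hx] at h3
  have hT : (0:ℝ) < x + y + n := by positivity
  have hyx : y + x + (n:ℝ) = x + y + n := by ring
  rw [hyx] at h3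
  have hz : (x + y + (n:ℝ)) ^ ((n:ℤ) - 1) = (x + y + n) ^ n * (x + y + n)⁻¹ := by
    rw [zpow_sub_one₀ hT.ne', zpow_natCast]
  rw [hz]
  have := h3
  field_simp at this ⊢
  nlinarith [this, hT, mul_pos hx hy]

noncomputable def AG (n : ℕ) (X : ℝ) : ℝ := X * (X + n) ^ ((n:ℤ) - 1)

lemma AG_conv (n : ℕ) (a b : ℝ) (ha : 0 < a) (hb : 0 < b) :
    ∑ k ∈ range (n+1), (n.choose k : ℝ) * (AG k a * AG (n-k) b) = AG n (a+b) := by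
  have hB := S2_B_eval n a b ha hb
  have hab : (0:ℝ) < a * b := mul_pos ha hb
  have step : ∑ k ∈ range (n+1), (n.choose k : ℝ) * (AG k a * AG (n-k) b)
      = (a * b) * S2 n (-1) (-1) a b := by
    rw [S2, Finset.mul_sum]
    refine Finset.sum_congr rfl fun k hk => ?_
    unfold AG
    have e1 : ((k:ℤ)) - 1 = (k:ℤ) + (-1) := by ring
    have e2 : (((n-k:ℕ)):ℤ) - 1 = ((n-k:ℕ):ℤ) + (-1) := by ring
    rw [e1, e2]; ring
  rw [step, hB]
  unfold AG
  field_simp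

lemma multinomial_cons_cast (m k : ℕ) (t : Fin m → ℕ) :
    (Nat.multinomial Finset.univ (Fin.cons k t) : ℝ) =
      ((k + ∑ i, t i).choose k : ℝ) * (Nat.multinomial Finset.univ t : ℝ) := by
  have hs1 : ∑ i, (Fin.cons k t : Fin (m+1) → ℕ) i = k + ∑ i, t i := by
    rw [Fin.sum_univ_succ]; simp
  have hp1 : ∏ i, Nat.factorial ((Fin.cons k t : Fin (m+1) → ℕ) i)
      = Nat.factorial k * ∏ i, Nat.factorial (t i) := by
    rw [Fin.prod_univ_succ]; simp
  have spec1 := Nat.multinomial_spec (Finset.univ : Finset (Fin (m+1))) (Fin.cons k t)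
  have spec2 := Nat.multinomial_spec (Finset.univ : Finset (Fin m)) t
  rw [hp1, hs1] at spec1
  have hch := Nat.choose_mul_factorial_mul_factorial (Nat.le_add_right k (∑ i, t i))
  rw [Nat.add_sub_cancel_left] at hch
  have c1 : ((Nat.factorial k * ∏ i, Nat.factorial (t i)) : ℝ) *
      (Nat.multinomial Finset.univ (Fin.cons k t) : ℝ)
      = (Nat.factorial (k + ∑ i, t i) : ℝ) := by exact_mod_cast congrArg (Nat.cast : ℕ → ℝ) spec1
  have c2 : ((∏ i, Nat.factorial (t i)) : ℝ) * (Nat.multinomial Finset.univ t : ℝ)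
      = (Nat.factorial (∑ i, t i) : ℝ) := by exact_mod_cast congrArg (Nat.cast : ℕ → ℝ) spec2
  have c3 : ((k + ∑ i, t i).choose k : ℝ) * (Nat.factorial k : ℝ) *
      (Nat.factorial (∑ i, t i) : ℝ)
      = (Nat.factorial (k + ∑ i, t i) : ℝ) := by exact_mod_cast congrArg (Nat.cast : ℕ → ℝ) hch
  have hf : (0:ℝ) < (Nat.factorial k : ℝ) := by exact_mod_cast Nat.factorial_pos k
  have hpf : (0:ℝ) < ((∏ i, Nat.factorial (t i)) : ℝ) := by
    have : 0 < ∏ i, Nat.factorial (t i) := Finset.prod_pos fun i _ => Nat.factorial_pos _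
    exact_mod_cast this
  push_cast at c1
  have key : ((Nat.factorial k : ℝ) * ∏ i, ((t i).factorial : ℝ)) *
      (Nat.multinomial Finset.univ (Fin.cons k t) : ℝ) =
      ((Nat.factorial k : ℝ) * ∏ i, ((t i).factorial : ℝ)) *
      (((k + ∑ i, t i).choose k : ℝ) * (Nat.multinomial Finset.univ t : ℝ)) := by
    linear_combination c1 - (((k + ∑ i, t i).choose k : ℝ) * (Nat.factorial k : ℝ)) * c2 - c3
  exact mul_left_cancel₀ (by positivity) key

lemma sum_antidiagonalTuple_succ {M : Type*} [AddCommMonoid M] (m n : ℕ)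
    (f : (Fin (m+1) → ℕ) → M) :
    ∑ s ∈ Finset.Nat.antidiagonalTuple (m+1) n, f s =
      ∑ k ∈ range (n+1), ∑ t ∈ Finset.Nat.antidiagonalTuple m (n-k), f (Fin.cons k t) := by
  rw [← Finset.sum_sigma (range (n+1)) (fun k => Finset.Nat.antidiagonalTuple m (n-k))
        (fun p => f (Fin.cons p.1 p.2))]
  refine Finset.sum_nbij' (fun s => (⟨s 0, Fin.tail s⟩ : Σ _ : ℕ, (Fin m → ℕ)))
    (fun p => Fin.cons p.1 p.2) ?_ ?_ ?_ ?_ ?_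
  · intro s hs
    rw [Finset.Nat.mem_antidiagonalTuple] at hs
    have hsum : s 0 + ∑ i, Fin.tail s i = n := by
      rw [← hs, Fin.sum_univ_succ]; rfl
    refine Finset.mem_sigma.mpr ⟨Finset.mem_range.mpr ?_, ?_⟩
    · dsimp only; omega
    · dsimp only; rw [Finset.Nat.mem_antidiagonalTuple]; omega
  · intro p hp
    rw [Finset.mem_sigma, Finset.mem_range, Finset.Nat.mem_antidiagonalTuple] at hp
    rw [Finset.Nat.mem_antidiagonalTuple, Fin.sum_univ_succ]
    simp only [Fin.cons_zero, Fin.cons_succ]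
    omega
  · intro s _; exact Fin.cons_self_tail s
  · rintro ⟨k', t'⟩ _
    simp only [Fin.cons_zero, Fin.tail_cons]
  · intro s _; exact congrArg f (Fin.cons_self_tail s).symm

lemma AG_multi : ∀ m, 1 ≤ m → ∀ (n : ℕ) (x : Fin m → ℝ), (∀ i, 0 < x i) →
    (∑ s ∈ Finset.Nat.antidiagonalTuple m n,
      (Nat.multinomial Finset.univ s : ℝ) * ∏ j, AG (s j) (x j)) = AG n (∑ i, x i) := by
  intro m
  induction m with
  | zero => omega
  | succ m IH =>
    intro _ n x hx
    by_cases hm : m = 0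
    · subst hm
      rw [Finset.Nat.antidiagonalTuple_one, Finset.sum_singleton]
      simp [Fin.prod_univ_one, Fin.sum_univ_one]
    · have hm1 : 1 ≤ m := Nat.one_le_iff_ne_zero.mpr hm
      have hne : Nonempty (Fin m) := ⟨⟨0, hm1⟩⟩
      rw [sum_antidiagonalTuple_succ m n
        (fun s => (Nat.multinomial Finset.univ s : ℝ) * ∏ j, AG (s j) (x j))]
      have hX' : 0 < ∑ i, x (Fin.succ i) :=
        Finset.sum_pos (fun i _ => hx _) Finset.univ_nonempty
      have hstep : ∀ k ∈ range (n+1),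
          (∑ t ∈ Finset.Nat.antidiagonalTuple m (n-k),
            (Nat.multinomial Finset.univ (Fin.cons k t) : ℝ) *
              ∏ j, AG ((Fin.cons k t : Fin (m+1) → ℕ) j) (x j))
          = (n.choose k : ℝ) * (AG k (x 0) * AG (n-k) (∑ i, x (Fin.succ i))) := by
        intro k hk
        rw [Finset.mem_range] at hk
        have hk' : k ≤ n := Nat.lt_succ_iff.mp hk
        rw [← IH hm1 (n-k) (fun i => x (Fin.succ i)) (fun i => hx _), Finset.mul_sum, Finset.mul_sum]
        refine Finset.sum_congr rfl fun t ht => ?_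
        rw [Finset.Nat.mem_antidiagonalTuple] at ht
        rw [multinomial_cons_cast, ht]
        have hkn : k + (n - k) = n := by omega
        rw [hkn, Fin.prod_univ_succ]
        simp only [Fin.cons_zero, Fin.cons_succ]
        ring
      rw [Finset.sum_congr rfl hstep, AG_conv n (x 0) _ (hx 0) hX', Fin.sum_univ_succ]

/-- Abel's multinomial theorem, all `p_i = -1`:
`A_n(x_1,…,x_m; -1,…,-1) = (x_1+⋯+x_m)(x_1+⋯+x_m+n)^(n-1) / (x_1 x_2 ⋯ x_m)`. -/
theorem abelSum_neg_one (m n : ℕ) (hm : 1 ≤ m) (x : Fin m → ℝ) (hx : ∀ i, 0 < x i) :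
    abelSum m n x (fun _ => -1) =
      (∑ i, x i) * ((∑ i, x i) + n) ^ ((n : ℤ) - 1) / ∏ i, x i := by
  have hne : Nonempty (Fin m) := ⟨⟨0, hm⟩⟩
  have key := AG_multi m hm n x hx
  simp only [abelSum]
  have hterm : ∀ s ∈ Finset.Nat.antidiagonalTuple m n,
      (Nat.multinomial Finset.univ s : ℝ) * ∏ j, ((s j : ℝ) + x j) ^ ((s j : ℤ) + (-1))
      = (∏ i, x i)⁻¹ * ((Nat.multinomial Finset.univ s : ℝ) * ∏ j, AG (s j) (x j)) := by
    intro s _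
    have hfac : ∀ j, ((s j : ℝ) + x j) ^ ((s j : ℤ) + (-1)) = (x j)⁻¹ * AG (s j) (x j) := by
      intro j
      rw [AG]
      have h1 : (s j : ℤ) + (-1) = (s j : ℤ) - 1 := by ring
      have h2 : (s j : ℝ) + x j = x j + (s j : ℝ) := by ring
      rw [h1, h2, inv_mul_cancel_left₀ (hx j).ne']
    calc (Nat.multinomial Finset.univ s : ℝ) * ∏ j, ((s j : ℝ) + x j) ^ ((s j : ℤ) + (-1))
        = (Nat.multinomial Finset.univ s : ℝ) * ∏ j, (x j)⁻¹ * AG (s j) (x j) := by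
          rw [Finset.prod_congr rfl fun j _ => hfac j]
      _ = _ := by rw [Finset.prod_mul_distrib, ← Finset.prod_inv_distrib]; ring
  rw [Finset.sum_congr rfl hterm, ← Finset.mul_sum, key, AG]
  ring
end

section
/- For all m ≥ 1, n ≥ 0, and positive reals x_1,…,x_m, Abel's multinomial sum with parameters p_1 = … = p_{m−1} = −1 and p_m = 0 evaluates as A_n(x_1,…,x_m; −1,…,−1,0) = x_m (x_1 + … + x_m + n)^n / (x_1 x_2 ⋯ x_m). -/
open Finset

lemma abelPR (n : ℕ) :
    (∀ x y : ℝ, 0 < x → 0 < y →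
      x * ∑ k ∈ range (n+1), (n.choose k : ℝ) * (x + (k:ℝ)) ^ ((k:ℤ) - 1) *
        (y + ((n - k : ℕ):ℝ)) ^ (((n - k : ℕ):ℤ)) = (x + y + n) ^ n)
  ∧ (∀ x y : ℝ, 0 < x → 0 < y →
      x * y * ∑ k ∈ range (n+1), (n.choose k : ℝ) * (x + (k:ℝ)) ^ ((k:ℤ) - 1) *
        (y + ((n - k : ℕ):ℝ)) ^ (((n - k : ℕ):ℤ) - 1) = (x + y) * (x + y + n) ^ ((n:ℤ) - 1)) := by
  induction n with
  | zero =>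
    constructor
    · intro x y hx hy
      simp [mul_inv_cancel₀ hx.ne', zpow_neg_one]
    · intro x y hx hy
      have : x + y > 0 := by linarith
      simp [zpow_neg_one]
      field_simp
  | succ n ih =>
    obtain ⟨hP, hR⟩ := ih
    -- R at n+1
    have hR' : ∀ x y : ℝ, 0 < x → 0 < y →
        x * y * ∑ k ∈ range (n+2), ((n+1).choose k : ℝ) * (x + (k:ℝ)) ^ ((k:ℤ) - 1) *
          (y + ((n+1 - k : ℕ):ℝ)) ^ (((n+1 - k : ℕ):ℤ) - 1)
        = (x + y) * (x + y + (n+1:ℕ)) ^ (((n+1:ℕ):ℤ) - 1) := by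
      intro x y hx hy
      rw [Finset.sum_range_succ']
      have hsplit : ∀ j ∈ range (n+1),
          ((n+1).choose (j+1) : ℝ) * (x + ((j+1:ℕ):ℝ)) ^ (((j+1:ℕ):ℤ) - 1) *
            (y + ((n+1 - (j+1) : ℕ):ℝ)) ^ (((n+1 - (j+1) : ℕ):ℤ) - 1)
          = (n.choose j : ℝ) * (x + (j:ℝ) + 1) ^ ((j:ℤ)) *
              (y + ((n - j : ℕ):ℝ)) ^ (((n - j : ℕ):ℤ) - 1)
            + (n.choose (j+1) : ℝ) * (x + (j:ℝ) + 1) ^ ((j:ℤ)) *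
              (y + ((n - j : ℕ):ℝ)) ^ (((n - j : ℕ):ℤ) - 1) := by
        intro j hj
        have h1 : n + 1 - (j+1) = n - j := by omega
        rw [h1, Nat.choose_succ_succ']
        push_cast
        ring
      rw [Finset.sum_congr rfl hsplit, Finset.sum_add_distrib]
      -- A : first sum equals P-sum at (y, x+1)
      have hA : ∑ j ∈ range (n+1), (n.choose j : ℝ) * (x + (j:ℝ) + 1) ^ ((j:ℤ)) *
            (y + ((n - j : ℕ):ℝ)) ^ (((n - j : ℕ):ℤ) - 1)
          = ∑ k ∈ range (n+1), (n.choose k : ℝ) * (y + (k:ℝ)) ^ ((k:ℤ) - 1) *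
            ((x+1) + ((n - k : ℕ):ℝ)) ^ (((n - k : ℕ):ℤ)) := by
        rw [← Finset.sum_range_reflect]
        refine Finset.sum_congr rfl fun k hk => ?_
        have hk' : k ≤ n := by simpa [Nat.lt_succ] using hk
        have h1 : n + 1 - 1 - k = n - k := by omega
        have h2 : n - (n - k) = k := by omega
        have h3 : n.choose (n-k) = n.choose k := Nat.choose_symm hk'
        rw [h1, h2, h3]
        have h4 : x + ((n-k:ℕ):ℝ) + 1 = (x+1) + ((n-k:ℕ):ℝ) := by ring
        rw [h4]
        ring
      -- B : second sum + f 0 equals P-sum at (x, y+1)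
      have hB : (∑ j ∈ range (n+1), (n.choose (j+1) : ℝ) * (x + (j:ℝ) + 1) ^ ((j:ℤ)) *
            (y + ((n - j : ℕ):ℝ)) ^ (((n - j : ℕ):ℤ) - 1))
          + ((n+1).choose 0 : ℝ) * (x + ((0:ℕ):ℝ)) ^ (((0:ℕ):ℤ) - 1) *
            (y + ((n+1 - 0 : ℕ):ℝ)) ^ (((n+1 - 0 : ℕ):ℤ) - 1)
          = ∑ k ∈ range (n+1), (n.choose k : ℝ) * (x + (k:ℝ)) ^ ((k:ℤ) - 1) *
            ((y+1) + ((n - k : ℕ):ℝ)) ^ (((n - k : ℕ):ℤ)) := by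
        rw [Finset.sum_range_succ (fun j => (n.choose (j+1) : ℝ) * (x + (j:ℝ) + 1) ^ ((j:ℤ)) *
            (y + ((n - j : ℕ):ℝ)) ^ (((n - j : ℕ):ℤ) - 1)) n]
        rw [Finset.sum_range_succ' (fun k => (n.choose k : ℝ) * (x + (k:ℝ)) ^ ((k:ℤ) - 1) *
            ((y+1) + ((n - k : ℕ):ℝ)) ^ (((n - k : ℕ):ℤ))) n]
        simp only [Nat.choose_succ_self, Nat.cast_zero, zero_mul, add_zero]
        congr 1
        · refine Finset.sum_congr rfl fun j hj => ?_
          have hjn : j < n := by simpa using hj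
          set a := n - (j+1) with ha
          have h1 : n - j = a + 1 := by omega
          rw [h1]
          have h2 : ((a+1:ℕ):ℤ) - 1 = ((a:ℕ):ℤ) := by push_cast; ring
          have h3 : (y + ((a+1:ℕ):ℝ)) = (y+1) + ((a:ℕ):ℝ) := by push_cast; ring
          have h4 : ((j+1:ℕ):ℤ) - 1 = (j:ℤ) := by push_cast; ring
          have h5 : (x + ((j+1:ℕ):ℝ)) = x + (j:ℝ) + 1 := by push_cast; ring
          rw [h2, h3, h4, h5]
        · have h0 : n + 1 - 0 = n + 1 := rfl
          have h0' : (n : ℕ) - 0 = n := rfl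
          rw [h0, h0']
          have h2 : ((n+1:ℕ):ℤ) - 1 = ((n:ℕ):ℤ) := by push_cast; ring
          have h3 : y + ((n+1:ℕ):ℝ) = (y+1) + ((n:ℕ):ℝ) := by push_cast; ring
          rw [h2, h3]
          norm_num
      rw [hA, add_assoc, hB]
      have e1 := hP x (y+1) hx (by linarith)
      have e2 := hP y (x+1) hy (by linarith)
      have h2 : (((n+1:ℕ)):ℤ) - 1 = ((n:ℕ):ℤ) := by push_cast; ring
      rw [h2, zpow_natCast]
      have hb1 : x + (y+1) + (n:ℝ) = x + y + ((n:ℕ)+1:ℝ) := by ring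
      have hb2 : y + (x+1) + (n:ℝ) = x + y + ((n:ℕ)+1:ℝ) := by ring
      rw [hb1] at e1
      rw [hb2] at e2
      push_cast
      push_cast at e1 e2
      linear_combination x * e2 + y * e1
    refine ⟨?_, hR'⟩
    -- P at n+1
    intro x y hx hy
    have hterm : ∀ k ∈ range (n+2),
        ((n+1).choose k : ℝ) * (x + (k:ℝ)) ^ ((k:ℤ) - 1) *
          (y + ((n+1 - k : ℕ):ℝ)) ^ (((n+1 - k : ℕ):ℤ))
        = y * (((n+1).choose k : ℝ) * (x + (k:ℝ)) ^ ((k:ℤ) - 1) *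
            (y + ((n+1 - k : ℕ):ℝ)) ^ (((n+1 - k : ℕ):ℤ) - 1))
          + ((n+1-k:ℕ):ℝ) * (((n+1).choose k : ℝ) * (x + (k:ℝ)) ^ ((k:ℤ) - 1) *
            (y + ((n+1 - k : ℕ):ℝ)) ^ (((n+1 - k : ℕ):ℤ) - 1)) := by
      intro k hk
      have hb : (0:ℝ) < y + ((n+1-k:ℕ):ℝ) := by positivity
      have hz : (y + ((n+1-k:ℕ):ℝ)) ^ (((n+1 - k : ℕ):ℤ))
          = (y + ((n+1-k:ℕ):ℝ)) ^ (((n+1 - k : ℕ):ℤ) - 1) * (y + ((n+1-k:ℕ):ℝ)) := by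
        rw [zpow_sub_one₀ hb.ne']
        field_simp
      rw [hz]
      ring
    rw [Finset.sum_congr rfl hterm, Finset.sum_add_distrib, ← Finset.mul_sum]
    -- second sum equals (n+1) * P-sum(x, y+1, n)
    have hD : ∑ k ∈ range (n+2), ((n+1-k:ℕ):ℝ) * (((n+1).choose k : ℝ) * (x + (k:ℝ)) ^ ((k:ℤ) - 1) *
          (y + ((n+1 - k : ℕ):ℝ)) ^ (((n+1 - k : ℕ):ℤ) - 1))
        = ((n:ℝ)+1) * ∑ k ∈ range (n+1), (n.choose k : ℝ) * (x + (k:ℝ)) ^ ((k:ℤ) - 1) *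
          ((y+1) + ((n - k : ℕ):ℝ)) ^ (((n - k : ℕ):ℤ)) := by
      rw [Finset.sum_range_succ]
      simp only [Nat.sub_self, Nat.cast_zero, zero_mul, add_zero]
      rw [Finset.mul_sum]
      refine Finset.sum_congr rfl fun k hk => ?_
      have hk' : k ≤ n := by simpa [Nat.lt_succ] using hk
      have hcc : (n+1-k) * ((n+1).choose k) = (n+1) * n.choose k := by
        have h := Nat.add_one_mul_choose_eq n (n-k)
        rw [Nat.choose_symm hk'] at h
        have h2 : n - k + 1 = n + 1 - k := by omega
        rw [h2] at h
        have h3 : (n+1).choose (n+1-k) = (n+1).choose k := Nat.choose_symm (by omega)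
        rw [h3] at h
        rw [Nat.mul_comm]
        exact h.symm
      have hcast : ((n+1-k:ℕ):ℝ) * (((n+1).choose k : ℝ)) = ((n:ℝ)+1) * (n.choose k : ℝ) := by
        have := congrArg (fun t : ℕ => (t:ℝ)) hcc
        push_cast at this ⊢
        linarith [this]
      have h1 : (n+1-k : ℕ) = (n-k) + 1 := by omega
      have h2 : ((n+1-k:ℕ):ℤ) - 1 = ((n-k:ℕ):ℤ) := by omega
      have h3 : y + ((n+1-k:ℕ):ℝ) = (y+1) + ((n-k:ℕ):ℝ) := by rw [h1]; push_cast; ring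
      rw [h2, h3]
      calc ((n+1-k:ℕ):ℝ) * (((n+1).choose k : ℝ) * (x + (k:ℝ)) ^ ((k:ℤ) - 1) *
            ((y+1) + ((n-k:ℕ):ℝ)) ^ (((n - k : ℕ):ℤ)))
          = (((n+1-k:ℕ):ℝ) * ((n+1).choose k : ℝ)) * ((x + (k:ℝ)) ^ ((k:ℤ) - 1) *
            ((y+1) + ((n-k:ℕ):ℝ)) ^ (((n - k : ℕ):ℤ))) := by ring
        _ = _ := by rw [hcast]; ring
    rw [hD]
    have e1 := hR' x y hx hy
    have e2 := hP x (y+1) hx (by linarith)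
    have h2 : (((n+1:ℕ)):ℤ) - 1 = ((n:ℕ):ℤ) := by push_cast; ring
    rw [h2, zpow_natCast] at e1
    have hb1 : x + (y+1) + (n:ℝ) = x + y + ((n:ℕ)+1:ℝ) := by ring
    rw [hb1] at e2
    push_cast
    push_cast at e1 e2
    linear_combination e1 + ((n:ℝ)+1) * e2

lemma multinomial_univ_cons (m k : ℕ) (t : Fin m → ℕ) :
    Nat.multinomial Finset.univ (Fin.cons k t : Fin (m+1) → ℕ)
      = (k + ∑ i, t i).choose k * Nat.multinomial Finset.univ t := by
  rw [Fin.univ_succ, Nat.multinomial_cons]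
  congr 1
  · rw [Finset.sum_map]
    simp [Fin.cons_succ]
  · unfold Nat.multinomial
    rw [Finset.sum_map, Finset.prod_map]
    simp [Fin.cons_succ]

lemma sum_adT_succ {M : Type*} [AddCommMonoid M] (m n : ℕ) (f : (Fin (m+1) → ℕ) → M) :
    ∑ s ∈ Finset.Nat.antidiagonalTuple (m+1) n, f s
      = ∑ kr ∈ Finset.HasAntidiagonal.antidiagonal n,
          ∑ t ∈ Finset.Nat.antidiagonalTuple m kr.2, f (Fin.cons kr.1 t) := by
  rw [Finset.sum_sigma']
  refine Finset.sum_nbij' (i := fun s => (⟨(s 0, ∑ i, Fin.tail s i), Fin.tail s⟩ :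
      (_ : ℕ × ℕ) × (Fin m → ℕ)))
    (j := fun q => Fin.cons q.1.1 q.2) ?_ ?_ ?_ ?_ ?_
  · intro s hs
    rw [Finset.Nat.mem_antidiagonalTuple] at hs
    refine Finset.mem_sigma.mpr ⟨?_, ?_⟩
    · rw [Finset.HasAntidiagonal.mem_antidiagonal]
      rw [← hs, Fin.sum_univ_succ]; rfl
    · exact Finset.Nat.mem_antidiagonalTuple.mpr rfl
  · intro q hq
    rw [Finset.mem_sigma, Finset.HasAntidiagonal.mem_antidiagonal,
      Finset.Nat.mem_antidiagonalTuple] at hq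
    rw [Finset.Nat.mem_antidiagonalTuple, Fin.sum_cons, hq.2, hq.1]
  · intro s _; exact Fin.cons_self_tail s
  · intro q hq
    rw [Finset.mem_sigma, Finset.HasAntidiagonal.mem_antidiagonal,
      Finset.Nat.mem_antidiagonalTuple] at hq
    have h1 : Fin.tail (Fin.cons q.1.1 q.2 : Fin (m+1) → ℕ) = q.2 := Fin.tail_cons _ _
    refine Sigma.ext ?_ ?_
    · simp only [Fin.cons_zero, h1, hq.2]
    · simp [h1]
  · intro s _
    rw [Fin.cons_self_tail s]

lemma abelSum_succ (m n : ℕ) (x : Fin (m+1) → ℝ) (p : Fin (m+1) → ℤ) :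
    abelSum (m+1) n x p
      = ∑ k ∈ range (n+1), (n.choose k : ℝ) * ((k:ℝ) + x 0) ^ ((k:ℤ) + p 0) *
          abelSum m (n - k) (fun j => x j.succ) (fun j => p j.succ) := by
  rw [abelSum, sum_adT_succ, Finset.Nat.sum_antidiagonal_eq_sum_range_succ_mk]
  refine Finset.sum_congr rfl fun k hk => ?_
  have hkn : k ≤ n := by simpa [Nat.lt_succ] using hk
  rw [abelSum, Finset.mul_sum]
  refine Finset.sum_congr rfl fun t ht => ?_
  have hts : ∑ i, t i = n - k := Finset.Nat.mem_antidiagonalTuple.mp ht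
  rw [multinomial_univ_cons]
  rw [hts]
  have hknk : k + (n - k) = n := by omega
  rw [hknk]
  rw [Fin.prod_univ_succ]
  simp only [Fin.cons_zero, Fin.cons_succ]
  push_cast
  ring

lemma abelSum_one (n : ℕ) (x : Fin 1 → ℝ) (p : Fin 1 → ℤ) :
    abelSum 1 n x p = ((n:ℝ) + x 0) ^ ((n:ℤ) + p 0) := by
  rw [abelSum, Finset.Nat.antidiagonalTuple_one, Finset.sum_singleton]
  have h1 : Nat.multinomial Finset.univ (![n] : Fin 1 → ℕ) = 1 := by
    simp [Nat.multinomial, Nat.div_self (Nat.factorial_pos n)]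
  rw [h1, Fin.prod_univ_one]
  simp

lemma abel_T (m : ℕ) : ∀ n (x : Fin (m+1) → ℝ), (∀ i, 0 < x i) →
    abelSum (m+1) n x (fun i => if (i:ℕ) = m then 0 else -1)
      = x (Fin.last m) * ((∑ i, x i) + n) ^ n / ∏ i, x i := by
  induction m with
  | zero =>
    intro n x hx
    rw [abelSum_one]
    have h0 : (if ((0 : Fin 1):ℕ) = 0 then (0:ℤ) else -1) = 0 := by simp
    rw [h0, add_zero, zpow_natCast, Fin.sum_univ_one, Fin.prod_univ_one]
    have hx0 := (hx 0).ne'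
    have hl : x (Fin.last 0) = x 0 := rfl
    rw [hl, add_comm (x 0) ((n:ℝ)), mul_div_cancel_left₀ _ hx0]
  | succ m ih =>
    intro n x hx
    rw [abelSum_succ]
    have hp0 : (if (((0:Fin (m+2))):ℕ) = m+1 then (0:ℤ) else -1) = -1 := by simp
    have hp : (fun j : Fin (m+1) => (if (((j.succ : Fin (m+2))):ℕ) = m+1 then (0:ℤ) else -1))
        = (fun j : Fin (m+1) => if (j:ℕ) = m then (0:ℤ) else -1) := by
      funext j
      by_cases h : (j:ℕ) = m <;> simp [Fin.val_succ, h]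
    have hx' : ∀ i : Fin (m+1), 0 < x i.succ := fun i => hx i.succ
    set X' : ℝ := ∑ i : Fin (m+1), x i.succ with hX'def
    set P' : ℝ := ∏ i : Fin (m+1), x i.succ with hP'def
    have hX' : 0 < X' := Finset.sum_pos (fun i _ => hx' i) Finset.univ_nonempty
    have hP' : 0 < P' := Finset.prod_pos (fun i _ => hx' i)
    have hstep : ∀ k ∈ range (n+1),
        ((n.choose k : ℝ) * ((k:ℝ) + x 0) ^ ((k:ℤ) + (if (((0:Fin (m+2))):ℕ) = m+1 then (0:ℤ) else -1)) *
          abelSum (m+1) (n - k) (fun j => x j.succ)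
            (fun j => if (((j.succ : Fin (m+2))):ℕ) = m+1 then (0:ℤ) else -1))
        = (x (Fin.last m).succ / P') *
            ((n.choose k : ℝ) * (x 0 + (k:ℝ)) ^ ((k:ℤ) - 1) *
              (X' + ((n-k:ℕ):ℝ)) ^ (((n-k:ℕ)):ℤ)) := by
      intro k hk
      rw [hp0, hp, ih (n-k) (fun j => x j.succ) hx']
      rw [zpow_natCast]
      have h1 : (k:ℤ) + (-1) = (k:ℤ) - 1 := by ring
      have h2 : (k:ℝ) + x 0 = x 0 + (k:ℝ) := by ring
      rw [h1, h2]
      ring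
    rw [Finset.sum_congr rfl hstep, ← Finset.mul_sum]
    have e := (abelPR n).1 (x 0) X' (hx 0) hX'
    rw [Fin.sum_univ_succ, Fin.prod_univ_succ]
    rw [← hX'def, ← hP'def]
    have hlast : x (Fin.last (m+1)) = x (Fin.last m).succ := by
      rw [Fin.succ_last]
    rw [hlast]
    rw [div_mul_eq_mul_div, div_eq_div_iff hP'.ne' (mul_pos (hx 0) hP').ne']
    linear_combination (x (Fin.last m).succ * P') * e

/-- Abel's multinomial theorem, `p_1 = ⋯ = p_{m-1} = -1`, `p_m = 0`:
`A_n(x_1,…,x_m; -1,…,-1,0) = x_m (x_1+⋯+x_m+n)^n / (x_1 x_2 ⋯ x_m)`. -/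
theorem abelSum_neg_one_zero (m n : ℕ) (hm : 1 ≤ m) (x : Fin m → ℝ) (hx : ∀ i, 0 < x i) :
    abelSum m n x (fun i => if (i : ℕ) = m - 1 then 0 else -1) =
      x ⟨m - 1, by omega⟩ * ((∑ i, x i) + n) ^ n / ∏ i, x i := by
  obtain ⟨m', rfl⟩ : ∃ m', m = m' + 1 := ⟨m - 1, by omega⟩
  have h := abel_T m' n x hx
  have hlast : (Fin.last m') = (⟨m' + 1 - 1, by omega⟩ : Fin (m'+1)) := by
    ext; simp
  rw [hlast] at h
  simpa using h
end

section
/- For all m ≥ 1, n ≥ 0, positive reals x_1,…,x_m, and integers p_1,…,p_m, Abel's multinomial sum satisfies the recurrence A_n(x_1,…,x_m; p_1,…,p_m) = Σ_{s=0}^n ( n choose s ) · s! · (x_1 + s) · A_{n−s}(x_1 + s, x_2, …, x_m; p_1 − 1, p_2, …, p_m). -/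
open Finset

lemma sum_AT_succ {M : Type*} [AddCommMonoid M] (k n : ℕ)
    (f : (Fin (k+1) → ℕ) → M) :
    ∑ s ∈ Finset.Nat.antidiagonalTuple (k+1) n, f s
      = ∑ a ∈ Finset.range (n+1), ∑ t ∈ Finset.Nat.antidiagonalTuple k (n - a),
          f (Fin.cons a t) := by
  symm
  rw [Finset.sum_sigma']
  refine Finset.sum_nbij' (fun q => Fin.cons q.1 q.2) (fun s => ⟨s 0, Fin.tail s⟩)
    ?_ ?_ ?_ ?_ ?_
  · intro q hq
    simp only [Finset.mem_sigma, Finset.mem_range, Finset.Nat.mem_antidiagonalTuple] at hq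
    rw [Finset.Nat.mem_antidiagonalTuple, Fin.sum_cons]
    omega
  · intro s hs
    rw [Finset.Nat.mem_antidiagonalTuple, Fin.sum_univ_succ] at hs
    simp only [Finset.mem_sigma, Finset.mem_range, Finset.Nat.mem_antidiagonalTuple]
    constructor
    · omega
    · simp only [Fin.tail]; omega
  · intro q _; simp
  · intro s _; exact Fin.cons_self_tail s
  · intro q _; rfl

lemma tele (a : ℕ) (y : ℝ) :
    ∑ k ∈ Finset.range (a+1), (a.factorial : ℝ)/(k.factorial) * (y - k) * y ^ k
      = y ^ (a+1) := by
  have h : ∀ k : ℕ, (a.factorial : ℝ)/(k.factorial) * (y - k) * y ^ k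
      = (a.factorial : ℝ) * (((k+1 : ℕ)):ℝ) / ((k+1).factorial) * y ^ (k+1)
        - (a.factorial : ℝ) * k / k.factorial * y ^ k := by
    intro k
    have h1 : ((k+1).factorial : ℝ) = ((k:ℝ)+1) * k.factorial := by
      push_cast [Nat.factorial_succ]; ring
    have h2 : (k.factorial : ℝ) ≠ 0 := Nat.cast_ne_zero.2 k.factorial_ne_zero
    rw [h1]
    push_cast
    field_simp
    ring
  simp_rw [h]
  rw [Finset.sum_range_sub (fun k => (a.factorial : ℝ) * k / k.factorial * y ^ k)]
  have h1 : ((a+1).factorial : ℝ) = ((a:ℝ)+1) * a.factorial := by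
    push_cast [Nat.factorial_succ]; ring
  have h2 : (a.factorial : ℝ) ≠ 0 := Nat.cast_ne_zero.2 a.factorial_ne_zero
  rw [h1]
  push_cast
  field_simp
  ring


lemma sum_triangle {M : Type*} [AddCommMonoid M] (n : ℕ) (g : ℕ → ℕ → M) :
    ∑ s ∈ Finset.range (n+1), ∑ c ∈ Finset.range (n - s + 1), g s c
      = ∑ a ∈ Finset.range (n+1), ∑ s ∈ Finset.range (a+1), g s (a - s) := by
  rw [Finset.sum_sigma', Finset.sum_sigma']
  refine Finset.sum_nbij' (fun q => ⟨q.1 + q.2, q.1⟩) (fun q => ⟨q.2, q.1 - q.2⟩)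
    ?_ ?_ ?_ ?_ ?_
  · rintro ⟨s, c⟩ hq
    simp only [Finset.mem_sigma, Finset.mem_range] at *
    omega
  · rintro ⟨a, s⟩ hq
    simp only [Finset.mem_sigma, Finset.mem_range] at *
    omega
  · rintro ⟨s, c⟩ hq
    simp only [Finset.mem_sigma, Finset.mem_range] at hq
    have h : s + c - s = c := by omega
    simp [h]
  · rintro ⟨a, s⟩ hq
    simp only [Finset.mem_sigma, Finset.mem_range] at hq
    have h : s + (a - s) = a := by omega
    simp [h]
  · rintro ⟨s, c⟩ hq
    simp only [Finset.mem_sigma, Finset.mem_range] at hq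
    have h : s + c - s = c := by omega
    simp [h]

lemma mult_real {K : ℕ} (f : Fin K → ℕ) :
    (Nat.multinomial Finset.univ f : ℝ)
      = ((∑ i, f i).factorial : ℝ) / ∏ i, ((f i).factorial : ℝ) := by
  have hs := Nat.multinomial_spec Finset.univ f
  have hP : (∏ i, ((f i).factorial : ℝ)) ≠ 0 :=
    Finset.prod_ne_zero_iff.2 fun i _ => Nat.cast_ne_zero.2 (f i).factorial_ne_zero
  rw [eq_div_iff hP]
  push_cast [← hs]
  ring

lemma sum_triangle' {R : Type*} [AddCommMonoid R] (n K : ℕ)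
    (B : ℕ → ℕ → (Fin K → ℕ) → R) :
    ∑ s ∈ Finset.range (n+1), ∑ c ∈ Finset.range (n - s + 1),
        ∑ t ∈ Finset.Nat.antidiagonalTuple K (n - s - c), B s c t
      = ∑ a ∈ Finset.range (n+1), ∑ t ∈ Finset.Nat.antidiagonalTuple K (n - a),
          ∑ s ∈ Finset.range (a+1), B s (a - s) t := by
  rw [sum_triangle n (fun s c => ∑ t ∈ Finset.Nat.antidiagonalTuple K (n - s - c), B s c t)]
  refine Finset.sum_congr rfl fun a ha => ?_
  rw [Finset.mem_range] at ha
  have hfix : ∀ s ∈ Finset.range (a+1),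
      (∑ t ∈ Finset.Nat.antidiagonalTuple K (n - s - (a - s)), B s (a - s) t)
        = ∑ t ∈ Finset.Nat.antidiagonalTuple K (n - a), B s (a - s) t := by
    intro s hs
    rw [Finset.mem_range] at hs
    rw [show n - s - (a - s) = n - a from by omega]
  exact (Finset.sum_congr rfl hfix).trans Finset.sum_comm

/-- The recurrence from Abel's multinomial theorem:
`A_n(x_1,…,x_m; p_1,…,p_m)
  = Σ_{s=0}^n C(n,s) s! (x_1 + s) A_{n-s}(x_1+s, x_2,…,x_m; p_1-1, p_2,…,p_m)`. -/
theorem abelSum_recurrence (m n : ℕ) (hm : 1 ≤ m) (x : Fin m → ℝ) (hx : ∀ i, 0 < x i)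
    (p : Fin m → ℤ) :
    abelSum m n x p =
      ∑ s ∈ Finset.range (n + 1),
        (Nat.choose n s : ℝ) * (Nat.factorial s) * (x ⟨0, hm⟩ + s) *
          abelSum m (n - s) (Function.update x ⟨0, hm⟩ (x ⟨0, hm⟩ + s))
            (Function.update p ⟨0, hm⟩ (p ⟨0, hm⟩ - 1)) := by
  obtain ⟨M, rfl⟩ : ∃ M, m = M + 1 := ⟨m - 1, by omega⟩
  have h0 : (⟨0, hm⟩ : Fin (M+1)) = 0 := by ext; simp
  simp only [h0]
  have hy : (0:ℝ) < x 0 := hx 0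
  simp only [abelSum, sum_AT_succ, Finset.mul_sum]
  rw [sum_triangle']
  refine Finset.sum_congr rfl fun a ha => Finset.sum_congr rfl fun t ht => ?_
  rw [Finset.mem_range] at ha
  rw [Finset.Nat.mem_antidiagonalTuple] at ht
  -- now the scalar identity for fixed (a, t)
  have hupdx : ∀ (v : ℝ) (j : Fin M), Function.update x 0 v j.succ = x j.succ :=
    fun v j => Function.update_of_ne (Fin.succ_ne_zero j) _ _
  have hupdp : ∀ (v : ℤ) (j : Fin M), Function.update p 0 v j.succ = p j.succ :=
    fun v j => Function.update_of_ne (Fin.succ_ne_zero j) _ _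
  simp only [Fin.prod_univ_succ, Fin.cons_zero, Fin.cons_succ, Function.update_self,
    hupdx, hupdp]
  have hy0 : (0:ℝ) < (a:ℝ) + x 0 := by positivity
  have hy' : ((a:ℝ) + x 0) ≠ 0 := ne_of_gt hy0
  have hPf : (∏ j : Fin M, ((t j).factorial : ℝ)) ≠ 0 :=
    Finset.prod_ne_zero_iff.2 fun j _ => Nat.cast_ne_zero.2 (t j).factorial_ne_zero
  have ha' : (a.factorial : ℝ) ≠ 0 := Nat.cast_ne_zero.2 a.factorial_ne_zero
  -- key telescoping identity
  have key : ∑ s ∈ Finset.range (a+1),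
      (a.factorial : ℝ)/((a-s).factorial) * (x 0 + s) * ((a:ℝ) + x 0) ^ (a-s)
        = ((a:ℝ) + x 0) ^ (a+1) := by
    have hrefl := Finset.sum_range_reflect
      (fun k => (a.factorial : ℝ)/(k.factorial) * (((a:ℝ) + x 0) - k) * ((a:ℝ) + x 0) ^ k)
      (a+1)
    rw [tele] at hrefl
    rw [← hrefl]
    refine Finset.sum_congr rfl fun s hs => ?_
    rw [Finset.mem_range] at hs
    have h1 : a + 1 - 1 - s = a - s := by omega
    have h2 : ((a - s : ℕ) : ℝ) = (a:ℝ) - s := by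
      have hsa : s ≤ a := by omega
      push_cast [hsa]
      ring
    rw [h1, h2]
    ring
  -- multinomial formulas
  have hmulta : (Nat.multinomial Finset.univ (Fin.cons a t : Fin (M+1) → ℕ) : ℝ)
      = (n.factorial : ℝ) / (a.factorial * ∏ j : Fin M, ((t j).factorial : ℝ)) := by
    rw [mult_real, Fin.sum_cons, ht, show a + (n - a) = n from by omega,
      Fin.prod_univ_succ]
    simp only [Fin.cons_zero, Fin.cons_succ]
  have hmults : ∀ s ≤ a, (Nat.multinomial Finset.univ (Fin.cons (a-s) t : Fin (M+1) → ℕ) : ℝ)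
      = ((n-s).factorial : ℝ) / ((a-s).factorial * ∏ j : Fin M, ((t j).factorial : ℝ)) := by
    intro s hs
    rw [mult_real, Fin.sum_cons, ht, show a - s + (n - a) = n - s from by omega,
      Fin.prod_univ_succ]
    simp only [Fin.cons_zero, Fin.cons_succ]
  refine Eq.symm ?_
  calc
    ∑ s ∈ Finset.range (a+1),
        (n.choose s : ℝ) * s.factorial * (x 0 + s) *
          ((Nat.multinomial Finset.univ (Fin.cons (a-s) t : Fin (M+1) → ℕ) : ℝ) *
            ((((a-s : ℕ) : ℝ) + (x 0 + s)) ^ (((a-s : ℕ) : ℤ) + (p 0 - 1)) *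
              ∏ j : Fin M, ((t j : ℝ) + x j.succ) ^ ((t j : ℤ) + p j.succ)))
      = ∑ s ∈ Finset.range (a+1),
          ((n.factorial : ℝ) / (a.factorial * ∏ j : Fin M, ((t j).factorial : ℝ)) *
            (((a:ℝ) + x 0) ^ (p 0 - 1) *
              ∏ j : Fin M, ((t j : ℝ) + x j.succ) ^ ((t j : ℤ) + p j.succ))) *
          ((a.factorial : ℝ)/((a-s).factorial) * (x 0 + s) * ((a:ℝ) + x 0) ^ (a-s)) := by
        refine Finset.sum_congr rfl fun s hs => ?_
        rw [Finset.mem_range] at hs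
        have hsa : s ≤ a := by omega
        have hsn : s ≤ n := by omega
        have hbase : (((a-s : ℕ)) : ℝ) + (x 0 + s) = (a:ℝ) + x 0 := by
          push_cast [hsa]
          ring
        have hchoose : ((n.choose s : ℕ) : ℝ) * s.factorial * (n-s).factorial
            = n.factorial := by
          exact_mod_cast congrArg Nat.cast (Nat.choose_mul_factorial_mul_factorial hsn)
        have has' : (((a-s).factorial : ℕ) : ℝ) ≠ 0 :=
          Nat.cast_ne_zero.2 (a-s).factorial_ne_zero
        rw [hmults s hsa, hbase, zpow_add₀ hy', zpow_natCast, ← hchoose]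
        field_simp
    _ = ((n.factorial : ℝ) / (a.factorial * ∏ j : Fin M, ((t j).factorial : ℝ)) *
          (((a:ℝ) + x 0) ^ (p 0 - 1) *
            ∏ j : Fin M, ((t j : ℝ) + x j.succ) ^ ((t j : ℤ) + p j.succ))) *
        ((a:ℝ) + x 0) ^ (a+1) := by
        rw [← Finset.mul_sum, key]
    _ = (Nat.multinomial Finset.univ (Fin.cons a t : Fin (M+1) → ℕ) : ℝ) *
          (((a : ℝ) + x 0) ^ ((a : ℤ) + p 0) *
            ∏ j : Fin M, ((t j : ℝ) + x j.succ) ^ ((t j : ℤ) + p j.succ)) := by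
        rw [hmulta, show ((a:ℤ) + p 0) = ((a+1 : ℕ) : ℤ) + (p 0 - 1) from by push_cast; ring,
          zpow_add₀ hy', zpow_natCast]
        field_simp
end

section
/- For all n ≥ 1 and 1 ≤ k ≤ n−1, the number of parking completions of the initial block (1, 2, …, k) in [n] is |PC_n((1,…,k))| = (k+1)(n+1)^(n−k−1). -/
open Finset

lemma filter_card_le (n s : ℕ) (occ : Finset ℕ) (hocc : occ ⊆ Finset.Icc 1 n) :
    (occ.filter (fun x => s < x)).card ≤ n - s := by
  have h1 : occ.filter (fun x => s < x) ⊆ Finset.Ioc s n := by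
    intro x hx
    simp only [Finset.mem_filter] at hx
    have := hocc hx.1
    simp only [Finset.mem_Icc] at this
    simp only [Finset.mem_Ioc]
    exact ⟨hx.2, this.2⟩
  calc (occ.filter (fun x => s < x)).card ≤ (Finset.Ioc s n).card := Finset.card_le_card h1
    _ = n - s := Nat.card_Ioc s n

lemma park_isSome_iff (n : ℕ) (occ : Finset ℕ) (l : List ℕ)
    (hocc : occ ⊆ Finset.Icc 1 n) (hl : ∀ p ∈ l, 1 ≤ p ∧ p ≤ n) :
    (park n occ l).isSome ↔
      ∀ s ≤ n, l.countP (fun p => decide (s < p)) + (occ.filter (fun x => s < x)).card ≤ n - s := by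
  induction l generalizing occ with
  | nil =>
    simp only [park, Option.isSome_some, true_iff, List.countP_nil, Nat.zero_add]
    intro s hs
    exact filter_card_le n s occ hocc
  | cons p rest ih =>
    obtain ⟨hp1, hpn⟩ := hl p List.mem_cons_self
    have hrest : ∀ q ∈ rest, 1 ≤ q ∧ q ≤ n := fun q hq => hl q (List.mem_cons_of_mem p hq)
    by_cases ha : ((Finset.Icc p n) \ occ).Nonempty
    · set b := ((Finset.Icc p n) \ occ).min' ha with hbdef
      have hbmem : b ∈ (Finset.Icc p n) \ occ := Finset.min'_mem _ ha
      have hbIcc : b ∈ Finset.Icc p n := (Finset.mem_sdiff.1 hbmem).1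
      have hbocc : b ∉ occ := (Finset.mem_sdiff.1 hbmem).2
      obtain ⟨hpb, hbn⟩ := Finset.mem_Icc.1 hbIcc
      have hbmin : ∀ x, p ≤ x → x ≤ n → x ∉ occ → b ≤ x := by
        intro x h1 h2 h3
        exact Finset.min'_le _ x (Finset.mem_sdiff.2 ⟨Finset.mem_Icc.2 ⟨h1, h2⟩, h3⟩)
      have hsub : insert b occ ⊆ Finset.Icc 1 n :=
        Finset.insert_subset (Finset.mem_Icc.2 ⟨le_trans hp1 hpb, hbn⟩) hocc
      have hpark : park n occ (p :: rest) = park n (insert b occ) rest := by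
        simp only [park]
        rw [dif_pos ha]
      rw [hpark, ih (insert b occ) hsub hrest]
      -- card relation
      have hcard : ∀ s, ((insert b occ).filter (fun x => s < x)).card
          = (occ.filter (fun x => s < x)).card + (if s < b then 1 else 0) := by
        intro s
        rw [Finset.filter_insert]
        split
        · rw [Finset.card_insert_of_notMem (fun hmem => hbocc (Finset.mem_filter.1 hmem).1)]
        · simp
      have hcount : ∀ s, (p :: rest).countP (fun q => decide (s < q))
          = rest.countP (fun q => decide (s < q)) + (if s < p then 1 else 0) := by
        intro s
        rw [List.countP_cons]
        split <;> simp_all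
      constructor
      · intro h s hs
        have := h s hs
        rw [hcard s] at this
        rw [hcount s]
        have hle : (if s < p then 1 else 0) ≤ (if s < b then (1:ℕ) else 0) := by
          split
          · rw [if_pos (by omega)]
          · omega
        omega
      · intro h s hs
        rw [hcard s]
        by_cases hsb : s < b
        · rw [if_pos hsb]
          by_cases hsp : s < p
          · have := h s hs
            rw [hcount s, if_pos hsp] at this
            omega
          · -- p ≤ s < b : use condition at p - 1
            have hps : p ≤ s := by omega
            have hkey := h (p - 1) (by omega)
            rw [hcount (p-1), if_pos (by omega)] at hkey
            -- occ contains Icc p s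
            have hIcc : Finset.Icc p s ⊆ occ := by
              intro x hx
              obtain ⟨h1, h2⟩ := Finset.mem_Icc.1 hx
              by_contra h3
              have := hbmin x h1 (by omega) h3
              omega
            have hdisj : Disjoint (occ.filter (fun x => s < x)) (Finset.Icc p s) := by
              rw [Finset.disjoint_left]
              intro x hx hx2
              have := (Finset.mem_filter.1 hx).2
              have := (Finset.mem_Icc.1 hx2).2
              omega
            have hunion : (occ.filter (fun x => s < x)) ∪ Finset.Icc p s
                ⊆ occ.filter (fun x => p - 1 < x) := by
              intro x hx
              rcases Finset.mem_union.1 hx with hx | hx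
              · obtain ⟨h1, h2⟩ := Finset.mem_filter.1 hx
                exact Finset.mem_filter.2 ⟨h1, by omega⟩
              · obtain ⟨h1, h2⟩ := Finset.mem_Icc.1 hx
                exact Finset.mem_filter.2 ⟨hIcc hx, by omega⟩
            have hc := Finset.card_le_card hunion
            rw [Finset.card_union_of_disjoint hdisj, Nat.card_Icc] at hc
            have hc2 : (occ.filter (fun x => p - 1 < x)).card ≤ n - (p - 1) :=
              filter_card_le n (p-1) occ hocc
            have hmono : rest.countP (fun q => decide (s < q))
                ≤ rest.countP (fun q => decide (p - 1 < q)) := by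
              apply List.countP_mono_left
              intro a _ hd
              simp only [decide_eq_true_eq] at hd ⊢
              omega
            omega
        · rw [if_neg hsb]
          have := h s hs
          rw [hcount s] at this
          omega
    · have hpark : park n occ (p :: rest) = none := by
        simp only [park]
        rw [dif_neg ha]
      rw [hpark]
      simp only [Option.isSome_none, Bool.false_eq_true, false_iff]
      intro h
      have hIcc : Finset.Icc p n ⊆ occ := by
        rw [Finset.not_nonempty_iff_eq_empty, Finset.sdiff_eq_empty_iff_subset] at ha
        exact ha
      have hkey := h (p - 1) (by omega)
      rw [List.countP_cons] at hkey
      have hge : Finset.Icc p n ⊆ occ.filter (fun x => p - 1 < x) := by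
        intro x hx
        obtain ⟨h1, h2⟩ := Finset.mem_Icc.1 hx
        exact Finset.mem_filter.2 ⟨hIcc hx, by omega⟩
      have hc := Finset.card_le_card hge
      rw [Nat.card_Icc] at hc
      have : decide ((p-1) < p) = true := by simp; omega
      rw [this] at hkey
      simp at hkey
      omega

open scoped Classical in
noncomputable def cslot (N : ℕ) [NeZero N] (occ : Finset (ZMod N)) (p : ZMod N) : ZMod N :=
  if h : ∃ d : ℕ, p + (d : ZMod N) ∉ occ then p + ((Nat.find h : ℕ) : ZMod N) else p

noncomputable def cpark (N : ℕ) [NeZero N] : List (ZMod N) → Finset (ZMod N) → Finset (ZMod N)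
  | [], occ => occ
  | p :: rest, occ => cpark N rest (insert (cslot N occ p) occ)

variable {N : ℕ} [NeZero N]

lemma cslot_exists {occ : Finset (ZMod N)} (h : occ ≠ Finset.univ) (p : ZMod N) :
    ∃ d : ℕ, p + (d : ZMod N) ∉ occ := by
  have hx : ∃ x : ZMod N, x ∉ occ := by
    by_contra hcon
    push_neg at hcon
    exact h (Finset.eq_univ_iff_forall.2 hcon)
  obtain ⟨x, hx⟩ := hx
  refine ⟨(x - p).val, ?_⟩
  rwa [ZMod.natCast_val, ZMod.cast_id, add_sub_cancel]

lemma cslot_not_mem {occ : Finset (ZMod N)} (h : occ ≠ Finset.univ) (p : ZMod N) :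
    cslot N occ p ∉ occ := by
  have he := cslot_exists h p
  rw [cslot, dif_pos he]
  exact Nat.find_spec he

lemma cslot_min {occ : Finset (ZMod N)} (h : occ ≠ Finset.univ) (p : ZMod N)
    {e : ℕ} (he : e < Nat.find (cslot_exists h p)) : p + (e : ZMod N) ∈ occ := by
  have := Nat.find_min (cslot_exists h p) he
  simpa using this

lemma cpark_mono (l : List (ZMod N)) (occ : Finset (ZMod N)) : occ ⊆ cpark N l occ := by
  induction l generalizing occ with
  | nil => simp [cpark]
  | cons p rest ih =>
    exact fun x hx => ih _ (Finset.mem_insert_of_mem hx)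

lemma cpark_card (l : List (ZMod N)) (occ : Finset (ZMod N))
    (h : occ.card + l.length ≤ N) : (cpark N l occ).card = occ.card + l.length := by
  induction l generalizing occ with
  | nil => simp [cpark]
  | cons p rest ih =>
    have hne : occ ≠ Finset.univ := by
      intro hcon
      have : occ.card = N := by rw [hcon, Finset.card_univ, ZMod.card]
      simp [List.length_cons] at h
      omega
    have hnot := cslot_not_mem hne p
    have hcard : (insert (cslot N occ p) occ).card = occ.card + 1 :=
      Finset.card_insert_of_notMem hnot
    simp only [cpark]
    rw [ih _ (by rw [hcard]; simp at h ⊢; omega), hcard]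
    simp [List.length_cons]
    omega

lemma mem_zero_cpark (l : List (ZMod N)) (occ : Finset (ZMod N))
    (h : (0 : ZMod N) ∈ l) : (0 : ZMod N) ∈ cpark N l occ := by
  induction l generalizing occ with
  | nil => simp at h
  | cons p rest ih =>
    simp only [cpark]
    rcases List.mem_cons.1 h with h0 | h0
    · by_cases hocc : (0 : ZMod N) ∈ occ
      · exact cpark_mono _ _ (Finset.mem_insert_of_mem hocc)
      · have hne : occ ≠ Finset.univ := by
          intro hcon; exact hocc (hcon ▸ Finset.mem_univ 0)
        have hex := cslot_exists hne p
        have hslot : cslot N occ p = 0 := by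
          rw [cslot, dif_pos hex]
          have h0' : Nat.find hex = 0 := by
            rw [Nat.find_eq_zero]
            simpa [← h0] using hocc
          rw [h0']
          simpa using h0.symm
        exact cpark_mono _ _ (hslot ▸ Finset.mem_insert_self _ _)
    · exact ih _ h0

lemma cslot_shift (occ : Finset (ZMod N)) (p r : ZMod N) :
    cslot N (occ.image (· + r)) (p + r) = cslot N occ p + r := by
  have hiff : ∀ d : ℕ, (p + r + (d : ZMod N) ∉ occ.image (· + r)) ↔ (p + (d : ZMod N) ∉ occ) := by
    intro d
    rw [not_iff_not]
    constructor
    · rintro hm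
      obtain ⟨a, ha, hae⟩ := Finset.mem_image.1 hm
      have : a = p + d := by
        have : a + r = p + d + r := by rw [hae]; ring
        exact add_right_cancel this
      rwa [← this]
    · intro hm
      exact Finset.mem_image.2 ⟨p + d, hm, by ring⟩
  rw [cslot, cslot]
  by_cases h : ∃ d : ℕ, p + (d : ZMod N) ∉ occ
  · have h' : ∃ d : ℕ, p + r + (d : ZMod N) ∉ occ.image (· + r) := by
      obtain ⟨d, hd⟩ := h; exact ⟨d, (hiff d).2 hd⟩
    rw [dif_pos h, dif_pos h']
    have : Nat.find h' = Nat.find h := by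
      apply le_antisymm
      · exact Nat.find_le ((hiff _).2 (Nat.find_spec h))
      · exact Nat.find_le ((hiff _).1 (Nat.find_spec h'))
    rw [this]; ring
  · have h' : ¬ ∃ d : ℕ, p + r + (d : ZMod N) ∉ occ.image (· + r) := by
      intro ⟨d, hd⟩; exact h ⟨d, (hiff d).1 hd⟩
    rw [dif_neg h, dif_neg h']

lemma cpark_shift (l : List (ZMod N)) (occ : Finset (ZMod N)) (r : ZMod N) :
    cpark N (l.map (· + r)) (occ.image (· + r)) = (cpark N l occ).image (· + r) := by
  induction l generalizing occ with
  | nil => simp [cpark]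
  | cons p rest ih =>
    simp only [List.map_cons, cpark]
    rw [cslot_shift]
    have : insert (cslot N occ p + r) (occ.image (· + r)) = (insert (cslot N occ p) occ).image (· + r) := by
      rw [Finset.image_insert]
    rw [this, ih]

lemma val_cast_le (n : ℕ) {x : ℕ} (hx : x ≤ n) : ((x : ZMod (n+1))).val = x :=
  ZMod.val_cast_of_lt (by omega)

lemma mem_image_cast (n : ℕ) {occ : Finset ℕ} (hocc : occ ⊆ Finset.Icc 1 n) {x : ℕ} (hx : x ≤ n) :
    (x : ZMod (n+1)) ∈ occ.image (fun p : ℕ => (p : ZMod (n+1))) ↔ x ∈ occ := by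
  constructor
  · intro hm
    obtain ⟨a, ha, hae⟩ := Finset.mem_image.1 hm
    have han : a ≤ n := (Finset.mem_Icc.1 (hocc ha)).2
    have : a = x := by
      have := congrArg ZMod.val hae
      rwa [val_cast_le n han, val_cast_le n hx] at this
    rwa [← this]
  · intro hm
    exact Finset.mem_image.2 ⟨x, hm, rfl⟩

lemma zero_not_mem_image_cast (n : ℕ) {occ : Finset ℕ} (hocc : occ ⊆ Finset.Icc 1 n) :
    (0 : ZMod (n+1)) ∉ occ.image (fun p : ℕ => (p : ZMod (n+1))) := by
  intro hm
  obtain ⟨a, ha, hae⟩ := Finset.mem_image.1 hm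
  obtain ⟨h1, h2⟩ := Finset.mem_Icc.1 (hocc ha)
  have := congrArg ZMod.val hae
  rw [val_cast_le n h2, ZMod.val_zero] at this
  omega

lemma cpark_zero_iff (n : ℕ) (occ : Finset ℕ) (l : List ℕ)
    (hocc : occ ⊆ Finset.Icc 1 n) (hl : ∀ p ∈ l, 1 ≤ p ∧ p ≤ n) :
    ((0 : ZMod (n+1)) ∉ cpark (n+1) (l.map (fun p : ℕ => (p : ZMod (n+1))))
      (occ.image (fun p : ℕ => (p : ZMod (n+1))))) ↔ (park n occ l).isSome := by
  induction l generalizing occ with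
  | nil =>
    simp only [List.map_nil, cpark, park, Option.isSome_some, iff_true]
    exact zero_not_mem_image_cast n hocc
  | cons p rest ih =>
    obtain ⟨hp1, hpn⟩ := hl p List.mem_cons_self
    have hrest : ∀ q ∈ rest, 1 ≤ q ∧ q ≤ n := fun q hq => hl q (List.mem_cons_of_mem p hq)
    simp only [List.map_cons, cpark]
    by_cases ha : ((Finset.Icc p n) \ occ).Nonempty
    · set b := ((Finset.Icc p n) \ occ).min' ha with hbdef
      have hbmem : b ∈ (Finset.Icc p n) \ occ := Finset.min'_mem _ ha
      have hbIcc : b ∈ Finset.Icc p n := (Finset.mem_sdiff.1 hbmem).1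
      have hbocc : b ∉ occ := (Finset.mem_sdiff.1 hbmem).2
      obtain ⟨hpb, hbn⟩ := Finset.mem_Icc.1 hbIcc
      have hbmin : ∀ x, p ≤ x → x ≤ n → x ∉ occ → b ≤ x := by
        intro x h1 h2 h3
        exact Finset.min'_le _ x (Finset.mem_sdiff.2 ⟨Finset.mem_Icc.2 ⟨h1, h2⟩, h3⟩)
      have hcastb : ((p : ZMod (n+1)) + ((b - p : ℕ) : ZMod (n+1))) = (b : ZMod (n+1)) := by
        rw [← Nat.cast_add]
        congr 1
        omega
      have hex : ∃ d : ℕ, (p : ZMod (n+1)) + (d : ZMod (n+1))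
          ∉ occ.image (fun q : ℕ => (q : ZMod (n+1))) := by
        refine ⟨b - p, ?_⟩
        rw [hcastb]
        rw [mem_image_cast n hocc hbn]
        exact hbocc
      have hslot : cslot (n+1) (occ.image (fun q : ℕ => (q : ZMod (n+1)))) (p : ZMod (n+1))
          = (b : ZMod (n+1)) := by
        rw [cslot, dif_pos hex]
        have hfind : Nat.find hex = b - p := by
          have hle : Nat.find hex ≤ b - p := Nat.find_le (by
            rw [hcastb, mem_image_cast n hocc hbn]; exact hbocc)
          rcases Nat.lt_or_ge (Nat.find hex) (b - p) with hlt | hge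
          · exfalso
            have hspec := Nat.find_spec hex
            set e := Nat.find hex
            have hpe : p + e ≤ n := by omega
            have hmem : p + e ∈ occ := by
              by_contra hcon
              have := hbmin (p + e) (by omega) hpe hcon
              omega
            apply hspec
            rw [← Nat.cast_add, mem_image_cast n hocc hpe]
            exact hmem
          · omega
        rw [hfind, hcastb]
      rw [hslot]
      have himg : insert ((b : ZMod (n+1))) (occ.image (fun q : ℕ => (q : ZMod (n+1))))
          = (insert b occ).image (fun q : ℕ => (q : ZMod (n+1))) := by
        rw [Finset.image_insert]
      rw [himg]
      have hsub : insert b occ ⊆ Finset.Icc 1 n :=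
        Finset.insert_subset (Finset.mem_Icc.2 ⟨le_trans hp1 hpb, hbn⟩) hocc
      rw [ih (insert b occ) hsub hrest]
      have hpark : park n occ (p :: rest) = park n (insert b occ) rest := by
        simp only [park]
        rw [dif_pos ha]
      rw [hpark]
    · -- all of Icc p n occupied: circle car wraps to 0
      have hIcc : Finset.Icc p n ⊆ occ := by
        rwa [Finset.not_nonempty_iff_eq_empty, Finset.sdiff_eq_empty_iff_subset] at ha
      have hpark : park n occ (p :: rest) = none := by
        simp only [park]
        rw [dif_neg ha]
      rw [hpark]
      simp only [Option.isSome_none, Bool.false_eq_true, iff_false, not_not]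
      have hex : ∃ d : ℕ, (p : ZMod (n+1)) + (d : ZMod (n+1))
          ∉ occ.image (fun q : ℕ => (q : ZMod (n+1))) := by
        refine ⟨n + 1 - p, ?_⟩
        rw [← Nat.cast_add]
        have : p + (n + 1 - p) = n + 1 := by omega
        rw [this]
        rw [ZMod.natCast_self]
        exact zero_not_mem_image_cast n hocc
      have hslot : cslot (n+1) (occ.image (fun q : ℕ => (q : ZMod (n+1)))) (p : ZMod (n+1))
          = 0 := by
        rw [cslot, dif_pos hex]
        have hfind : Nat.find hex = n + 1 - p := by
          have hle : Nat.find hex ≤ n + 1 - p := Nat.find_le (by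
            rw [← Nat.cast_add]
            have : p + (n + 1 - p) = n + 1 := by omega
            rw [this, ZMod.natCast_self]
            exact zero_not_mem_image_cast n hocc)
          rcases Nat.lt_or_ge (Nat.find hex) (n + 1 - p) with hlt | hge
          · exfalso
            have hspec := Nat.find_spec hex
            set e := Nat.find hex
            have hpe : p + e ≤ n := by omega
            apply hspec
            rw [← Nat.cast_add, mem_image_cast n hocc hpe]
            exact hIcc (Finset.mem_Icc.2 ⟨by omega, hpe⟩)
          · omega
        rw [hfind, ← Nat.cast_add]
        have : p + (n + 1 - p) = n + 1 := by omega
        rw [this, ZMod.natCast_self]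
      rw [hslot]
      exact cpark_mono _ _ (Finset.mem_insert_self _ _)


section count

variable {N m : ℕ} [NeZero N]

open scoped Classical

noncomputable def Gset (N m : ℕ) [NeZero N] : Finset (Fin m → ZMod N) :=
  Finset.univ.filter (fun f => (0 : ZMod N) ∉ cpark N (List.ofFn f) ∅)

lemma shift_good_iff (f : Fin m → ZMod N) (t : ZMod N) :
    (t ∉ cpark N (List.ofFn (fun i => f i + t)) ∅) ↔ (0 : ZMod N) ∉ cpark N (List.ofFn f) ∅ := by
  have h1 : List.ofFn (fun i => f i + t) = (List.ofFn f).map (· + t) := by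
    rw [List.map_ofFn]
    rfl
  have h2 : (∅ : Finset (ZMod N)) = (∅ : Finset (ZMod N)).image (· + t) := by
    simp
  rw [h1, h2, cpark_shift]
  rw [not_iff_not]
  constructor
  · intro hm
    obtain ⟨a, ha, hae⟩ := Finset.mem_image.1 hm
    have : a = 0 := by
      have : a + t = 0 + t := by rw [hae, zero_add]
      exact add_right_cancel this
    rwa [← this]
  · intro hm
    exact Finset.mem_image.2 ⟨0, hm, by rw [zero_add]⟩

lemma slice_card (t : ZMod N) :
    (Finset.univ.filter (fun f : Fin m → ZMod N => t ∉ cpark N (List.ofFn f) ∅)).card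
      = (Gset N m).card := by
  apply Finset.card_bij' (fun g _ => fun i => g i - t) (fun f _ => fun i => f i + t)
  · intro g hg
    simp only [Gset, Finset.mem_filter, Finset.mem_univ, true_and] at hg ⊢
    rw [← shift_good_iff (fun i => g i - t) t]
    simpa using hg
  · intro f hf
    simp only [Gset, Finset.mem_filter, Finset.mem_univ, true_and] at hf ⊢
    rw [shift_good_iff f t]
    exact hf
  · intro g _; funext i; simp
  · intro f _; funext i; simp

lemma pollak_count (hm : m ≤ N) :
    N * (Gset N m).card = (N - m) * N ^ m := by
  have key : ∀ f : Fin m → ZMod N,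
      (Finset.univ \ cpark N (List.ofFn f) ∅).card = N - m := by
    intro f
    rw [Finset.card_sdiff_of_subset (Finset.subset_univ _)]
    rw [cpark_card _ _ (by simpa using hm)]
    simp [ZMod.card]
  have e1 : ∑ f : Fin m → ZMod N, (Finset.univ \ cpark N (List.ofFn f) ∅).card
      = (N - m) * N ^ m := by
    rw [Finset.sum_congr rfl (fun f _ => key f)]
    simp [Finset.card_univ, mul_comm, ZMod.card]
  have e2 : ∑ f : Fin m → ZMod N, (Finset.univ \ cpark N (List.ofFn f) ∅).card
      = N * (Gset N m).card := by
    have sdiff_eq : ∀ f : Fin m → ZMod N, Finset.univ \ cpark N (List.ofFn f) ∅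
        = Finset.univ.filter (fun t => t ∉ cpark N (List.ofFn f) ∅) := by
      intro f
      ext t
      simp [Finset.mem_sdiff]
    calc ∑ f : Fin m → ZMod N, (Finset.univ \ cpark N (List.ofFn f) ∅).card
        = ∑ f : Fin m → ZMod N, ∑ t : ZMod N,
            (if t ∉ cpark N (List.ofFn f) ∅ then 1 else 0) := by
          refine Finset.sum_congr rfl (fun f _ => ?_)
          rw [sdiff_eq f, Finset.card_filter]
      _ = ∑ t : ZMod N, ∑ f : Fin m → ZMod N,
            (if t ∉ cpark N (List.ofFn f) ∅ then 1 else 0) := Finset.sum_comm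
      _ = ∑ t : ZMod N,
            (Finset.univ.filter (fun f : Fin m → ZMod N => t ∉ cpark N (List.ofFn f) ∅)).card := by
          refine Finset.sum_congr rfl (fun t _ => ?_)
          rw [Finset.card_filter]
      _ = ∑ _t : ZMod N, (Gset N m).card := Finset.sum_congr rfl (fun t _ => slice_card t)
      _ = N * (Gset N m).card := by simp [Finset.card_univ, ZMod.card, mul_comm]
  omega

lemma Gset_card (hm1 : 1 ≤ m) (hm : m ≤ N) :
    (Gset N m).card = (N - m) * N ^ (m - 1) := by
  have h := pollak_count (N := N) (m := m) hm
  have hN : N ≠ 0 := NeZero.ne N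
  have hpow : N ^ m = N * N ^ (m - 1) := by
    conv_lhs => rw [show m = 1 + (m - 1) by omega]
    rw [pow_add, pow_one]
  rw [hpow] at h
  have : N * (Gset N m).card = N * ((N - m) * N ^ (m - 1)) := by ring_nf; ring_nf at h; omega
  exact Nat.eq_of_mul_eq_mul_left (by omega) this
end count

/-- The number of parking completions of the initial block `(1,…,k)` in `[n]`, for
`1 ≤ k ≤ n-1`, is `(k+1)(n+1)^(n-k-1)`. -/
theorem card_parkingCompletions_initialBlock (n k : ℕ) (hn : 1 ≤ n) (hk1 : 1 ≤ k)
    (hk : k ≤ n - 1) :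
    (PC n (fun j : Fin k => (j : ℕ) + 1)).card = (k + 1) * (n + 1) ^ (n - k - 1) := by
  classical
  have hkn : k < n := by omega
  have hm1 : 1 ≤ n - k := by omega
  -- the occupied block is Icc 1 k
  have himg : Finset.univ.image (fun j : Fin k => (j : ℕ) + 1) = Finset.Icc 1 k := by
    ext x
    simp only [Finset.mem_image, Finset.mem_univ, true_and, Finset.mem_Icc]
    constructor
    · rintro ⟨j, rfl⟩
      have := j.isLt
      omega
    · rintro ⟨h1, h2⟩
      exact ⟨⟨x - 1, by omega⟩, by simp; omega⟩
  -- the key pointwise equivalence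
  have hmain : ∀ π : Fin (n - k) → Fin n,
      (park n (Finset.Icc 1 k) (List.ofFn (fun i => (π i : ℕ) + 1))).isSome
        ↔ (0 : ZMod (n+1)) ∉ cpark (n+1)
            (List.ofFn (fun i => (((π i : ℕ) + 1 : ℕ) : ZMod (n+1)))) ∅ := by
    intro π
    set l := List.ofFn (fun i => (π i : ℕ) + 1) with hl
    have hlmem : ∀ p ∈ l, 1 ≤ p ∧ p ≤ n := by
      intro p hp
      rw [hl, List.mem_ofFn] at hp
      obtain ⟨i, hi⟩ := hp
      have hi' : (π i : ℕ) + 1 = p := hi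
      have := (π i).isLt
      omega
    have hIccsub : Finset.Icc 1 k ⊆ Finset.Icc 1 n :=
      Finset.Icc_subset_Icc le_rfl (by omega)
    have hfiltIcc : ∀ s : ℕ, ((Finset.Icc 1 k).filter (fun x => s < x)).card = k - s := by
      intro s
      have : (Finset.Icc 1 k).filter (fun x => s < x) = Finset.Ioc s k := by
        ext x
        simp only [Finset.mem_filter, Finset.mem_Icc, Finset.mem_Ioc]
        omega
      rw [this, Nat.card_Ioc]
    have hlen : l.length = n - k := by rw [hl, List.length_ofFn]
    rw [park_isSome_iff n (Finset.Icc 1 k) l hIccsub hlmem]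
    have hcond : (∀ s ≤ n, l.countP (fun p => decide (s < p))
          + ((Finset.Icc 1 k).filter (fun x => s < x)).card ≤ n - s)
        ↔ (∀ s ≤ n, l.countP (fun p => decide (s < p))
          + ((∅ : Finset ℕ).filter (fun x => s < x)).card ≤ n - s) := by
      constructor
      · intro h s hs
        have := h s hs
        simp only [Finset.filter_empty, Finset.card_empty]
        omega
      · intro h s hs
        rw [hfiltIcc s]
        by_cases hsk : k ≤ s
        · have := h s hs
          simp only [Finset.filter_empty, Finset.card_empty] at this
          omega
        · have hcnt : l.countP (fun p => decide (s < p)) ≤ l.length := List.countP_le_length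
          omega
    rw [hcond, ← park_isSome_iff n ∅ l (by simp) hlmem]
    rw [← cpark_zero_iff n ∅ l (by simp) hlmem]
    rw [Finset.image_empty]
    rw [hl, List.map_ofFn]
    rfl
  -- rewrite PC as a circular condition and biject with Gset
  have hPC : (PC n (fun j : Fin k => (j : ℕ) + 1)).card = (Gset (n+1) (n-k)).card := by
    refine Finset.card_bij'
      (fun π _ => fun i => (((π i : ℕ) + 1 : ℕ) : ZMod (n+1)))
      (fun f _ => fun i => (⟨(f i).val - 1, by have := (f i).val_lt; omega⟩ : Fin n))
      ?hi ?hj ?left ?right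
    case hi =>
      intro π hπ
      rw [PC] at hπ
      rw [Finset.mem_filter] at hπ
      rw [himg] at hπ
      have := (hmain π).1 hπ.2
      simp only [Gset, Finset.mem_filter]
      exact ⟨Finset.mem_univ _, this⟩
    case hj =>
      intro f hf
      simp only [Gset, Finset.mem_filter] at hf
      have hf2 := hf.2
      have hval : ∀ i, 1 ≤ (f i).val := by
        intro i
        by_contra hcon
        have h0 : f i = 0 := by
          have : (f i).val = 0 := by omega
          exact (ZMod.val_eq_zero _).1 this
        exact hf2 (mem_zero_cpark _ _ (by rw [List.mem_ofFn]; exact ⟨i, h0⟩))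
      rw [PC, Finset.mem_filter, himg]
      refine ⟨Finset.mem_univ _, ?_⟩
      rw [hmain]
      have heq : (fun i => ((((⟨(f i).val - 1, by have := (f i).val_lt; omega⟩ : Fin n) : ℕ)
          + 1 : ℕ) : ZMod (n+1))) = f := by
        funext i
        have h1 : ((⟨(f i).val - 1, by have := (f i).val_lt; omega⟩ : Fin n) : ℕ) + 1
            = (f i).val := by
          simp only []
          have := hval i
          omega
        rw [h1, ZMod.natCast_val, ZMod.cast_id]
      rw [heq]
      exact hf2
    case left =>
      intro π _
      funext i
      apply Fin.ext
      simp only []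
      have hlt : (π i : ℕ) + 1 < n + 1 := by have := (π i).isLt; omega
      rw [ZMod.val_cast_of_lt hlt]
      omega
    case right =>
      intro f hf
      simp only [Gset, Finset.mem_filter] at hf
      have hval : ∀ i, 1 ≤ (f i).val := by
        intro i
        by_contra hcon
        have h0 : f i = 0 := by
          have : (f i).val = 0 := by omega
          exact (ZMod.val_eq_zero _).1 this
        exact hf.2 (mem_zero_cpark _ _ (by rw [List.mem_ofFn]; exact ⟨i, h0⟩))
      funext i
      simp only []
      have h1 : ((⟨(f i).val - 1, by have := (f i).val_lt; omega⟩ : Fin n) : ℕ) + 1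
          = (f i).val := by
        simp only []
        have := hval i
        omega
      rw [h1, ZMod.natCast_val, ZMod.cast_id]
  rw [hPC, Gset_card hm1 (by omega)]
  have h1 : n + 1 - (n - k) = k + 1 := by omega
  rw [h1]
end

section
/- For every n ≥ 1, every 1 ≤ k ≤ n, and every choice of indices 1 ≤ i_1 < i_2 < … < i_k ≤ n, the number of parking completions satisfies |PC_n((i_1,…,i_k))| ≤ |PC_n((1,…,k))|. -/
open Finset

/-- Domination is preserved by a single parking step. -/
lemma dom_step (n p : ℕ) (occ occ' : Finset ℕ)
    (hdom : ∀ q, ((Finset.Icc q n) \ occ).card ≤ ((Finset.Icc q n) \ occ').card)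
    (h : ((Finset.Icc p n) \ occ).Nonempty) (h' : ((Finset.Icc p n) \ occ').Nonempty) :
    ∀ q, ((Finset.Icc q n) \ insert (((Finset.Icc p n) \ occ).min' h) occ).card ≤
         ((Finset.Icc q n) \ insert (((Finset.Icc p n) \ occ').min' h') occ').card := by
  intro q
  set m := ((Finset.Icc p n) \ occ).min' h with hm
  set m' := ((Finset.Icc p n) \ occ').min' h' with hm'
  have hmmem : m ∈ (Finset.Icc p n) \ occ := Finset.min'_mem _ _
  have hm'mem : m' ∈ (Finset.Icc p n) \ occ' := Finset.min'_mem _ _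
  simp only [Finset.mem_sdiff, Finset.mem_Icc] at hmmem hm'mem
  rw [Finset.sdiff_insert, Finset.sdiff_insert]
  by_cases hq : q ≤ m
  · have hmem : m ∈ (Finset.Icc q n) \ occ := by
      simp [Finset.mem_sdiff, Finset.mem_Icc, hq, hmmem.1.2, hmmem.2]
    rw [Finset.card_erase_of_mem hmem]
    by_cases hq' : q ≤ m'
    · have hmem' : m' ∈ (Finset.Icc q n) \ occ' := by
        simp [Finset.mem_sdiff, Finset.mem_Icc, hq', hm'mem.1.2, hm'mem.2]
      rw [Finset.card_erase_of_mem hmem']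
      exact Nat.sub_le_sub_right (hdom q) 1
    · have : m' ∉ (Finset.Icc q n) \ occ' := by
        simp only [Finset.mem_sdiff, Finset.mem_Icc]; omega
      rw [Finset.erase_eq_of_notMem this]
      exact le_trans (Nat.sub_le _ _) (hdom q)
  · have hnm : m ∉ (Finset.Icc q n) \ occ := by
      simp only [Finset.mem_sdiff, Finset.mem_Icc]; omega
    rw [Finset.erase_eq_of_notMem hnm]
    by_cases hq' : q ≤ m'
    · -- hard case: show strict inequality at q
      have hmem' : m' ∈ (Finset.Icc q n) \ occ' := by
        simp [Finset.mem_sdiff, Finset.mem_Icc, hq', hm'mem.1.2, hm'mem.2]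
      rw [Finset.card_erase_of_mem hmem']
      have hpq : p ≤ m := hmmem.1.1
      have hqn : q ≤ n := le_trans hq' hm'mem.1.2
      -- split Icc p n
      have hunion : Finset.Icc p (q-1) ∪ Finset.Icc q n = Finset.Icc p n := by
        ext x; simp only [Finset.mem_union, Finset.mem_Icc]; omega
      have hdisj : Disjoint (Finset.Icc p (q-1)) (Finset.Icc q n) := by
        simp only [Finset.disjoint_left, Finset.mem_Icc]; omega
      have split : ∀ s : Finset ℕ, ((Finset.Icc p n) \ s).card =
          ((Finset.Icc p (q-1)) \ s).card + ((Finset.Icc q n) \ s).card := by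
        intro s
        rw [← hunion, Finset.union_sdiff_distrib,
          Finset.card_union_of_disjoint (hdisj.mono Finset.sdiff_subset Finset.sdiff_subset)]
      have hempty : (Finset.Icc p (q-1)) \ occ' = ∅ := by
        rw [Finset.eq_empty_iff_forall_notMem]
        intro x hx
        have hx2 : x ∈ (Finset.Icc p n) \ occ' := by
          simp only [Finset.mem_sdiff, Finset.mem_Icc] at hx ⊢
          exact ⟨⟨hx.1.1, by omega⟩, hx.2⟩
        have := Finset.min'_le _ x hx2
        rw [← hm'] at this
        simp only [Finset.mem_sdiff, Finset.mem_Icc] at hx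
        omega
      have hmem2 : m ∈ (Finset.Icc p (q-1)) \ occ := by
        simp only [Finset.mem_sdiff, Finset.mem_Icc]
        exact ⟨⟨hpq, by omega⟩, hmmem.2⟩
      have h1 : 1 ≤ ((Finset.Icc p (q-1)) \ occ).card := Finset.card_pos.2 ⟨m, hmem2⟩
      have h2 := hdom p
      have e1 := split occ
      have e2 := split occ'
      rw [hempty] at e2
      simp only [Finset.card_empty] at e2
      omega
    · have : m' ∉ (Finset.Icc q n) \ occ' := by
        simp only [Finset.mem_sdiff, Finset.mem_Icc]; omega
      rw [Finset.erase_eq_of_notMem this]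
      exact hdom q

/-- Monotonicity of the parking process with respect to domination. -/
lemma park_mono (n : ℕ) : ∀ (l : List ℕ) (occ occ' : Finset ℕ),
    (∀ q, ((Finset.Icc q n) \ occ).card ≤ ((Finset.Icc q n) \ occ').card) →
    (park n occ l).isSome → (park n occ' l).isSome := by
  intro l
  induction l with
  | nil => intro occ occ' _ _; simp [park]
  | cons p rest ih =>
    intro occ occ' hdom hsome
    rw [park] at hsome ⊢
    by_cases h : ((Finset.Icc p n) \ occ).Nonempty
    · have h' : ((Finset.Icc p n) \ occ').Nonempty := by
        rw [← Finset.card_pos] at h ⊢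
        exact lt_of_lt_of_le h (hdom p)
      simp only [h, h', dif_pos] at hsome ⊢
      exact ih _ _ (dom_step n p occ occ' hdom h h') hsome
    · simp only [h, dif_neg, not_false_iff] at hsome
      exact absurd hsome (by simp)

/-- For any occupied spots `1 ≤ i_1 < ⋯ < i_k ≤ n`, the number of parking completions is at
most that of the initial block `(1,…,k)`. -/
theorem card_parkingCompletions_le_initialBlock (n k : ℕ) (hn : 1 ≤ n) (hk1 : 1 ≤ k)
    (hkn : k ≤ n) (v : Fin k → ℕ) (hv : StrictMono v) (hv1 : ∀ i, 1 ≤ v i)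
    (hvn : ∀ i, v i ≤ n) :
    (PC n v).card ≤ (PC n (fun j : Fin k => (j : ℕ) + 1)).card := by
  -- the lower bound v i ≥ i + 1
  have key : ∀ m : ℕ, ∀ h : m < k, m + 1 ≤ v ⟨m, h⟩ := by
    intro m
    induction m with
    | zero => intro h; exact hv1 _
    | succ m ihm =>
      intro h
      have h1 : m < k := Nat.lt_of_succ_lt h
      have hlt : v ⟨m, h1⟩ < v ⟨m+1, h⟩ := hv (by simp [Fin.lt_def])
      have := ihm h1
      omega
  have hlb : ∀ i : Fin k, (i : ℕ) + 1 ≤ v i := fun i => by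
    simpa using key i i.isLt
  -- initial domination
  have hdom : ∀ q, ((Finset.Icc q n) \ (Finset.univ.image v)).card ≤
      ((Finset.Icc q n) \ (Finset.univ.image (fun j : Fin k => (j : ℕ) + 1))).card := by
    intro q
    have h1 := Finset.card_inter_add_card_sdiff (Finset.Icc q n) (Finset.univ.image v)
    have h2 := Finset.card_inter_add_card_sdiff (Finset.Icc q n)
      (Finset.univ.image (fun j : Fin k => (j : ℕ) + 1))
    have hcard : (Finset.Icc q n).card = (Finset.Icc q n).card := rfl
    -- suffices intersection inequality
    have hint : ((Finset.Icc q n) ∩ (Finset.univ.image (fun j : Fin k => (j : ℕ) + 1))).card ≤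
        ((Finset.Icc q n) ∩ (Finset.univ.image v)).card := by
      apply Finset.card_le_card_of_injOn
        (fun j => if h : j - 1 < k then v ⟨j - 1, h⟩ else 0)
      · intro a ha
        simp only [Finset.mem_coe, Finset.mem_inter, Finset.mem_Icc, Finset.mem_image, Finset.mem_univ,
          true_and] at ha
        obtain ⟨⟨hqa, han⟩, j, hj⟩ := ha
        have hak : 1 ≤ a ∧ a ≤ k := by
          constructor <;> [omega; (have := j.isLt; omega)]
        have hlt : a - 1 < k := by omega
        simp only [hlt, dif_pos]
        simp only [Finset.mem_coe, Finset.mem_inter, Finset.mem_Icc, Finset.mem_image, Finset.mem_univ, true_and]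
        refine ⟨⟨?_, hvn _⟩, ⟨_, rfl⟩⟩
        have := hlb ⟨a - 1, hlt⟩
        simp at this
        omega
      · intro a ha b hb hab
        simp only [Finset.coe_inter, Set.mem_inter_iff, Finset.mem_coe, Finset.mem_Icc,
          Finset.mem_image, Finset.mem_univ, true_and, Finset.coe_Icc, Set.mem_Icc] at ha hb
        obtain ⟨⟨hqa, han⟩, ja, hja⟩ := ha
        obtain ⟨⟨hqb, hbn⟩, jb, hjb⟩ := hb
        have hak : 1 ≤ a ∧ a ≤ k := ⟨by omega, by have := ja.isLt; omega⟩
        have hbk : 1 ≤ b ∧ b ≤ k := ⟨by omega, by have := jb.isLt; omega⟩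
        have hlta : a - 1 < k := by omega
        have hltb : b - 1 < k := by omega
        simp only [hlta, hltb, dif_pos] at hab
        have := hv.injective hab
        have := Fin.mk.injEq (a-1) hlta (b-1) hltb ▸ this
        omega
    omega
  apply Finset.card_le_card
  intro π hπ
  simp only [PC, Finset.mem_filter, Finset.mem_univ, true_and] at hπ ⊢
  exact park_mono n _ _ _ hdom hπ
end
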